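/- arXiv:1307.5930 — 8 statements merged into one kernel-verified Lean document; each statement's English description precedes it below -/
import Mathlib

section
/- Assume hypotheses (H): U is a 3×3 real positive-definite symmetric matrix, ê ∈ ℝ³ is a unit vector, Û = (−I + 2 ê⊗ê) U (−I + 2 ê⊗ê), and there exist R̂ ∈ SO(3) and nonzero vectors a, n ∈ ℝ³ with R̂ Û = U + a ⊗ n. Assume further that the cofactor conditions (CC1), (CC2), (CC3) hold for (U, a, n). For f ∈ [0,1] set C(f) = (U + f n⊗a)(U + f a⊗n), a positive-definite symmetric matrix. Then for every f ∈ [0,1] with f ≠ 1/2: 1 is an eigenvalue of C(f), the smallest eigenvalue of C(f) is strictly less than 1, and the largest eigenvalue of C(f) is strictly greater than 1. In particular (taking f = 0), the eigenvalues λ₁ ≤ λ₂ ≤ λ₃ of U satisfy λ₁ < 1 < λ₃, so that λ₂ = 1 is a simple eigenvalue of U. -/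
open Matrix Polynomial

/-- The 180° rotation matrix `-I + 2 ê⊗ê` for a unit vector `ê`. -/
noncomputable def reflMat (e : Fin 3 → ℝ) : Matrix (Fin 3) (Fin 3) ℝ :=
  -1 + (2 : ℝ) • Matrix.vecMulVec e e

/-- Membership in SO(3): orthogonal with determinant 1. -/
def SO3 (R : Matrix (Fin 3) (Fin 3) ℝ) : Prop := R * Rᵀ = 1 ∧ R.det = 1

/-- The cofactor matrix: `(cof M)ᵢⱼ = (−1)^{i+j} det(M with row i and column j deleted)`. -/
noncomputable def cof (M : Matrix (Fin 3) (Fin 3) ℝ) : Matrix (Fin 3) (Fin 3) ℝ :=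
  Matrix.of fun i j => (-1 : ℝ) ^ ((i : ℕ) + (j : ℕ)) *
    (M.submatrix i.succAbove j.succAbove).det

/-- `μ` is the middle eigenvalue of `U`: its eigenvalues, with multiplicity,
are `l1 ≤ μ ≤ l3`. -/
def IsMiddleEigenvalue (U : Matrix (Fin 3) (Fin 3) ℝ) (μ : ℝ) : Prop :=
  ∃ l1 l3 : ℝ, l1 ≤ μ ∧ μ ≤ l3 ∧
    U.charpoly = (X - C l1) * (X - C μ) * (X - C l3)

/-- (CC1): the middle eigenvalue of `U` is 1. -/
def CC1 (U : Matrix (Fin 3) (Fin 3) ℝ) : Prop := IsMiddleEigenvalue U 1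

/-- (CC2): `a · U cof(U² − I) n = 0`. -/
noncomputable def CC2 (U : Matrix (Fin 3) (Fin 3) ℝ) (a n : Fin 3 → ℝ) : Prop :=
  a ⬝ᵥ (U * cof (U * U - 1)).mulVec n = 0

/-- (CC3): `tr U² − det U² − |a|²|n|²/4 − 2 ≥ 0`. -/
def CC3 (U : Matrix (Fin 3) (Fin 3) ℝ) (a n : Fin 3 → ℝ) : Prop :=
  (U * U).trace - (U * U).det - (a ⬝ᵥ a) * (n ⬝ᵥ n) / 4 - 2 ≥ 0

/- ######### auxiliary lemmas ######### -/

lemma cof_eq' (M : Matrix (Fin 3) (Fin 3) ℝ) : cof M =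
    !![M 1 1 * M 2 2 - M 1 2 * M 2 1, -(M 1 0 * M 2 2 - M 1 2 * M 2 0), M 1 0 * M 2 1 - M 1 1 * M 2 0;
       -(M 0 1 * M 2 2 - M 0 2 * M 2 1), M 0 0 * M 2 2 - M 0 2 * M 2 0, -(M 0 0 * M 2 1 - M 0 1 * M 2 0);
       M 0 1 * M 1 2 - M 0 2 * M 1 1, -(M 0 0 * M 1 2 - M 0 2 * M 1 0), M 0 0 * M 1 1 - M 0 1 * M 1 0] := by
  ext i j
  fin_cases i <;> fin_cases j <;>
    simp [cof, Matrix.det_fin_two, (by decide : (2:Fin 3).succAbove 1 = 1)] <;> ring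

noncomputable def sig2 (M : Matrix (Fin 3) (Fin 3) ℝ) : ℝ :=
  M 0 0 * M 1 1 - M 0 1 * M 1 0 + (M 0 0 * M 2 2 - M 0 2 * M 2 0) + (M 1 1 * M 2 2 - M 1 2 * M 2 1)

lemma charpoly_fin3 (M : Matrix (Fin 3) (Fin 3) ℝ) :
    M.charpoly = X ^ 3 - C M.trace * X ^ 2 + C (sig2 M) * X - C M.det := by
  rw [Matrix.charpoly, Matrix.det_fin_three]
  simp only [charmatrix_apply_eq, charmatrix_apply_ne _ _ _ (by decide : (0:Fin 3) ≠ 1),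
    charmatrix_apply_ne _ _ _ (by decide : (0:Fin 3) ≠ 2),
    charmatrix_apply_ne _ _ _ (by decide : (1:Fin 3) ≠ 0),
    charmatrix_apply_ne _ _ _ (by decide : (1:Fin 3) ≠ 2),
    charmatrix_apply_ne _ _ _ (by decide : (2:Fin 3) ≠ 0),
    charmatrix_apply_ne _ _ _ (by decide : (2:Fin 3) ≠ 1),
    Matrix.trace, Matrix.diag, Fin.sum_univ_three, Matrix.det_fin_three, sig2,
    C_add, C_sub, C_mul]
  ring

lemma eval_charpoly3 (M : Matrix (Fin 3) (Fin 3) ℝ) (x : ℝ) :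
    M.charpoly.eval x = (x • (1 : Matrix (Fin 3) (Fin 3) ℝ) - M).det := by
  rw [charpoly_fin3]
  simp [Matrix.det_fin_three, Matrix.sub_apply, Matrix.smul_apply, Matrix.one_apply_eq,
    Matrix.one_apply_ne, Matrix.trace, Matrix.diag, Fin.sum_univ_three, sig2, smul_eq_mul,
    Fin.reduceEq]
  ring

lemma cubic_eq' (e1 e2 e3 p q r : ℝ) (h1 : e1 = p + q + r) (h2 : e2 = p * q + p * r + q * r)
    (h3 : e3 = p * q * r) :
    (X : ℝ[X]) ^ 3 - C e1 * X ^ 2 + C e2 * X - C e3 = (X - C p) * (X - C q) * (X - C r) := by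
  subst h1 h2 h3
  simp only [C_add, C_mul]
  ring

lemma det_sub_one' (M : Matrix (Fin 3) (Fin 3) ℝ) :
    (M - 1).det = -(1 - M.trace + sig2 M - M.det) := by
  simp only [Matrix.det_fin_three, Matrix.sub_apply, Matrix.one_apply_eq,
    Matrix.one_apply_ne (by decide : (0:Fin 3) ≠ 1), Matrix.one_apply_ne (by decide : (0:Fin 3) ≠ 2),
    Matrix.one_apply_ne (by decide : (1:Fin 3) ≠ 0), Matrix.one_apply_ne (by decide : (1:Fin 3) ≠ 2),
    Matrix.one_apply_ne (by decide : (2:Fin 3) ≠ 0), Matrix.one_apply_ne (by decide : (2:Fin 3) ≠ 1),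
    Matrix.trace, Matrix.diag, Fin.sum_univ_three, sig2]
  ring

lemma eig_split (M : Matrix (Fin 3) (Fin 3) ℝ) (h1 : (M - 1).det = 0)
    (h2 : M.trace - M.det - 2 > 0) :
    ∃ p q : ℝ, p < 1 ∧ 1 < q ∧ M.charpoly = (X - C p) * (X - C 1) * (X - C q) := by
  set s := M.trace - 1 with hs
  set d := M.det with hd
  have hsd : s - d - 1 > 0 := by simp only [hs, hd] at *; linarith
  have hdisc : 0 < s ^ 2 - 4 * d := by nlinarith [sq_nonneg (s - 2)]
  set r := Real.sqrt (s ^ 2 - 4 * d) with hrdef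
  have hr : r ^ 2 = s ^ 2 - 4 * d := Real.sq_sqrt hdisc.le
  have hrpos : 0 < r := Real.sqrt_pos.mpr hdisc
  have hsig : sig2 M = s + d := by
    have := det_sub_one' M
    rw [h1] at this
    simp only [hs, hd] at *; linarith
  refine ⟨(s - r) / 2, (s + r) / 2, ?_, ?_, ?_⟩
  · nlinarith [hr, hrpos, hsd]
  · nlinarith [hr, hrpos, hsd]
  · rw [charpoly_fin3, hsig]
    apply cubic_eq' <;> nlinarith [hr]

lemma master (U : Matrix (Fin 3) (Fin 3) ℝ) (a n : Fin 3 → ℝ)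
    (h10 : U 1 0 = U 0 1) (h20 : U 2 0 = U 0 2) (h21 : U 2 1 = U 1 2) (f : ℝ) :
    ((U + f • vecMulVec n a) * (U + f • vecMulVec a n) - 1).det =
      (1 - f ^ 2) * (U * U - 1).det
      + 2 * f * (1 - f) * (a ⬝ᵥ (U * cof (U * U - 1)).mulVec n)
      + f ^ 2 * ((U + vecMulVec n a) * (U + vecMulVec a n) - 1).det := by
  simp only [cof_eq', Matrix.det_fin_three, Matrix.sub_apply, Matrix.add_apply, Matrix.mul_apply,
    Matrix.smul_apply, Matrix.vecMulVec_apply, Matrix.one_apply_eq,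
    Matrix.one_apply_ne (by decide : (0:Fin 3) ≠ 1), Matrix.one_apply_ne (by decide : (0:Fin 3) ≠ 2),
    Matrix.one_apply_ne (by decide : (1:Fin 3) ≠ 0), Matrix.one_apply_ne (by decide : (1:Fin 3) ≠ 2),
    Matrix.one_apply_ne (by decide : (2:Fin 3) ≠ 0), Matrix.one_apply_ne (by decide : (2:Fin 3) ≠ 1),
    Matrix.mulVec, dotProduct, Fin.sum_univ_three, smul_eq_mul,
    Matrix.cons_val', Matrix.cons_val_zero, Matrix.cons_val_one, Matrix.head_cons,
    Matrix.empty_val', Matrix.cons_val_fin_one, Matrix.head_fin_const, Matrix.cons_val_two,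
    Matrix.tail_cons, Matrix.of_apply]
  rw [h10, h20, h21]
  ring

lemma traceCf (U : Matrix (Fin 3) (Fin 3) ℝ) (a n : Fin 3 → ℝ)
    (h10 : U 1 0 = U 0 1) (h20 : U 2 0 = U 0 2) (h21 : U 2 1 = U 1 2) (f : ℝ) :
    ((U + f • vecMulVec n a) * (U + f • vecMulVec a n)).trace =
      (U * U).trace + 2 * f * (a ⬝ᵥ U.mulVec n) + f ^ 2 * ((a ⬝ᵥ a) * (n ⬝ᵥ n)) := by
  simp only [Matrix.trace, Matrix.diag, Matrix.add_apply, Matrix.mul_apply, Matrix.smul_apply,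
    Matrix.vecMulVec_apply, Matrix.mulVec, dotProduct, Fin.sum_univ_three, smul_eq_mul]
  rw [h10, h20, h21]; ring

lemma detlin (U : Matrix (Fin 3) (Fin 3) ℝ) (a n : Fin 3 → ℝ) (f : ℝ) :
    (U + f • vecMulVec a n).det = (1 - f) * U.det + f * (U + vecMulVec a n).det := by
  simp only [Matrix.det_fin_three, Matrix.add_apply, Matrix.smul_apply, Matrix.vecMulVec_apply,
    smul_eq_mul]
  ring

lemma dot_self_pos (a : Fin 3 → ℝ) (ha : a ≠ 0) : 0 < a ⬝ᵥ a := by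
  have h0 : (0:ℝ) ≤ a ⬝ᵥ a := Finset.sum_nonneg fun i _ => mul_self_nonneg _
  rcases h0.lt_or_eq with h | h
  · exact h
  · exact absurd (dotProduct_self_eq_zero.mp h.symm) ha

set_option maxHeartbeats 1000000 in
theorem stmt_1 (U Uhat Rhat : Matrix (Fin 3) (Fin 3) ℝ) (ehat a n : Fin 3 → ℝ)
    (hU : U.PosDef) (hehat : ehat ⬝ᵥ ehat = 1)
    (hUhat : Uhat = reflMat ehat * U * reflMat ehat)
    (hRhat : SO3 Rhat) (ha : a ≠ 0) (hn : n ≠ 0)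
    (hcomp : Rhat * Uhat = U + Matrix.vecMulVec a n)
    (hcc : CC1 U ∧ CC2 U a n ∧ CC3 U a n) :
    -- for every f ∈ [0,1], f ≠ 1/2 : the eigenvalues of C(f) are p < 1 < q together
    -- with the eigenvalue 1 (so the smallest is < 1 and the largest is > 1)
    (∀ f ∈ Set.Icc (0 : ℝ) 1, f ≠ 1/2 →
      ∃ p q : ℝ, p < 1 ∧ 1 < q ∧
        ((U + f • Matrix.vecMulVec n a) * (U + f • Matrix.vecMulVec a n)).charpoly
          = (X - C p) * (X - C 1) * (X - C q))
    -- in particular the eigenvalues λ₁ ≤ λ₂ ≤ λ₃ of U satisfy λ₁ < 1 < λ₃ and λ₂ = 1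
    ∧ (∃ l1 l3 : ℝ, l1 < 1 ∧ 1 < l3 ∧
        U.charpoly = (X - C l1) * (X - C 1) * (X - C l3)) := by
  obtain ⟨hcc1, hcc2, hcc3⟩ := hcc
  obtain ⟨l1, l3, hl1, hl3, hfac⟩ := hcc1
  have hp1 : a ⬝ᵥ (U * cof (U * U - 1)).mulVec n = 0 := hcc2
  have hcc3' : (U * U).trace - (U * U).det - (a ⬝ᵥ a) * (n ⬝ᵥ n) / 4 - 2 ≥ 0 := hcc3
  have hsym : Uᵀ = U := by
    rw [← Matrix.conjTranspose_eq_transpose_of_trivial]; exact hU.1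
  have h10 : U 1 0 = U 0 1 := by
    have h := congrFun (congrFun hsym 0) 1; rwa [Matrix.transpose_apply] at h
  have h20 : U 2 0 = U 0 2 := by
    have h := congrFun (congrFun hsym 0) 2; rwa [Matrix.transpose_apply] at h
  have h21 : U 2 1 = U 1 2 := by
    have h := congrFun (congrFun hsym 1) 2; rwa [Matrix.transpose_apply] at h
  have hehat' : ehat 0 * ehat 0 + ehat 1 * ehat 1 + ehat 2 * ehat 2 = 1 := by
    simpa [dotProduct, Fin.sum_univ_three] using hehat
  set Q := reflMat ehat with hQdef
  set E := Matrix.vecMulVec ehat ehat with hEdef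
  have hvt : ∀ (x y : Fin 3 → ℝ), (Matrix.vecMulVec x y)ᵀ = Matrix.vecMulVec y x := by
    intro x y; ext i j; simp [Matrix.vecMulVec_apply, mul_comm]
  have hEE : E * E = E := by
    ext i j
    simp only [hEdef, Matrix.mul_apply, Matrix.vecMulVec_apply, Fin.sum_univ_three]
    linear_combination (ehat i * ehat j) * hehat'
  have hQE : Q = -1 + (2:ℝ) • E := rfl
  have hQ2 : Q * Q = 1 := by
    rw [hQE]
    have hA : ((2:ℝ) • E) * ((2:ℝ) • E) = (4:ℝ) • E := by
      rw [smul_mul_assoc, mul_smul_comm, hEE, smul_smul]; norm_num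
    rw [show ∀ A : Matrix (Fin 3) (Fin 3) ℝ, (-1 + A) * (-1 + A) = 1 - A - A + A * A from
      fun A => by noncomm_ring, hA]
    module
  have hQs : Qᵀ = Q := by
    rw [hQE]
    simp [Matrix.transpose_add, Matrix.transpose_smul, hvt, hEdef]
  have hdetQ : Q.det = 1 := by
    rw [hQE]
    simp only [Matrix.det_fin_three, Matrix.add_apply, Matrix.neg_apply, Matrix.smul_apply,
      Matrix.vecMulVec_apply, smul_eq_mul, Matrix.one_apply_eq,
      Matrix.one_apply_ne (by decide : (0:Fin 3) ≠ 1), Matrix.one_apply_ne (by decide : (0:Fin 3) ≠ 2),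
      Matrix.one_apply_ne (by decide : (1:Fin 3) ≠ 0), Matrix.one_apply_ne (by decide : (1:Fin 3) ≠ 2),
      Matrix.one_apply_ne (by decide : (2:Fin 3) ≠ 0), Matrix.one_apply_ne (by decide : (2:Fin 3) ≠ 1),
      hEdef]
    linear_combination 2 * hehat'
  have hUs : Uhatᵀ = Uhat := by
    rw [hUhat]
    simp [Matrix.transpose_mul, hQs, hsym, Matrix.mul_assoc]
  have h2comp : U + Matrix.vecMulVec n a = Uhat * Rhatᵀ := by
    have h := congrArg Matrix.transpose hcomp
    rw [Matrix.transpose_mul, Matrix.transpose_add, hUs, hsym, hvt] at h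
    exact h.symm
  have hC1 : (U + Matrix.vecMulVec n a) * (U + Matrix.vecMulVec a n) = Q * (U * U) * Q := by
    rw [h2comp, ← hcomp]
    have hR : Rhatᵀ * Rhat = 1 := mul_eq_one_comm.mp hRhat.1
    rw [Matrix.mul_assoc, ← Matrix.mul_assoc Rhatᵀ Rhat Uhat, hR, Matrix.one_mul]
    rw [hUhat]
    have hQQ : ∀ M : Matrix (Fin 3) (Fin 3) ℝ, Q * (Q * M) = M := fun M => by
      rw [← Matrix.mul_assoc, hQ2, Matrix.one_mul]
    simp only [Matrix.mul_assoc, hQQ]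
  have htr1 : ((U + Matrix.vecMulVec n a) * (U + Matrix.vecMulVec a n)).trace = (U * U).trace := by
    rw [hC1, Matrix.trace_mul_comm (Q * (U * U)) Q, ← Matrix.mul_assoc, hQ2, Matrix.one_mul]
  have hS : 2 * (a ⬝ᵥ U.mulVec n) + (a ⬝ᵥ a) * (n ⬝ᵥ n) = 0 := by
    have h := traceCf U a n h10 h20 h21 1
    rw [one_smul, one_smul, htr1] at h
    nlinarith [h]
  have hdetUan : (U + Matrix.vecMulVec a n).det = U.det := by
    have h := congrArg Matrix.det hcomp
    rw [Matrix.det_mul, hRhat.2, one_mul, hUhat, Matrix.det_mul, Matrix.det_mul, hdetQ] at h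
    rw [← h]; ring
  have h1d : ((1 : Matrix (Fin 3) (Fin 3) ℝ) - U).det = 0 := by
    have h := eval_charpoly3 U 1
    rw [one_smul, hfac] at h
    simp only [eval_mul, eval_sub, eval_X, eval_C] at h
    rw [← h]; ring
  have hUm1 : (U - 1).det = 0 := by
    rw [show U - (1 : Matrix (Fin 3) (Fin 3) ℝ) = -(1 - U) from (neg_sub _ _).symm,
      Matrix.det_neg, h1d, mul_zero]
  have hd : (U * U - 1).det = 0 := by
    rw [show U * U - (1 : Matrix (Fin 3) (Fin 3) ℝ) = (U + 1) * (U - 1) from by noncomm_ring,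
      Matrix.det_mul, hUm1, mul_zero]
  have hg1 : ((U + Matrix.vecMulVec n a) * (U + Matrix.vecMulVec a n) - 1).det = 0 := by
    rw [hC1, show Q * (U * U) * Q - 1 = Q * (U * U - 1) * Q from by
      rw [Matrix.mul_sub, Matrix.sub_mul, Matrix.mul_one, hQ2],
      Matrix.det_mul, Matrix.det_mul, hd, mul_zero, zero_mul]
  have hg : ∀ f : ℝ, ((U + f • Matrix.vecMulVec n a) * (U + f • Matrix.vecMulVec a n) - 1).det = 0 := by
    intro f
    rw [master U a n h10 h20 h21 f, hd, hp1, hg1]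
    ring
  have haan : 0 < (a ⬝ᵥ a) * (n ⬝ᵥ n) := mul_pos (dot_self_pos a ha) (dot_self_pos n hn)
  have hpart1 : ∀ f ∈ Set.Icc (0 : ℝ) 1, f ≠ 1/2 →
      ∃ p q : ℝ, p < 1 ∧ 1 < q ∧
        ((U + f • Matrix.vecMulVec n a) * (U + f • Matrix.vecMulVec a n)).charpoly
          = (X - C p) * (X - C 1) * (X - C q) := by
    intro f _ hf2
    apply eig_split _ (hg f)
    -- trace/det computations
    have htr : ((U + f • Matrix.vecMulVec n a) * (U + f • Matrix.vecMulVec a n)).trace =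
        (U * U).trace + 2 * f * (a ⬝ᵥ U.mulVec n) + f ^ 2 * ((a ⬝ᵥ a) * (n ⬝ᵥ n)) :=
      traceCf U a n h10 h20 h21 f
    have hdetf : (U + f • Matrix.vecMulVec a n).det = U.det := by
      rw [detlin, hdetUan]; ring
    have hdet : ((U + f • Matrix.vecMulVec n a) * (U + f • Matrix.vecMulVec a n)).det =
        (U * U).det := by
      have hT : U + f • Matrix.vecMulVec n a = (U + f • Matrix.vecMulVec a n)ᵀ := by
        rw [Matrix.transpose_add, Matrix.transpose_smul, hvt, hsym]
      rw [Matrix.det_mul, hT, Matrix.det_transpose, hdetf, Matrix.det_mul]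
    rw [htr, hdet]
    have hsq : 0 < (f - 1/2) ^ 2 := by
      have : f - 1/2 ≠ 0 := sub_ne_zero.mpr hf2
      positivity
    nlinarith [hcc3', mul_pos haan hsq, hS]
  refine ⟨hpart1, ?_⟩
  obtain ⟨p, q, hp, hq, hcp⟩ := hpart1 0 ⟨le_refl 0, by norm_num⟩ (by norm_num)
  simp only [zero_smul, add_zero] at hcp
  have hsq : (U * U).charpoly = (X - C (l1 ^ 2)) * (X - C 1) * (X - C (l3 ^ 2)) := by
    apply Polynomial.eq_of_infinite_eval_eq
    apply Set.Infinite.mono (s := Set.Ici (1 : ℝ)) ?_ (Set.Ici_infinite 1)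
    intro x hx
    have hx0 : (0:ℝ) ≤ x := le_trans zero_le_one hx
    obtain ⟨y, hyy⟩ : ∃ y : ℝ, y * y = x := ⟨Real.sqrt x, Real.mul_self_sqrt hx0⟩
    simp only [Set.mem_setOf_eq]
    have hfact : ((y * y) • (1 : Matrix (Fin 3) (Fin 3) ℝ) - U * U) = (y • 1 - U) * (y • 1 + U) := by
      simp only [Matrix.sub_mul, Matrix.mul_add, smul_mul_assoc, mul_smul_comm, smul_sub, smul_add,
        Matrix.one_mul, Matrix.mul_one, smul_smul]
      abel
    have hdetm : (y • (1 : Matrix (Fin 3) (Fin 3) ℝ) - U).det = (y - l1) * (y - 1) * (y - l3) := by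
      have h := eval_charpoly3 U y
      rw [hfac] at h
      simp only [eval_mul, eval_sub, eval_X, eval_C] at h
      rw [← h]
    have hdetp : (y • (1 : Matrix (Fin 3) (Fin 3) ℝ) + U).det
        = -((-y - l1) * (-y - 1) * (-y - l3)) := by
      have h := eval_charpoly3 U (-y)
      rw [hfac] at h
      simp only [eval_mul, eval_sub, eval_X, eval_C] at h
      have hneg : (-y) • (1 : Matrix (Fin 3) (Fin 3) ℝ) - U = -(y • 1 + U) := by
        rw [neg_smul]; abel
      rw [hneg, Matrix.det_neg] at h
      simp only [Fintype.card_fin] at h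
      norm_num at h
      linarith [h]
    rw [eval_charpoly3, ← hyy, hfact, Matrix.det_mul, hdetm, hdetp]
    simp only [eval_mul, eval_sub, eval_X, eval_C]
    ring
  have heq : (X - C p) * (X - C 1) * (X - C q)
      = (X - C (l1 ^ 2)) * (X - C 1) * (X - C (l3 ^ 2)) := hcp.symm.trans hsq
  have e0 := congrArg (Polynomial.eval 0) heq
  have e2 := congrArg (Polynomial.eval 2) heq
  simp only [eval_mul, eval_sub, eval_X, eval_C] at e0 e2
  have hpq : p * q = l1 ^ 2 * l3 ^ 2 := by linear_combination -e0
  have hsum : p + q = l1 ^ 2 + l3 ^ 2 := by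
    linear_combination (-1/2 : ℝ) * e2 + (1/2 : ℝ) * hpq
  have hroot1 : (l1 ^ 2 - p) * (l1 ^ 2 - q) = 0 := by
    linear_combination (-l1 ^ 2) * hsum + hpq
  have hroot3 : (l3 ^ 2 - p) * (l3 ^ 2 - q) = 0 := by
    linear_combination (-l3 ^ 2) * hsum + hpq
  refine ⟨l1, l3, ?_, ?_, hfac⟩
  · rcases mul_eq_zero.mp hroot1 with h1 | h1
    · nlinarith [hp, h1]
    · rcases mul_eq_zero.mp hroot3 with h3 | h3
      · nlinarith [hl3, hp, h3]
      · nlinarith [hsum, h1, h3, hp, hq]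
  · rcases mul_eq_zero.mp hroot3 with h3 | h3
    · nlinarith [hl3, hp, h3]
    · nlinarith [hl3, hq, h3]
end

section
/- Assume hypotheses (H): U is a 3×3 real positive-definite symmetric matrix, ê ∈ ℝ³ is a unit vector, Û = (−I + 2 ê⊗ê) U (−I + 2 ê⊗ê), and there exist R̂ ∈ SO(3) and nonzero vectors a, n ∈ ℝ³ with R̂ Û = U + a ⊗ n. Assume further that the cofactor conditions (CC1), (CC2), (CC3) hold for (U, a, n). Then for every f ∈ [0,1] with f ≠ 1/2 there exist two distinct solutions of the equation of the crystallographic theory: there exist R₁, R₂ ∈ SO(3) and vectors b₁, m₁, b₂, m₂ ∈ ℝ³ such that Rᵢ (f(U + a⊗n) + (1−f)U) = I + bᵢ⊗mᵢ for i = 1, 2, and (R₁, b₁⊗m₁) ≠ (R₂, b₂⊗m₂). -/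
open Matrix Polynomial

theorem cof00 (M : Matrix (Fin 3) (Fin 3) ℝ) : cof M 0 0 = M 1 1 * M 2 2 - M 1 2 * M 2 1 := by
  simp [cof, Matrix.det_fin_two, Fin.succAbove]
theorem cof01 (M : Matrix (Fin 3) (Fin 3) ℝ) : cof M 0 1 = -(M 1 0 * M 2 2) + M 1 2 * M 2 0 := by
  simp [cof, Matrix.det_fin_two, Fin.succAbove]; ring
theorem cof02 (M : Matrix (Fin 3) (Fin 3) ℝ) : cof M 0 2 = M 1 0 * M 2 1 - M 1 1 * M 2 0 := by
  simp [cof, Matrix.det_fin_two, Fin.succAbove]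
theorem cof10 (M : Matrix (Fin 3) (Fin 3) ℝ) : cof M 1 0 = -(M 0 1 * M 2 2) + M 0 2 * M 2 1 := by
  simp [cof, Matrix.det_fin_two, Fin.succAbove]; ring
theorem cof11 (M : Matrix (Fin 3) (Fin 3) ℝ) : cof M 1 1 = M 0 0 * M 2 2 - M 0 2 * M 2 0 := by
  simp [cof, Matrix.det_fin_two, Fin.succAbove]
theorem cof12 (M : Matrix (Fin 3) (Fin 3) ℝ) : cof M 1 2 = -(M 0 0 * M 2 1) + M 0 1 * M 2 0 := by
  simp [cof, Matrix.det_fin_two, Fin.succAbove]; ring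
theorem cof20 (M : Matrix (Fin 3) (Fin 3) ℝ) : cof M 2 0 = M 0 1 * M 1 2 - M 0 2 * M 1 1 := by
  simp [cof, Matrix.det_fin_two, Fin.succAbove]
theorem cof21 (M : Matrix (Fin 3) (Fin 3) ℝ) : cof M 2 1 = -(M 0 0 * M 1 2) + M 0 2 * M 1 0 := by
  simp [cof, Matrix.det_fin_two, Fin.succAbove]; ring
theorem cof22 (M : Matrix (Fin 3) (Fin 3) ℝ) : cof M 2 2 = M 0 0 * M 1 1 - M 0 1 * M 1 0 := by
  simp [cof, Matrix.det_fin_two, Fin.succAbove]; norm_num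

/-- determinant of a rank-one perturbation of the identity -/
theorem aux_det_one_add (b m : Fin 3 → ℝ) :
    ((1 : Matrix (Fin 3) (Fin 3) ℝ) + vecMulVec b m).det = 1 + m ⬝ᵥ b := by
  simp [Matrix.det_fin_three, vecMulVec_apply, Matrix.add_apply, Matrix.one_apply,
    dotProduct, Fin.sum_univ_three]
  ring

/-- determinant is affine in a rank-one perturbation -/
theorem aux_det_affine (X : Matrix (Fin 3) (Fin 3) ℝ) (a n : Fin 3 → ℝ) (x : ℝ) :
    (X + x • vecMulVec a n).det = (1 - x) * X.det + x * (X + vecMulVec a n).det := by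
  simp [Matrix.det_fin_three, vecMulVec_apply, Matrix.add_apply, Matrix.smul_apply, smul_eq_mul]
  ring

/-- decomposition of `(U + x a⊗n)ᵀ (U + x a⊗n) - 1` -/
theorem aux_ST1 (U : Matrix (Fin 3) (Fin 3) ℝ) (a n : Fin 3 → ℝ) (x : ℝ) :
    (U + x • vecMulVec a n)ᵀ * (U + x • vecMulVec a n) - 1
      = (Uᵀ * U - 1) + x • (vecMulVec (Uᵀ.mulVec a) n + vecMulVec n (Uᵀ.mulVec a))
        + (x ^ 2 * (a ⬝ᵥ a)) • vecMulVec n n := by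
  ext i j
  simp [Matrix.mul_apply, Matrix.sub_apply, Matrix.add_apply, Matrix.smul_apply,
    Matrix.transpose_apply, vecMulVec_apply, Matrix.mulVec, dotProduct,
    Fin.sum_univ_three, smul_eq_mul]
  ring

/-- trace is a quadratic in the rank-one perturbation -/
theorem aux_trace (U : Matrix (Fin 3) (Fin 3) ℝ) (a n : Fin 3 → ℝ) (x : ℝ) :
    ((U + x • vecMulVec a n)ᵀ * (U + x • vecMulVec a n)).trace
      = (1 - x) * (Uᵀ * U).trace + x * ((U + vecMulVec a n)ᵀ * (U + vecMulVec a n)).trace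
        + (x ^ 2 - x) * ((a ⬝ᵥ a) * (n ⬝ᵥ n)) := by
  simp [Matrix.trace, Matrix.diag, Matrix.mul_apply, Matrix.add_apply, Matrix.smul_apply,
    Matrix.transpose_apply, vecMulVec_apply, dotProduct, Fin.sum_univ_three, smul_eq_mul]
  ring

set_option maxHeartbeats 2000000 in
theorem aux_step2 (A : Matrix (Fin 3) (Fin 3) ℝ) (u n : Fin 3 → ℝ) (s x : ℝ) :
    (A + x • (vecMulVec u n + vecMulVec n u) + (x ^ 2 * s) • vecMulVec n n).det
      = A.det + x * (n ⬝ᵥ (cof A).mulVec u + u ⬝ᵥ (cof A).mulVec n)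
        + x ^ 2 * ((A + (vecMulVec u n + vecMulVec n u) + s • vecMulVec n n).det - A.det
                 - (n ⬝ᵥ (cof A).mulVec u + u ⬝ᵥ (cof A).mulVec n)) := by
  simp only [Matrix.det_fin_three, Matrix.add_apply, Matrix.smul_apply, vecMulVec_apply,
    smul_eq_mul, dotProduct, Matrix.mulVec, Fin.sum_univ_three,
    cof00, cof01, cof02, cof10, cof11, cof12, cof20, cof21, cof22]
  ring

theorem aux_dma (W K : Matrix (Fin 3) (Fin 3) ℝ) (v w : Fin 3 → ℝ) :
    (W.mulVec v) ⬝ᵥ K.mulVec w = v ⬝ᵥ (Wᵀ * K).mulVec w := by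
  simp [dotProduct, Matrix.mulVec, Matrix.mul_apply, Matrix.transpose_apply, Fin.sum_univ_three]
  ring

theorem aux_dcs (A : Matrix (Fin 3) (Fin 3) ℝ) (h : Aᵀ = A) (v w : Fin 3 → ℝ) :
    v ⬝ᵥ (cof A).mulVec w = w ⬝ᵥ (cof A).mulVec v := by
  have h10 : A 1 0 = A 0 1 := congrFun (congrFun h 0) 1
  have h20 : A 2 0 = A 0 2 := congrFun (congrFun h 0) 2
  have h21 : A 2 1 = A 1 2 := congrFun (congrFun h 1) 2
  simp only [dotProduct, Matrix.mulVec, Fin.sum_univ_three,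
    cof00, cof01, cof02, cof10, cof11, cof12, cof20, cof21, cof22, h10, h20, h21]
  ring

theorem aux_dp_pos (v : Fin 3 → ℝ) (h : v ≠ 0) : 0 < v ⬝ᵥ v := by
  have h2 : v ⬝ᵥ v ≠ 0 := fun hz => h (dotProduct_self_eq_zero.mp hz)
  have h3 : 0 ≤ v ⬝ᵥ v := by
    simp only [dotProduct, Fin.sum_univ_three]
    nlinarith [sq_nonneg (v 0), sq_nonneg (v 1), sq_nonneg (v 2)]
  exact lt_of_le_of_ne h3 (Ne.symm h2)

theorem aux_vout (W : Matrix (Fin 3) (Fin 3) ℝ) (x y : Fin 3 → ℝ) :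
    vecMulVec (W.mulVec x) (W.mulVec y) = W * vecMulVec x y * Wᵀ := by
  ext i j
  simp [vecMulVec_apply, Matrix.mul_apply, Matrix.mulVec, Matrix.transpose_apply,
    dotProduct, Fin.sum_univ_three]
  ring

theorem aux_diag (Cm : Matrix (Fin 3) (Fin 3) ℝ) (h : Cmᵀ = Cm) :
    ∃ (V : Matrix (Fin 3) (Fin 3) ℝ) (lam : Fin 3 → ℝ),
      V * Vᵀ = 1 ∧ Vᵀ * V = 1 ∧ Cm = V * Matrix.diagonal lam * Vᵀ := by
  have hherm : Cm.IsHermitian := by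
    rwa [Matrix.IsHermitian, conjTranspose_eq_transpose_of_trivial]
  refine ⟨hherm.eigenvectorUnitary, hherm.eigenvalues, ?_, ?_, ?_⟩
  · have := (Matrix.mem_unitaryGroup_iff).mp hherm.eigenvectorUnitary.2
    simpa [Matrix.star_eq_conjTranspose, conjTranspose_eq_transpose_of_trivial] using this
  · have := (Matrix.mem_unitaryGroup_iff').mp hherm.eigenvectorUnitary.2
    simpa [Matrix.star_eq_conjTranspose, conjTranspose_eq_transpose_of_trivial] using this
  · have := hherm.spectral_theorem
    simpa [Matrix.star_eq_conjTranspose, conjTranspose_eq_transpose_of_trivial,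
      RCLike.ofReal_real_eq_id] using this

theorem aux_permex (i0 j k : Fin 3) (h1 : i0 ≠ j) (h2 : i0 ≠ k) (h3 : j ≠ k) :
    ∃ σ : Equiv.Perm (Fin 3), σ 0 = j ∧ σ 1 = i0 ∧ σ 2 = k := by
  revert h1 h2 h3; revert i0 j k; decide

/-- eigenvalue 1 from CC1 -/
theorem aux_cc1_det (U : Matrix (Fin 3) (Fin 3) ℝ)
    (hcc : ∃ l1 l3 : ℝ, l1 ≤ 1 ∧ 1 ≤ l3 ∧
      U.charpoly = (X - C l1) * (X - C (1:ℝ)) * (X - C l3)) :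
    (U * U - 1).det = 0 := by
  obtain ⟨l1, l3, _, _, hcp⟩ := hcc
  have hev : Polynomial.eval (1:ℝ) U.charpoly
      = ((charmatrix U).map (Polynomial.evalRingHom (1:ℝ))).det := by
    rw [Matrix.charpoly, ← Polynomial.coe_evalRingHom, RingHom.map_det]
    rfl
  have hmap : (charmatrix U).map (Polynomial.evalRingHom (1:ℝ)) = 1 - U := by
    ext i j
    by_cases hij : i = j
    · subst hij; simp [charmatrix_apply_eq, Matrix.sub_apply, Matrix.one_apply]
    · simp [charmatrix_apply_ne _ _ _ hij, Matrix.sub_apply, Matrix.one_apply, hij]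
  have h1U : (1 - U).det = 0 := by
    rw [← hmap, ← hev, hcp]
    simp
  have hfact : U * U - 1 = (U - 1) * (U + 1) := by noncomm_ring
  have hneg : (U - 1).det = 0 := by
    have : U - 1 = -(1 - U) := (neg_sub 1 U).symm
    rw [this, Matrix.det_neg, h1U]
    simp
  rw [hfact, Matrix.det_mul, hneg, zero_mul]

set_option maxHeartbeats 3000000 in
theorem aux_core (l1 l3 : ℝ) (h0 : 0 ≤ l1) (h1 : l1 < 1) (h3 : 1 < l3) :
    ∃ b m b' m' : Fin 3 → ℝ,
      ((1 + vecMulVec b m)ᵀ * (1 + vecMulVec b m) = Matrix.diagonal ![l1, 1, l3]) ∧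
      ((1 + vecMulVec b' m')ᵀ * (1 + vecMulVec b' m') = Matrix.diagonal ![l1, 1, l3]) ∧
      m ⬝ᵥ b = Real.sqrt (l1 * l3) - 1 ∧ m' ⬝ᵥ b' = Real.sqrt (l1 * l3) - 1 ∧
      vecMulVec b m ≠ vecMulVec b' m' := by
  obtain ⟨dd, hl3⟩ : ∃ dd, l3 = l1 + dd := ⟨l3 - l1, by ring⟩
  have hdd0 : 0 < dd := by linarith
  obtain ⟨iD, hiD⟩ : ∃ iD, iD * dd = 1 := ⟨dd⁻¹, inv_mul_cancel₀ (ne_of_gt hdd0)⟩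
  have hiD0 : 0 < iD := by nlinarith
  set p := Real.sqrt l1 with hpdef
  set q := Real.sqrt l3 with hqdef
  set s := Real.sqrt (1 - l1) with hsdef
  set t := Real.sqrt (l3 - 1) with htdef
  have hp2 : p ^ 2 = l1 := Real.sq_sqrt h0
  have hq2 : q ^ 2 = l1 + dd := by rw [hqdef, Real.sq_sqrt (by linarith)]; linarith
  have hs2 : s ^ 2 = 1 - l1 := Real.sq_sqrt (by linarith)
  have ht2 : t ^ 2 = l1 + dd - 1 := by rw [htdef, Real.sq_sqrt (by linarith)]; linarith
  have hp0 : 0 ≤ p := Real.sqrt_nonneg l1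
  have hq0 : 0 ≤ q := Real.sqrt_nonneg l3
  have hp1 : p < 1 := by nlinarith
  have hq1 : 1 < q := by nlinarith
  have hs0 : 0 < s := Real.sqrt_pos.mpr (by linarith)
  have ht0 : 0 < t := Real.sqrt_pos.mpr (by linarith)
  have hr : Real.sqrt (l1 * l3) = p * q := Real.sqrt_mul h0 l3
  have key : ∀ kp : ℝ, kp ^ 2 = 1 →
      (((1 : Matrix (Fin 3) (Fin 3) ℝ)
          + vecMulVec ![q*s, 0, kp*(p*t)] ![-((q-p)*s*iD), 0, kp*((q-p)*t*iD)])ᵀ *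
        ((1 : Matrix (Fin 3) (Fin 3) ℝ)
          + vecMulVec ![q*s, 0, kp*(p*t)] ![-((q-p)*s*iD), 0, kp*((q-p)*t*iD)])
          = Matrix.diagonal ![l1, 1, l3]) ∧
      (![-((q-p)*s*iD), 0, kp*((q-p)*t*iD)] ⬝ᵥ ![q*s, 0, kp*(p*t)]
          = Real.sqrt (l1 * l3) - 1) := by
    intro kp hk
    constructor
    · ext i j
      fin_cases i <;> fin_cases j <;>
        simp only [Matrix.mul_apply, Matrix.transpose_apply, Matrix.add_apply, Matrix.one_apply,
          Matrix.vecMulVec_apply, Matrix.diagonal_apply, Fin.sum_univ_three,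
          Matrix.cons_val_zero, Matrix.cons_val_one, Matrix.cons_val_two, Matrix.head_cons,
          Matrix.tail_cons, Matrix.head_fin_const, Fin.reduceFinMk, Fin.reduceEq, if_true, if_false]
      all_goals first
        | ring1
        | linear_combination (s*t*kp*iD - 1*s*t^3*kp^3*l1*iD^2 - 1*q^2*s*t^3*kp^3*iD^2 - 1*q^2*s^3*t*kp*iD^2 + 2*p*q*s*t^3*kp^3*iD^2 - 1*p^2*s*t^3*kp^3*iD^2) * hp2 + (s*t*kp*iD - 1*s*t^3*kp^3*l1*iD^2 - 1*s^3*t*kp*dd*iD^2 - 2*s^3*t*kp*l1*iD^2 - 1*q^2*s^3*t*kp*iD^2 + 2*p*q*s^3*t*kp*iD^2) * hq2 + (-1*s*t*kp*dd^2*iD^2 - 3*s*t*kp*l1*dd*iD^2 - 2*s*t*kp*l1^2*iD^2 + 2*p*q*s*t*kp*dd*iD^2 + 2*p*q*s*t*kp*l1*iD^2) * hs2 + (-1*s*t*kp^3*l1*dd*iD^2 - 2*s*t*kp^3*l1^2*iD^2 + 2*p*q*s*t*kp^3*l1*iD^2) * ht2 + (s*t*kp*l1*dd*iD^2 - 1*s*t*kp*l1*dd^2*iD^2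 + 2*s*t*kp*l1^2*iD^2 - 3*s*t*kp*l1^2*dd*iD^2 - 2*s*t*kp*l1^3*iD^2 - 2*p*q*s*t*kp*l1*iD^2 + 2*p*q*s*t*kp*l1*dd*iD^2 + 2*p*q*s*t*kp*l1^2*iD^2) * hk + (-1*s*t*kp*dd*iD - 2*s*t*kp*l1*iD + 2*p*q*s*t*kp*iD) * hiD
        | linear_combination (s^2*t^2*kp^2*l1*iD^2 + q^2*s^2*t^2*kp^2*iD^2 + q^2*s^4*iD^2 - 2*p*q*s^2*t^2*kp^2*iD^2 + p^2*s^2*t^2*kp^2*iD^2) * hp2 + (-2*s^2*iD + s^2*t^2*kp^2*l1*iD^2 + s^4*dd*iD^2 + 2*s^4*l1*iD^2 + q^2*s^4*iD^2 - 2*p*q*s^4*iD^2) * hq2 + (-2*dd*iD + dd^2*iD^2 - 2*l1*iD + 3*l1*dd*iD^2 - 1*l1*dd^2*iD^2 + 2*l1^2*iD^2 - 3*l1^2*dd*iD^2 - 2*l1^3*iD^2 + t^2*kp^2*l1*dd*iD^2 + 2*t^2*kp^2*l1^2*iD^2 + s^2*dd^2*iD^2 + 3*s^2*l1*dd*iD^2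 + 2*s^2*l1^2*iD^2 + 2*p*q*iD - 2*p*q*dd*iD^2 - 2*p*q*l1*iD^2 + 2*p*q*l1*dd*iD^2 + 2*p*q*l1^2*iD^2 - 2*p*q*t^2*kp^2*l1*iD^2 - 2*p*q*s^2*dd*iD^2 - 2*p*q*s^2*l1*iD^2) * hs2 + (kp^2*l1*dd*iD^2 + 2*kp^2*l1^2*iD^2 - 1*kp^2*l1^2*dd*iD^2 - 2*kp^2*l1^3*iD^2 - 2*p*q*kp^2*l1*iD^2 + 2*p*q*kp^2*l1^2*iD^2) * ht2 + (-1*l1*dd*iD^2 + l1*dd^2*iD^2 - 2*l1^2*iD^2 + 4*l1^2*dd*iD^2 - 1*l1^2*dd^2*iD^2 + 4*l1^3*iD^2 - 3*l1^3*dd*iD^2 - 2*l1^4*iD^2 + 2*p*q*l1*iD^2 - 2*p*q*l1*dd*iD^2 - 4*p*q*l1^2*iD^2 + 2*p*q*l1^2*dd*iD^2 + 2*p*q*l1^3*iD^2) * hk + (-1 + dd*iD + l1 + 2*l1*iD - 1*l1*dd*iD - 2*l1^2*iD - 2*p*q*iD + 2*p*q*l1*iD) * hiD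
        | linear_combination (-2*t^2*kp^2*iD + t^4*kp^4*l1*iD^2 + q^2*t^4*kp^4*iD^2 + q^2*s^2*t^2*kp^2*iD^2 - 2*p*q*t^4*kp^4*iD^2 + p^2*t^4*kp^4*iD^2) * hp2 + (t^4*kp^4*l1*iD^2 + s^2*t^2*kp^2*dd*iD^2 + 2*s^2*t^2*kp^2*l1*iD^2 + q^2*s^2*t^2*kp^2*iD^2 - 2*p*q*s^2*t^2*kp^2*iD^2) * hq2 + (t^2*kp^2*dd^2*iD^2 + 3*t^2*kp^2*l1*dd*iD^2 + 2*t^2*kp^2*l1^2*iD^2 - 2*p*q*t^2*kp^2*dd*iD^2 - 2*p*q*t^2*kp^2*l1*iD^2) * hs2 + (kp^2*dd^2*iD^2 - 2*kp^2*l1*iD + 3*kp^2*l1*dd*iD^2 - 1*kp^2*l1*dd^2*iD^2 + 2*kp^2*l1^2*iD^2 - 3*kp^2*l1^2*dd*iD^2 - 2*kp^2*l1^3*iD^2 - 1*kp^4*l1*dd*iD^2 + kp^4*l1*dd^2*iD^2 - 2*kp^4*l1^2*iD^2 + 3*kp^4*l1^2*dd*iD^2 + 2*kp^4*l1^3*iD^2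 + t^2*kp^4*l1*dd*iD^2 + 2*t^2*kp^4*l1^2*iD^2 + 2*p*q*kp^2*iD - 2*p*q*kp^2*dd*iD^2 - 2*p*q*kp^2*l1*iD^2 + 2*p*q*kp^2*l1*dd*iD^2 + 2*p*q*kp^2*l1^2*iD^2 + 2*p*q*kp^4*l1*iD^2 - 2*p*q*kp^4*l1*dd*iD^2 - 2*p*q*kp^4*l1^2*iD^2 - 2*p*q*t^2*kp^4*l1*iD^2) * ht2 + (-1*dd^2*iD^2 + dd^3*iD^2 + 2*l1*iD - 2*l1*dd*iD - 2*l1*dd*iD^2 + 3*l1*dd^2*iD^2 - 2*l1^2*iD + 2*l1^2*dd*iD^2 + kp^2*l1*dd*iD^2 - 2*kp^2*l1*dd^2*iD^2 + kp^2*l1*dd^3*iD^2 + 2*kp^2*l1^2*iD^2 - 6*kp^2*l1^2*dd*iD^2 + 4*kp^2*l1^2*dd^2*iD^2 - 4*kp^2*l1^3*iD^2 + 5*kp^2*l1^3*dd*iD^2 + 2*kp^2*l1^4*iD^2 - 2*p*q*iD + 2*p*q*dd*iD + 2*p*q*dd*iD^2 - 2*p*q*dd^2*iD^2 + 2*p*q*l1*iD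 - 2*p*q*l1*dd*iD^2 - 2*p*q*kp^2*l1*iD^2 + 4*p*q*kp^2*l1*dd*iD^2 - 2*p*q*kp^2*l1*dd^2*iD^2 + 4*p*q*kp^2*l1^2*iD^2 - 4*p*q*kp^2*l1^2*dd*iD^2 - 2*p*q*kp^2*l1^3*iD^2) * hk + (-1 + dd - 1*dd*iD + dd^2*iD + l1 - 2*l1*iD + 3*l1*dd*iD + 2*l1^2*iD + 2*p*q*iD - 2*p*q*dd*iD - 2*p*q*l1*iD) * hiD + (-1) * hl3
    · simp only [dotProduct, Fin.sum_univ_three, Matrix.cons_val_zero, Matrix.cons_val_one,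
        Matrix.cons_val_two, Matrix.head_cons, Matrix.tail_cons]
      rw [hr]
      linear_combination (-1*t^2*kp^2*iD) * hp2 + (-1*s^2*iD) * hq2 + (-1*dd*iD - 1*l1*iD + p*q*iD) * hs2 + (-1*kp^2*l1*iD + p*q*kp^2*iD) * ht2 + (l1*iD - 1*l1*dd*iD - 1*l1^2*iD - 1*p*q*iD + p*q*dd*iD + p*q*l1*iD) * hk + (-1 + p*q) * hiD
  obtain ⟨hA1, hA2⟩ := key 1 (by norm_num)
  obtain ⟨hB1, hB2⟩ := key (-1) (by norm_num)
  refine ⟨_, _, _, _, hA1, hB1, hA2, hB2, ?_⟩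
  intro hEq
  have h02 := congrFun (congrFun hEq 0) 2
  simp only [Matrix.vecMulVec_apply, Matrix.cons_val_zero, Matrix.cons_val_two,
    Matrix.head_cons, Matrix.tail_cons] at h02
  have hqp : 0 < q - p := by linarith
  nlinarith [mul_pos (mul_pos (mul_pos (show (0:ℝ) < q by linarith) hs0) (mul_pos hqp ht0)) hiD0]

set_option maxHeartbeats 8000000 in
theorem stmt_2 (U Uhat Rhat : Matrix (Fin 3) (Fin 3) ℝ) (ehat a n : Fin 3 → ℝ)
    (hU : U.PosDef) (hehat : ehat ⬝ᵥ ehat = 1)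
    (hUhat : Uhat = reflMat ehat * U * reflMat ehat)
    (hRhat : SO3 Rhat) (ha : a ≠ 0) (hn : n ≠ 0)
    (hcomp : Rhat * Uhat = U + Matrix.vecMulVec a n)
    (hcc : CC1 U ∧ CC2 U a n ∧ CC3 U a n) :
    ∀ f ∈ Set.Icc (0 : ℝ) 1, f ≠ 1/2 →
      ∃ (R1 R2 : Matrix (Fin 3) (Fin 3) ℝ) (b1 m1 b2 m2 : Fin 3 → ℝ),
        SO3 R1 ∧ SO3 R2 ∧
        R1 * (f • (U + Matrix.vecMulVec a n) + (1 - f) • U)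
          = 1 + Matrix.vecMulVec b1 m1 ∧
        R2 * (f • (U + Matrix.vecMulVec a n) + (1 - f) • U)
          = 1 + Matrix.vecMulVec b2 m2 ∧
        (R1, Matrix.vecMulVec b1 m1) ≠ (R2, Matrix.vecMulVec b2 m2) := by
  obtain ⟨hCC1, hCC2, hCC3⟩ := hcc
  intro f hf hfhalf
  obtain ⟨hf0, hf1⟩ := hf
  have hsym : Uᵀ = U := by
    rw [← Matrix.conjTranspose_eq_transpose_of_trivial]; exact hU.1
  have hdetU : 0 < U.det := hU.det_pos
  set K := Matrix.vecMulVec a n with hK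
  set Q := reflMat ehat with hQ
  have he : ehat 0 * ehat 0 + ehat 1 * ehat 1 + ehat 2 * ehat 2 = 1 := by
    simpa [dotProduct, Fin.sum_univ_three] using hehat
  have hQs : Qᵀ = Q := by
    ext i j
    fin_cases i <;> fin_cases j <;>
      simp [hQ, reflMat, vecMulVec_apply, Matrix.transpose_apply, Matrix.add_apply,
        Matrix.neg_apply, Matrix.one_apply, Matrix.smul_apply] <;> ring
  have hQQ : Q * Q = 1 := by
    ext i j
    fin_cases i <;> fin_cases j <;>
      simp [hQ, reflMat, Matrix.mul_apply, Fin.sum_univ_three, vecMulVec_apply,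
        Matrix.add_apply, Matrix.neg_apply, Matrix.one_apply, Matrix.smul_apply] <;>
      first
        | linear_combination (4 * ehat 0 * ehat 0) * he
        | linear_combination (4 * ehat 0 * ehat 1) * he
        | linear_combination (4 * ehat 0 * ehat 2) * he
        | linear_combination (4 * ehat 1 * ehat 1) * he
        | linear_combination (4 * ehat 1 * ehat 2) * he
        | linear_combination (4 * ehat 2 * ehat 2) * he
  have hQd : Q.det = 1 := by
    simp [hQ, reflMat, Matrix.det_fin_three, vecMulVec_apply, Matrix.add_apply,
      Matrix.neg_apply, Matrix.one_apply, Matrix.smul_apply]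
    linear_combination 2 * he
  have hM1 : U + K = Rhat * Uhat := hcomp.symm
  have hRTR : Rhatᵀ * Rhat = 1 := mul_eq_one_comm.mp hRhat.1
  have hUhs : Uhatᵀ = Uhat := by
    rw [hUhat, Matrix.transpose_mul, Matrix.transpose_mul, hQs, hsym, Matrix.mul_assoc]
  have hUU : Uhat * Uhat = Q * (U * U) * Q := by
    rw [hUhat]
    calc Q * U * Q * (Q * U * Q) = Q * U * (Q * Q) * (U * Q) := by
          simp only [Matrix.mul_assoc]
      _ = Q * (U * U) * Q := by rw [hQQ, Matrix.mul_one]; simp only [Matrix.mul_assoc]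
  have hC1 : (U + K)ᵀ * (U + K) = Q * (U * U) * Q := by
    rw [hM1, Matrix.transpose_mul]
    calc Uhatᵀ * Rhatᵀ * (Rhat * Uhat) = Uhatᵀ * (Rhatᵀ * Rhat) * Uhat := by
          simp only [Matrix.mul_assoc]
      _ = Uhat * Uhat := by rw [hRTR, Matrix.mul_one, hUhs]
      _ = Q * (U * U) * Q := hUU
  have htrC1 : ((U + K)ᵀ * (U + K)).trace = (U * U).trace := by
    rw [hC1, Matrix.trace_mul_cycle, hQQ, Matrix.one_mul]
  have hdetUU1 : (U * U - 1).det = 0 := aux_cc1_det U hCC1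
  have hdetC1 : ((U + K)ᵀ * (U + K) - 1).det = 0 := by
    have h2 : (U + K)ᵀ * (U + K) - 1 = Q * (U * U - 1) * Q := by
      have h3 : Q * (U * U - 1) * Q = Q * (U * U) * Q - Q * Q := by noncomm_ring
      rw [h3, hQQ, hC1]
    rw [h2]
    simp [Matrix.det_mul, hQd, hdetUU1]
  have hq1 : n ⬝ᵥ (cof (U * U - 1)).mulVec (U.mulVec a)
      + (U.mulVec a) ⬝ᵥ (cof (U * U - 1)).mulVec n = 0 := by
    have hAs : (U * U - 1)ᵀ = U * U - 1 := by
      rw [Matrix.transpose_sub, Matrix.transpose_mul, hsym, Matrix.transpose_one]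
    rw [aux_dcs _ hAs, aux_dma, hsym]
    have h4 := hCC2
    unfold CC2 at h4
    linear_combination 2 * h4
  have hdec : ∀ y : ℝ, (U + y • K)ᵀ * (U + y • K) - 1
      = (U * U - 1) + y • (vecMulVec (U.mulVec a) n + vecMulVec n (U.mulVec a))
        + (y ^ 2 * (a ⬝ᵥ a)) • vecMulVec n n := by
    intro y
    have h5 := aux_ST1 U a n y
    rw [hsym, ← hK] at h5
    exact h5
  have hdetT : ∀ x : ℝ, ((U + x • K)ᵀ * (U + x • K) - 1).det = 0 := by
    intro x
    rw [hdec x, aux_step2]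
    have h1 : (U * U - 1) + (vecMulVec (U.mulVec a) n + vecMulVec n (U.mulVec a))
        + (a ⬝ᵥ a) • vecMulVec n n = (U + K)ᵀ * (U + K) - 1 := by
      have h6 := hdec 1
      rw [one_smul, one_pow, one_mul, one_smul] at h6
      exact h6.symm
    rw [h1, hdetC1, hdetUU1, hq1]
    ring
  have hcombo : f • (U + K) + (1 - f) • U = U + f • K := by
    ext i j
    simp [Matrix.add_apply, Matrix.smul_apply, smul_eq_mul]
    ring
  set M := U + f • K with hM
  have hdetM1 : (U + K).det = U.det := by
    rw [hM1, hUhat, Matrix.det_mul, Matrix.det_mul, Matrix.det_mul, hQd, hRhat.2]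
    ring
  have hdetM : M.det = U.det := by
    have h7 := aux_det_affine U a n f
    rw [← hK] at h7
    rw [hM, h7, hdetM1]
    ring
  have hMdet0 : IsUnit M.det := by
    rw [hdetM]; exact isUnit_iff_ne_zero.mpr (ne_of_gt hdetU)
  set C := Mᵀ * M with hCdef
  have hCs : Cᵀ = C := by rw [hCdef, Matrix.transpose_mul, Matrix.transpose_transpose]
  obtain ⟨V, lam, hV1, hV2, hCspec⟩ := aux_diag C hCs
  have hdetVVt : V.det * Vᵀ.det = 1 := by rw [← Matrix.det_mul, hV1, Matrix.det_one]
  have hCm1det : (lam 0 - 1) * ((lam 1 - 1) * (lam 2 - 1)) = 0 := by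
    have h2 : C - 1 = V * (Matrix.diagonal lam - 1) * Vᵀ := by
      have h3 : V * (Matrix.diagonal lam - 1) * Vᵀ
          = V * Matrix.diagonal lam * Vᵀ - V * Vᵀ := by noncomm_ring
      rw [h3, hV1, ← hCspec]
    have h4 : (C - 1).det = 0 := hdetT f
    have h5 : (Matrix.diagonal lam - 1).det = (lam 0 - 1) * ((lam 1 - 1) * (lam 2 - 1)) := by
      have h5a : Matrix.diagonal lam - 1 = Matrix.diagonal (fun i => lam i - 1) := by
        rw [← Matrix.diagonal_one, Matrix.diagonal_sub]
      rw [h5a, Matrix.det_diagonal, Fin.prod_univ_three]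
      ring
    have h6 : (C - 1).det = (Matrix.diagonal lam - 1).det := by
      rw [h2, Matrix.det_mul, Matrix.det_mul]
      linear_combination (Matrix.diagonal lam - 1).det * hdetVVt
    rw [← h5, ← h6, h4]
  have htrC : C.trace = (U * U).trace + (f ^ 2 - f) * ((a ⬝ᵥ a) * (n ⬝ᵥ n)) := by
    have h8 := aux_trace U a n f
    rw [hsym, ← hK] at h8
    rw [hCdef, hM, h8, htrC1]
    ring
  have htrlam : C.trace = lam 0 + lam 1 + lam 2 := by
    rw [hCspec, Matrix.trace_mul_cycle, hV2, Matrix.one_mul, Matrix.trace_diagonal,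
      Fin.sum_univ_three]
  have hdetlam : lam 0 * (lam 1 * lam 2) = U.det ^ 2 := by
    have h7 : C.det = U.det ^ 2 := by
      rw [hCdef, Matrix.det_mul, Matrix.det_transpose, hdetM]; ring
    have h8 : C.det = lam 0 * (lam 1 * lam 2) := by
      rw [hCspec, Matrix.det_mul, Matrix.det_mul, Matrix.det_diagonal, Fin.prod_univ_three]
      linear_combination (lam 0 * (lam 1 * lam 2)) * hdetVVt
    rw [← h8, h7]
  have hsn : 0 < (a ⬝ᵥ a) * (n ⬝ᵥ n) := mul_pos (aux_dp_pos a ha) (aux_dp_pos n hn)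
  have hkey : lam 0 + lam 1 + lam 2 - lam 0 * (lam 1 * lam 2) - 2 > 0 := by
    have h9 : (U * U).det = U.det ^ 2 := by rw [Matrix.det_mul]; ring
    have h10 : (U * U).trace - (U * U).det - (a ⬝ᵥ a) * (n ⬝ᵥ n) / 4 - 2 ≥ 0 := hCC3
    have h11 : (0:ℝ) < (f - 1/2) ^ 2 := by
      have h12 : f - 1/2 ≠ 0 := sub_ne_zero.mpr hfhalf
      positivity
    nlinarith [htrC, htrlam, hdetlam, mul_pos hsn h11]
  -- the final construction, given a sorting permutation
  have final : ∀ σ : Equiv.Perm (Fin 3), lam (σ 0) < 1 → lam (σ 1) = 1 → 1 < lam (σ 2) →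
      ∃ (R1 R2 : Matrix (Fin 3) (Fin 3) ℝ) (b1 m1 b2 m2 : Fin 3 → ℝ),
        SO3 R1 ∧ SO3 R2 ∧
        R1 * (f • (U + K) + (1 - f) • U) = 1 + Matrix.vecMulVec b1 m1 ∧
        R2 * (f • (U + K) + (1 - f) • U) = 1 + Matrix.vecMulVec b2 m2 ∧
        (R1, Matrix.vecMulVec b1 m1) ≠ (R2, Matrix.vecMulVec b2 m2) := by
    intro σ hσ0 hσ1 hσ2
    have hperm : lam (σ 0) * (lam (σ 1) * lam (σ 2)) = lam 0 * (lam 1 * lam 2) := by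
      have h13 := Equiv.prod_comp σ lam
      rw [Fin.prod_univ_three, Fin.prod_univ_three] at h13
      linear_combination h13
    have hprodσ : lam (σ 0) * lam (σ 2) = U.det ^ 2 := by
      have h12 : lam (σ 0) * lam (σ 2) = lam (σ 0) * (lam (σ 1) * lam (σ 2)) := by
        rw [hσ1, one_mul]
      rw [h12, hperm, hdetlam]
    have hl1pos : 0 ≤ lam (σ 0) := by nlinarith [pow_pos hdetU 2]
    obtain ⟨b0, m0, b0', m0', hG1, hG2, hd1, hd2, hne⟩ :=
      aux_core (lam (σ 0)) (lam (σ 2)) hl1pos hσ0 hσ2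
    have hsq : Real.sqrt (lam (σ 0) * lam (σ 2)) = U.det := by
      rw [hprodσ, Real.sqrt_sq hdetU.le]
    set V' := V.submatrix id ⇑σ with hV'
    have hV'1 : V' * V'ᵀ = 1 := by
      rw [hV', Matrix.transpose_submatrix, Matrix.submatrix_mul_equiv V Vᵀ id σ id, hV1,
        Matrix.submatrix_id_id]
    have hV'2 : V'ᵀ * V' = 1 := by
      rw [hV', Matrix.transpose_submatrix]
      have h14 : Vᵀ.submatrix (⇑σ) id * V.submatrix id ⇑σ = (Vᵀ * V).submatrix ⇑σ ⇑σ := by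
        have h15 := Matrix.submatrix_mul_equiv Vᵀ V ⇑σ (Equiv.refl (Fin 3)) ⇑σ
        simpa using h15
      rw [h14, hV2, Matrix.submatrix_one_equiv]
    have hcanc : ∀ Z : Matrix (Fin 3) (Fin 3) ℝ, V'ᵀ * (V' * Z) = Z := by
      intro Z; rw [← Matrix.mul_assoc, hV'2, Matrix.one_mul]
    have hdetV' : V'.det * V'ᵀ.det = 1 := by
      rw [← Matrix.det_mul, hV'1, Matrix.det_one]
    have hDsub : Matrix.diagonal ![lam (σ 0), 1, lam (σ 2)]
        = (Matrix.diagonal lam).submatrix ⇑σ ⇑σ := by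
      ext i j
      by_cases hij : i = j
      · subst hij
        simp only [Matrix.submatrix_apply, Matrix.diagonal_apply_eq]
        fin_cases i <;> simp [hσ1]
      · rw [Matrix.diagonal_apply_ne _ hij, Matrix.submatrix_apply,
          Matrix.diagonal_apply_ne _ (fun hc => hij (σ.injective hc))]
    have hCspec' : C = V' * Matrix.diagonal ![lam (σ 0), 1, lam (σ 2)] * V'ᵀ := by
      rw [hDsub, hV', Matrix.transpose_submatrix,
        Matrix.submatrix_mul_equiv V (Matrix.diagonal lam) id σ ⇑σ,
        Matrix.submatrix_mul_equiv (V * Matrix.diagonal lam) Vᵀ id σ id,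
        Matrix.submatrix_id_id, ← hCspec]
    have hGrw : ∀ x y : Fin 3 → ℝ,
        (1 : Matrix (Fin 3) (Fin 3) ℝ) + vecMulVec (V'.mulVec x) (V'.mulVec y)
          = V' * (1 + vecMulVec x y) * V'ᵀ := by
      intro x y
      rw [aux_vout]
      have h16 : V' * (1 + vecMulVec x y) * V'ᵀ = V' * V'ᵀ + V' * vecMulVec x y * V'ᵀ := by
        noncomm_ring
      rw [h16, hV'1]
    -- the builder
    have build : ∀ x y : Fin 3 → ℝ,
        ((1 + vecMulVec x y)ᵀ * (1 + vecMulVec x y)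
            = Matrix.diagonal ![lam (σ 0), 1, lam (σ 2)]) →
        (y ⬝ᵥ x = Real.sqrt (lam (σ 0) * lam (σ 2)) - 1) →
        ∃ R : Matrix (Fin 3) (Fin 3) ℝ, SO3 R ∧
          R * M = 1 + vecMulVec (V'.mulVec x) (V'.mulVec y) := by
      intro x y hGx hdx
      set G := (1 : Matrix (Fin 3) (Fin 3) ℝ) + vecMulVec (V'.mulVec x) (V'.mulVec y) with hGdef
      have hGform : G = V' * (1 + vecMulVec x y) * V'ᵀ := hGrw x y
      have hGtG : Gᵀ * G = C := by
        rw [hGform]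
        have t1 : (V' * (1 + vecMulVec x y) * V'ᵀ)ᵀ
            = V' * (1 + vecMulVec x y)ᵀ * V'ᵀ := by
          rw [Matrix.transpose_mul, Matrix.transpose_mul, Matrix.transpose_transpose]
          simp only [Matrix.mul_assoc]
        rw [t1]
        calc V' * (1 + vecMulVec x y)ᵀ * V'ᵀ * (V' * (1 + vecMulVec x y) * V'ᵀ)
            = V' * ((1 + vecMulVec x y)ᵀ * (V'ᵀ * (V' * ((1 + vecMulVec x y) * V'ᵀ)))) := by
              simp only [Matrix.mul_assoc]
          _ = V' * ((1 + vecMulVec x y)ᵀ * ((1 + vecMulVec x y) * V'ᵀ)) := by rw [hcanc]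
          _ = V' * ((1 + vecMulVec x y)ᵀ * (1 + vecMulVec x y)) * V'ᵀ := by
              simp only [Matrix.mul_assoc]
          _ = C := by rw [hGx, ← hCspec']
      have hGdet : G.det = U.det := by
        rw [hGform, Matrix.det_mul, Matrix.det_mul, aux_det_one_add, hdx, hsq]
        linear_combination U.det * hdetV'
      have hGu : IsUnit G.det := by
        rw [hGdet]; exact isUnit_iff_ne_zero.mpr (ne_of_gt hdetU)
      have hGtu : IsUnit Gᵀ.det := by rwa [Matrix.det_transpose]
      have hMtu : IsUnit Mᵀ.det := by rwa [Matrix.det_transpose]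
      refine ⟨G * M⁻¹, ⟨?_, ?_⟩, ?_⟩
      · -- orthogonality
        have hRt : (G * M⁻¹)ᵀ = (Mᵀ)⁻¹ * Gᵀ := by
          rw [Matrix.transpose_mul, Matrix.transpose_nonsing_inv]
        rw [hRt]
        have hMM : M⁻¹ * (Mᵀ)⁻¹ = (Mᵀ * M)⁻¹ := (Matrix.mul_inv_rev Mᵀ M).symm
        calc G * M⁻¹ * ((Mᵀ)⁻¹ * Gᵀ) = G * (M⁻¹ * (Mᵀ)⁻¹) * Gᵀ := by
              simp only [Matrix.mul_assoc]
          _ = G * (Mᵀ * M)⁻¹ * Gᵀ := by rw [hMM]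
          _ = G * (Gᵀ * G)⁻¹ * Gᵀ := by rw [← hCdef, ← hGtG]
          _ = G * (G⁻¹ * (Gᵀ)⁻¹) * Gᵀ := by rw [Matrix.mul_inv_rev]
          _ = (G * G⁻¹) * ((Gᵀ)⁻¹ * Gᵀ) := by simp only [Matrix.mul_assoc]
          _ = 1 := by rw [Matrix.mul_nonsing_inv G hGu, Matrix.nonsing_inv_mul Gᵀ hGtu,
                Matrix.one_mul]
      · -- determinant
        rw [Matrix.det_mul, Matrix.det_nonsing_inv, Ring.inverse_eq_inv', hGdet, hdetM]
        exact mul_inv_cancel₀ (ne_of_gt hdetU)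
      · rw [Matrix.mul_assoc, Matrix.nonsing_inv_mul M hMdet0, Matrix.mul_one]
    obtain ⟨R1, hSO1, hR1⟩ := build b0 m0 hG1 hd1
    obtain ⟨R2, hSO2, hR2⟩ := build b0' m0' hG2 hd2
    refine ⟨R1, R2, V'.mulVec b0, V'.mulVec m0, V'.mulVec b0', V'.mulVec m0',
      hSO1, hSO2, by rw [hcombo]; exact hR1, by rw [hcombo]; exact hR2, ?_⟩
    intro hEq
    apply hne
    have h17 : vecMulVec (V'.mulVec b0) (V'.mulVec m0)
        = vecMulVec (V'.mulVec b0') (V'.mulVec m0') := congrArg Prod.snd hEq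
    rw [aux_vout, aux_vout] at h17
    have h18 := congrArg (fun Z => V'ᵀ * Z * V') h17
    have h19 : ∀ W : Matrix (Fin 3) (Fin 3) ℝ, V'ᵀ * (V' * W * V'ᵀ) * V' = W := by
      intro W
      calc V'ᵀ * (V' * W * V'ᵀ) * V' = V'ᵀ * (V' * (W * (V'ᵀ * V'))) := by
            simp only [Matrix.mul_assoc]
        _ = W * (V'ᵀ * V') := by rw [hcanc]
        _ = W := by rw [hV'2, Matrix.mul_one]
    rw [h19, h19] at h18
    exact h18
  -- locate the eigenvalue equal to 1 and sort
  have hone : lam 0 = 1 ∨ lam 1 = 1 ∨ lam 2 = 1 := by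
    rcases mul_eq_zero.mp hCm1det with h | h
    · left; linarith [sub_eq_zero.mp h]
    · rcases mul_eq_zero.mp h with h' | h'
      · right; left; linarith [sub_eq_zero.mp h']
      · right; right; linarith [sub_eq_zero.mp h']
  have hgoal : ∃ (R1 R2 : Matrix (Fin 3) (Fin 3) ℝ) (b1 m1 b2 m2 : Fin 3 → ℝ),
        SO3 R1 ∧ SO3 R2 ∧
        R1 * (f • (U + K) + (1 - f) • U) = 1 + Matrix.vecMulVec b1 m1 ∧
        R2 * (f • (U + K) + (1 - f) • U) = 1 + Matrix.vecMulVec b2 m2 ∧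
        (R1, Matrix.vecMulVec b1 m1) ≠ (R2, Matrix.vecMulVec b2 m2) := by
    rcases hone with h1e | h1e | h1e
    · rcases lt_trichotomy (lam 1) 1 with hx | hx | hx
      · have hy : 1 < lam 2 := by nlinarith
        obtain ⟨σ, hs0, hs1, hs2⟩ := aux_permex 0 1 2 (by decide) (by decide) (by decide)
        exact final σ (by rw [hs0]; exact hx) (by rw [hs1]; exact h1e) (by rw [hs2]; exact hy)
      · exfalso; nlinarith
      · have hy : lam 2 < 1 := by nlinarith
        obtain ⟨σ, hs0, hs1, hs2⟩ := aux_permex 0 2 1 (by decide) (by decide) (by decide)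
        exact final σ (by rw [hs0]; exact hy) (by rw [hs1]; exact h1e) (by rw [hs2]; exact hx)
    · rcases lt_trichotomy (lam 0) 1 with hx | hx | hx
      · have hy : 1 < lam 2 := by nlinarith
        obtain ⟨σ, hs0, hs1, hs2⟩ := aux_permex 1 0 2 (by decide) (by decide) (by decide)
        exact final σ (by rw [hs0]; exact hx) (by rw [hs1]; exact h1e) (by rw [hs2]; exact hy)
      · exfalso; nlinarith
      · have hy : lam 2 < 1 := by nlinarith
        obtain ⟨σ, hs0, hs1, hs2⟩ := aux_permex 1 2 0 (by decide) (by decide) (by decide)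
        exact final σ (by rw [hs0]; exact hy) (by rw [hs1]; exact h1e) (by rw [hs2]; exact hx)
    · rcases lt_trichotomy (lam 0) 1 with hx | hx | hx
      · have hy : 1 < lam 1 := by nlinarith
        obtain ⟨σ, hs0, hs1, hs2⟩ := aux_permex 2 0 1 (by decide) (by decide) (by decide)
        exact final σ (by rw [hs0]; exact hx) (by rw [hs1]; exact h1e) (by rw [hs2]; exact hy)
      · exfalso; nlinarith
      · have hy : lam 1 < 1 := by nlinarith
        obtain ⟨σ, hs0, hs1, hs2⟩ := aux_permex 2 1 0 (by decide) (by decide) (by decide)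
        exact final σ (by rw [hs0]; exact hy) (by rw [hs1]; exact h1e) (by rw [hs2]; exact hx)
  exact hgoal
end

section
/- Let U be a 3×3 real positive-definite symmetric matrix and ê₁ ∈ ℝ³ a unit vector; set Û = (−I + 2 ê₁⊗ê₁) U (−I + 2 ê₁⊗ê₁) and suppose Û ≠ U. Then there exists a unit vector ê₂, not parallel to ê₁, satisfying Û = (−I + 2 ê₂⊗ê₂) U (−I + 2 ê₂⊗ê₂), if and only if ê₁ is perpendicular to some eigenvector of U. Moreover, when ê₁ is perpendicular to an eigenvector of U, such ê₂ is unique up to sign and is perpendicular both to ê₁ and to that eigenvector. -/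
open Matrix

/-- the symmetrized rank-two matrix `x yᵀ + y xᵀ` -/
def myS (x y : Fin 3 → ℝ) : Matrix (Fin 3) (Fin 3) ℝ :=
  Matrix.of fun i j => x i * y j + y i * x j

/-- an explicit cross product on `Fin 3 → ℝ` -/
def mycr (a b : Fin 3 → ℝ) : Fin 3 → ℝ :=
  ![a 1 * b 2 - a 2 * b 1, a 2 * b 0 - a 0 * b 2, a 0 * b 1 - a 1 * b 0]

lemma mycr_dot_left (a b : Fin 3 → ℝ) : a ⬝ᵥ mycr a b = 0 := by
  simp [mycr, dotProduct, Fin.sum_univ_three]; ring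

lemma mycr_dot_right (a b : Fin 3 → ℝ) : b ⬝ᵥ mycr a b = 0 := by
  simp [mycr, dotProduct, Fin.sum_univ_three]; ring

lemma mycr_dot_self (a b : Fin 3 → ℝ) :
    mycr a b ⬝ᵥ mycr a b = (a ⬝ᵥ a) * (b ⬝ᵥ b) - (a ⬝ᵥ b) ^ 2 := by
  simp [mycr, dotProduct, Fin.sum_univ_three]; ring

lemma refl_mulVec (e x : Fin 3 → ℝ) :
    (reflMat e).mulVec x = (2 * (e ⬝ᵥ x)) • e - x := by
  funext i
  fin_cases i <;>
    simp [reflMat, Matrix.mulVec, dotProduct, Fin.sum_univ_three, Matrix.vecMulVec_apply,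
      Matrix.add_apply, Matrix.neg_apply, Matrix.one_apply, Matrix.smul_apply] <;> ring

lemma myS_mulVec (x y z : Fin 3 → ℝ) :
    (myS x y).mulVec z = (y ⬝ᵥ z) • x + (x ⬝ᵥ z) • y := by
  funext i
  simp [myS, Matrix.mulVec, dotProduct, Fin.sum_univ_three]
  ring

lemma matrix_ext_mulVec {A B : Matrix (Fin 3) (Fin 3) ℝ}
    (h : ∀ x, A.mulVec x = B.mulVec x) : A = B := by
  ext i j
  have := congrFun (h (Pi.single j 1)) i
  simpa [Matrix.mulVec_single] using this

lemma keyExpand (U : Matrix (Fin 3) (Fin 3) ℝ) (hsymm : Uᵀ = U) (e : Fin 3 → ℝ) :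
    reflMat e * U * reflMat e
      = U - (2 : ℝ) • myS e (U.mulVec e - (e ⬝ᵥ U.mulVec e) • e) := by
  have hsd : ∀ x y : Fin 3 → ℝ, x ⬝ᵥ U.mulVec y = U.mulVec x ⬝ᵥ y := by
    intro x y
    rw [dotProduct_mulVec, ← Matrix.mulVec_transpose, hsymm]
  apply matrix_ext_mulVec
  intro x
  rw [← Matrix.mulVec_mulVec, ← Matrix.mulVec_mulVec,
    Matrix.sub_mulVec, Matrix.smul_mulVec, myS_mulVec]
  simp only [refl_mulVec, Matrix.mulVec_sub, Matrix.mulVec_smul]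
  simp only [dotProduct_sub, dotProduct_smul, smul_eq_mul, sub_dotProduct,
    smul_dotProduct, hsd e x]
  module

/-- completeness of an orthonormal pair plus its cross product -/
lemma basisDecomp (e1 e2 : Fin 3 → ℝ) (h1 : e1 ⬝ᵥ e1 = 1) (h2 : e2 ⬝ᵥ e2 = 1)
    (h12 : e1 ⬝ᵥ e2 = 0) (x : Fin 3 → ℝ) :
    x = (e1 ⬝ᵥ x) • e1 + (e2 ⬝ᵥ x) • e2 + (mycr e1 e2 ⬝ᵥ x) • mycr e1 e2 := by
  set w := mycr e1 e2 with hw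
  set A : Matrix (Fin 3) (Fin 3) ℝ := Matrix.of (fun i j => ![e1, e2, w] i j) with hA
  have hw1 := mycr_dot_left e1 e2
  have hw2 := mycr_dot_right e1 e2
  have hww := mycr_dot_self e1 e2
  rw [h1, h2, h12] at hww
  rw [← hw] at hw1 hw2 hww
  simp only [dotProduct, Fin.sum_univ_three] at h1 h2 h12 hw1 hw2 hww
  have hAAT : A * Aᵀ = 1 := by
    ext i j
    fin_cases i <;> fin_cases j <;>
      simp only [hA, Matrix.mul_apply, Matrix.transpose_apply, Matrix.of_apply,
        Fin.sum_univ_three, Matrix.cons_val_zero, Matrix.cons_val_one, Matrix.head_cons,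
        Matrix.cons_val_two, Matrix.tail_cons, Matrix.one_apply] <;>
      norm_num [Fin.ext_iff] <;>
      linarith [h1, h2, h12, hw1, hw2, hww]
  have hB : Aᵀ * A = 1 := mul_eq_one_comm.mp hAAT
  have hmv := congrFun (congrArg Matrix.mulVec hB) x
  rw [Matrix.one_mulVec, ← Matrix.mulVec_mulVec] at hmv
  funext i
  have h := congrFun hmv i
  simp only [hA, Matrix.mulVec, dotProduct, Fin.sum_univ_three, Matrix.transpose_apply,
    Matrix.of_apply, Matrix.cons_val_zero, Matrix.cons_val_one, Matrix.head_cons,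
    Matrix.cons_val_two, Matrix.tail_cons] at h
  simp only [Pi.add_apply, Pi.smul_apply, smul_eq_mul, dotProduct, Fin.sum_univ_three]
  linear_combination h.symm

/-- the central classification -/
lemma core (e1 e2 a1 a2 : Fin 3 → ℝ) (h1 : e1 ⬝ᵥ e1 = 1) (h2 : e2 ⬝ᵥ e2 = 1)
    (ha1 : e1 ⬝ᵥ a1 = 0) (ha2 : e2 ⬝ᵥ a2 = 0) (hna : a1 ≠ 0)
    (hnp : ¬ ∃ c : ℝ, e2 = c • e1)
    (hS : ∀ z, (a1 ⬝ᵥ z) • e1 + (e1 ⬝ᵥ z) • a1 = (a2 ⬝ᵥ z) • e2 + (e2 ⬝ᵥ z) • a2) :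
    e1 ⬝ᵥ e2 = 0 ∧ a1 = (a1 ⬝ᵥ e2) • e2 ∧ a2 = (a1 ⬝ᵥ e2) • e1 ∧ a1 ⬝ᵥ e2 ≠ 0 := by
  have hc1 : a1 ⬝ᵥ e1 = 0 := by rw [dotProduct_comm]; exact ha1
  have hc2 : a2 ⬝ᵥ e2 = 0 := by rw [dotProduct_comm]; exact ha2
  have he21 : e2 ⬝ᵥ e1 = e1 ⬝ᵥ e2 := dotProduct_comm _ _
  have eq1 : a1 = (a2 ⬝ᵥ e1) • e2 + (e1 ⬝ᵥ e2) • a2 := by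
    have h := hS e1
    rw [hc1, h1, he21] at h
    simpa using h
  have eq2 : a2 = (a1 ⬝ᵥ e2) • e1 + (e1 ⬝ᵥ e2) • a1 := by
    have h := hS e2
    rw [hc2, h2] at h
    simpa using h.symm
  have d1 : a2 ⬝ᵥ e1 = a1 ⬝ᵥ e2 := by
    rw [eq2, add_dotProduct, smul_dotProduct, smul_dotProduct, smul_eq_mul, smul_eq_mul,
      h1, hc1]
    ring
  have d2 : (a1 ⬝ᵥ e2) * (e1 ⬝ᵥ e2) = 0 := by
    have h := hc2
    rw [eq2, add_dotProduct, smul_dotProduct, smul_dotProduct, smul_eq_mul, smul_eq_mul] at h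
    linear_combination h / 2
  have h' : a1 = (a1 ⬝ᵥ e2) • e2 + (e1 ⬝ᵥ e2) • ((a1 ⬝ᵥ e2) • e1 + (e1 ⬝ᵥ e2) • a1) := by
    rw [← eq2, ← d1, ← eq1]
  have eqa : (1 - (e1 ⬝ᵥ e2) ^ 2) • a1
      = (a1 ⬝ᵥ e2) • e2 + ((e1 ⬝ᵥ e2) * (a1 ⬝ᵥ e2)) • e1 := by
    calc (1 - (e1 ⬝ᵥ e2) ^ 2) • a1
        = ((a1 ⬝ᵥ e2) • e2 + (e1 ⬝ᵥ e2) • ((a1 ⬝ᵥ e2) • e1 + (e1 ⬝ᵥ e2) • a1))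
            - ((e1 ⬝ᵥ e2) ^ 2) • a1 := by rw [← h']; module
      _ = (a1 ⬝ᵥ e2) • e2 + ((e1 ⬝ᵥ e2) * (a1 ⬝ᵥ e2)) • e1 := by module
  have hτ0 : e1 ⬝ᵥ e2 = 0 := by
    by_contra hτne
    have hγ0 : a1 ⬝ᵥ e2 = 0 := by
      rcases mul_eq_zero.mp d2 with h | h
      · exact h
      · exact absurd h hτne
    rw [hγ0] at eqa
    simp only [zero_smul, mul_zero, add_zero, zero_add] at eqa
    rcases smul_eq_zero.mp eqa with h | h
    · have h2' : (e1 ⬝ᵥ e2) ^ 2 = 1 := by linarith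
      have hd : (e2 - (e1 ⬝ᵥ e2) • e1) ⬝ᵥ (e2 - (e1 ⬝ᵥ e2) • e1) = 0 := by
        simp only [dotProduct_sub, sub_dotProduct, dotProduct_smul, smul_dotProduct,
          smul_eq_mul, h1, h2, he21]
        nlinarith [h2']
      have := dotProduct_self_eq_zero.mp hd
      exact hnp ⟨e1 ⬝ᵥ e2, by rw [← sub_eq_zero]; exact this⟩
    · exact hna h
  have hγne : a1 ⬝ᵥ e2 ≠ 0 := by
    intro hγ0
    apply hna
    have := eqa
    rw [hτ0, hγ0] at this
    simpa using this
  refine ⟨hτ0, ?_, ?_, hγne⟩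
  · have := eqa
    rw [hτ0] at this
    simpa using this
  · rw [eq2, hτ0]; simp

theorem stmt_4 (U : Matrix (Fin 3) (Fin 3) ℝ) (e1 : Fin 3 → ℝ)
    (hU : U.PosDef) (he1 : e1 ⬝ᵥ e1 = 1)
    (Uhat : Matrix (Fin 3) (Fin 3) ℝ)
    (hUhat : Uhat = reflMat e1 * U * reflMat e1)
    (hne : Uhat ≠ U) :
    -- existence of a second non-parallel unit vector ê₂ iff ê₁ ⊥ some eigenvector of U
    ((∃ e2 : Fin 3 → ℝ, e2 ⬝ᵥ e2 = 1 ∧ (¬ ∃ c : ℝ, e2 = c • e1) ∧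
        Uhat = reflMat e2 * U * reflMat e2)
      ↔ (∃ (v : Fin 3 → ℝ) (μ : ℝ), v ≠ 0 ∧ U.mulVec v = μ • v ∧ e1 ⬝ᵥ v = 0))
    -- moreover, when ê₁ ⊥ an eigenvector v of U, such ê₂ is unique up to sign
    -- and is perpendicular to both ê₁ and v
    ∧ (∀ (v : Fin 3 → ℝ) (μ : ℝ), v ≠ 0 → U.mulVec v = μ • v → e1 ⬝ᵥ v = 0 →
        (∀ e2 : Fin 3 → ℝ, e2 ⬝ᵥ e2 = 1 → (¬ ∃ c : ℝ, e2 = c • e1) →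
          Uhat = reflMat e2 * U * reflMat e2 →
          e2 ⬝ᵥ e1 = 0 ∧ e2 ⬝ᵥ v = 0) ∧
        (∀ e2 e2' : Fin 3 → ℝ,
          e2 ⬝ᵥ e2 = 1 → (¬ ∃ c : ℝ, e2 = c • e1) →
            Uhat = reflMat e2 * U * reflMat e2 →
          e2' ⬝ᵥ e2' = 1 → (¬ ∃ c : ℝ, e2' = c • e1) →
            Uhat = reflMat e2' * U * reflMat e2' →
          e2' = e2 ∨ e2' = -e2)) := by
  have hsymm : Uᵀ = U := by
    ext i j
    simpa using congrFun (congrFun hU.1 i) j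
  have hsd : ∀ x y : Fin 3 → ℝ, x ⬝ᵥ U.mulVec y = U.mulVec x ⬝ᵥ y := by
    intro x y
    rw [dotProduct_mulVec, ← Matrix.mulVec_transpose, hsymm]
  obtain ⟨a1, ha1def⟩ : ∃ a, U.mulVec e1 - (e1 ⬝ᵥ U.mulVec e1) • e1 = a := ⟨_, rfl⟩
  have hUe1 : U.mulVec e1 = (e1 ⬝ᵥ U.mulVec e1) • e1 + a1 := by
    rw [← ha1def]; module
  have ha1e : e1 ⬝ᵥ a1 = 0 := by
    rw [← ha1def]
    simp [dotProduct_sub, dotProduct_smul, he1]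
  have hkey : ∀ e : Fin 3 → ℝ, reflMat e * U * reflMat e
      = U - (2 : ℝ) • myS e (U.mulVec e - (e ⬝ᵥ U.mulVec e) • e) := keyExpand U hsymm
  -- hne means a1 ≠ 0
  have hane : a1 ≠ 0 := by
    intro h0
    apply hne
    rw [hUhat, hkey e1, ha1def, h0]
    have : myS e1 (0 : Fin 3 → ℝ) = 0 := by ext i j; simp [myS]
    rw [this]
    simp
  -- the equation characterization
  have hiffS : ∀ e2 : Fin 3 → ℝ, (Uhat = reflMat e2 * U * reflMat e2)
      ↔ myS e1 a1 = myS e2 (U.mulVec e2 - (e2 ⬝ᵥ U.mulVec e2) • e2) := by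
    intro e2
    rw [hUhat, hkey e1, ha1def, hkey e2]
    constructor
    · intro h
      have h2 := sub_right_inj.mp h
      exact smul_right_injective (Matrix (Fin 3) (Fin 3) ℝ) (two_ne_zero) h2
    · intro h; rw [h]
  -- eigenvectors perpendicular to e1 are perpendicular to a1
  have hva : ∀ (v : Fin 3 → ℝ) (μ : ℝ), U.mulVec v = μ • v → e1 ⬝ᵥ v = 0 →
      a1 ⬝ᵥ v = 0 := by
    intro v μ heig hperp
    rw [← ha1def, sub_dotProduct, smul_dotProduct, smul_eq_mul]
    rw [show U.mulVec e1 ⬝ᵥ v = e1 ⬝ᵥ U.mulVec v from (hsd e1 v).symm, heig,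
      dotProduct_smul, smul_eq_mul, hperp]
    ring
  -- what every solution looks like
  have hsolve : ∀ e2 : Fin 3 → ℝ, e2 ⬝ᵥ e2 = 1 → (¬ ∃ c : ℝ, e2 = c • e1) →
      Uhat = reflMat e2 * U * reflMat e2 →
      e1 ⬝ᵥ e2 = 0 ∧ a1 = (a1 ⬝ᵥ e2) • e2 ∧
        (U.mulVec e2 - (e2 ⬝ᵥ U.mulVec e2) • e2) = (a1 ⬝ᵥ e2) • e1 ∧ a1 ⬝ᵥ e2 ≠ 0 := by
    intro e2 h2 hnp heq
    have hSmat := (hiffS e2).mp heq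
    have hSvec : ∀ z, (a1 ⬝ᵥ z) • e1 + (e1 ⬝ᵥ z) • a1
        = ((U.mulVec e2 - (e2 ⬝ᵥ U.mulVec e2) • e2) ⬝ᵥ z) • e2
          + (e2 ⬝ᵥ z) • (U.mulVec e2 - (e2 ⬝ᵥ U.mulVec e2) • e2) := by
      intro z
      have := congrFun (congrArg Matrix.mulVec hSmat) z
      rwa [myS_mulVec, myS_mulVec] at this
    have ha2e : e2 ⬝ᵥ (U.mulVec e2 - (e2 ⬝ᵥ U.mulVec e2) • e2) = 0 := by
      simp [dotProduct_sub, dotProduct_smul, h2]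
    exact core e1 e2 a1 _ he1 h2 ha1e ha2e hane hnp hSvec
  constructor
  · constructor
    · -- existence of e2 implies existence of an eigenvector ⊥ e1
      rintro ⟨e2, h2, hnp, heq⟩
      obtain ⟨hτ, hsa, hsa2, hγ⟩ := hsolve e2 h2 hnp heq
      set w := mycr e1 e2 with hw
      have hww : w ⬝ᵥ w = 1 := by
        rw [hw, mycr_dot_self, he1, h2, hτ]; ring
      have hwne : w ≠ 0 := by
        intro h0
        rw [h0] at hww
        simp at hww
      have he1w : e1 ⬝ᵥ w = 0 := mycr_dot_left e1 e2
      have he2w : e2 ⬝ᵥ w = 0 := mycr_dot_right e1 e2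
      have hUe2 : U.mulVec e2 = (e2 ⬝ᵥ U.mulVec e2) • e2 + (a1 ⬝ᵥ e2) • e1 := by
        rw [← hsa2]; module
      have c1 : e1 ⬝ᵥ U.mulVec w = 0 := by
        rw [hsd e1 w, hUe1, add_dotProduct, smul_dotProduct, smul_eq_mul, he1w,
          show a1 ⬝ᵥ w = 0 from by rw [hsa, smul_dotProduct, smul_eq_mul, he2w]; ring]
        ring
      have c2 : e2 ⬝ᵥ U.mulVec w = 0 := by
        rw [hsd e2 w, hUe2, add_dotProduct, smul_dotProduct, smul_dotProduct,
          smul_eq_mul, smul_eq_mul, he1w, he2w]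
        ring
      have hdec := basisDecomp e1 e2 he1 h2 hτ (U.mulVec w)
      rw [c1, c2, ← hw] at hdec
      simp only [zero_smul, zero_add] at hdec
      exact ⟨w, w ⬝ᵥ U.mulVec w, hwne, hdec, he1w⟩
    · -- an eigenvector ⊥ e1 gives a solution e2
      rintro ⟨v, μ, hv0, heig, hperp⟩
      have hav : a1 ⬝ᵥ v = 0 := hva v μ heig hperp
      have hnn : (0:ℝ) ≤ a1 ⬝ᵥ a1 := Finset.sum_nonneg fun i _ => mul_self_nonneg _
      have hpos : 0 < a1 ⬝ᵥ a1 :=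
        lt_of_le_of_ne hnn (fun h => hane (dotProduct_self_eq_zero.mp h.symm))
      set r := Real.sqrt (a1 ⬝ᵥ a1) with hr
      have hr2 : r * r = a1 ⬝ᵥ a1 := Real.mul_self_sqrt hnn
      have hrpos : 0 < r := Real.sqrt_pos.mpr hpos
      set e2 : Fin 3 → ℝ := r⁻¹ • a1 with he2def
      have h2 : e2 ⬝ᵥ e2 = 1 := by
        rw [he2def, smul_dotProduct, dotProduct_smul, smul_eq_mul, smul_eq_mul, ← hr2]
        field_simp
      have hτ : e1 ⬝ᵥ e2 = 0 := by
        rw [he2def, dotProduct_smul, smul_eq_mul, ha1e]; ring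
      have ha1e2 : a1 = r • e2 := by
        rw [he2def, smul_smul, mul_inv_cancel₀ hrpos.ne', one_smul]
      have hnp : ¬ ∃ c : ℝ, e2 = c • e1 := by
        rintro ⟨c, hc⟩
        have hcc : c = 0 := by
          have := hτ
          rw [hc, dotProduct_smul, smul_eq_mul, he1] at this
          simpa using this
        rw [hcc, zero_smul] at hc
        rw [hc] at h2
        simp at h2
      -- v is parallel to w = e1 × e2
      set w := mycr e1 e2 with hw
      have he1w : e1 ⬝ᵥ w = 0 := mycr_dot_left e1 e2
      have he2w : e2 ⬝ᵥ w = 0 := mycr_dot_right e1 e2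
      have he2v : e2 ⬝ᵥ v = 0 := by
        rw [he2def, smul_dotProduct, smul_eq_mul, hav]; ring
      have hdecv := basisDecomp e1 e2 he1 h2 hτ v
      rw [hperp, he2v, ← hw] at hdecv
      simp only [zero_smul, zero_add] at hdecv
      have hwv : w ⬝ᵥ v ≠ 0 := by
        intro h0
        rw [h0, zero_smul] at hdecv
        exact hv0 hdecv
      have hUw : U.mulVec w = μ • w := by
        have h := heig
        rw [hdecv, Matrix.mulVec_smul] at h
        have h2' : (w ⬝ᵥ v) • U.mulVec w = (w ⬝ᵥ v) • (μ • w) := by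
          rw [h, smul_comm]
        exact smul_right_injective (Fin 3 → ℝ) hwv h2'
      -- compute U e2
      have c1 : e1 ⬝ᵥ U.mulVec e2 = r := by
        rw [hsd e1 e2, hUe1, add_dotProduct, smul_dotProduct, smul_eq_mul, hτ,
          ha1e2, smul_dotProduct, smul_eq_mul, h2]
        ring
      have c3 : w ⬝ᵥ U.mulVec e2 = 0 := by
        rw [hsd w e2, hUw, smul_dotProduct, smul_eq_mul,
          show w ⬝ᵥ e2 = 0 from by rw [dotProduct_comm]; exact he2w]
        ring
      have hdecU := basisDecomp e1 e2 he1 h2 hτ (U.mulVec e2)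
      rw [c1, c3, ← hw] at hdecU
      simp only [zero_smul, add_zero] at hdecU
      refine ⟨e2, h2, hnp, (hiffS e2).mpr ?_⟩
      have ha2 : U.mulVec e2 - (e2 ⬝ᵥ U.mulVec e2) • e2 = r • e1 := by
        nth_rewrite 1 [hdecU]
        module
      rw [ha2, ha1e2]
      ext i j
      simp [myS]
      ring
  · -- moreover part
    intro v μ hv0 heig hperp
    have hav : a1 ⬝ᵥ v = 0 := hva v μ heig hperp
    constructor
    · intro e2 h2 hnp heq
      obtain ⟨hτ, hsa, _, hγ⟩ := hsolve e2 h2 hnp heq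
      refine ⟨by rw [dotProduct_comm]; exact hτ, ?_⟩
      have := hav
      rw [hsa, smul_dotProduct, smul_eq_mul] at this
      rcases mul_eq_zero.mp this with h | h
      · exact absurd h hγ
      · exact h
    · intro e2 e2' h2 hnp heq h2' hnp' heq'
      obtain ⟨hτ, hsa, _, hγ⟩ := hsolve e2 h2 hnp heq
      obtain ⟨hτ', hsa', _, hγ'⟩ := hsolve e2' h2' hnp' heq'
      set γ := a1 ⬝ᵥ e2 with hγdef
      set γ' := a1 ⬝ᵥ e2' with hγ'def
      have hkeyv : γ • e2 = γ' • e2' := by rw [← hsa, ← hsa']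
      have hsq : γ * γ = γ' * γ' := by
        have := congrArg (fun u => u ⬝ᵥ u) hkeyv
        simp only [smul_dotProduct, dotProduct_smul, smul_eq_mul, h2, h2'] at this
        calc γ * γ = γ * (γ * 1) := by ring
          _ = γ' * (γ' * 1) := this
          _ = γ' * γ' := by ring
      have he2' : e2' = (γ'⁻¹ * γ) • e2 := by
        have : γ'⁻¹ • (γ' • e2') = γ'⁻¹ • (γ • e2) := by rw [hkeyv]
        rw [smul_smul, inv_mul_cancel₀ hγ', one_smul, smul_smul] at this
        exact this
      rcases mul_self_eq_mul_self_iff.mp hsq with h | h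
      · left
        rw [he2', h, inv_mul_cancel₀ hγ', one_smul]
      · right
        rw [he2', h]
        have hm : γ'⁻¹ * -γ' = -1 := by
          field_simp
        rw [hm]
        funext i
        simp
end

section
/- Let U be a 3×3 real positive-definite symmetric matrix, v a unit eigenvector of U, and ê₁ a unit vector with ê₁ · v = 0; set ê₂ = v × ê₁ (cross product) and Û = (−I + 2 ê₁⊗ê₁) U (−I + 2 ê₁⊗ê₁), and assume Û ≠ U. Define n_C¹ = ê₁ and a_C¹ = ξ U ê₂ where ξ = 2 (ê₂ · U⁻²ê₁)/(ê₁ · U⁻²ê₁), and define n_C² = ê₂ and a_C² = η U ê₁ where η = −2 (ê₂ · U²ê₁)/(ê₁ · U²ê₁). Then there exist R₁, R₂ ∈ SO(3) such that R₁ Û = U + a_C¹ ⊗ n_C¹ and R₂ Û = U + a_C² ⊗ n_C², and moreover a_C¹ ⊗ n_C¹ ≠ a_C² ⊗ n_C². -/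
open Matrix

private lemma vmv_mulVec (a n x : Fin 3 → ℝ) : (vecMulVec a n).mulVec x = (n ⬝ᵥ x) • a := by
  funext i
  simp only [mulVec, vecMulVec, of_apply, dotProduct, Pi.smul_apply, smul_eq_mul, Finset.sum_mul]
  exact Finset.sum_congr rfl fun j _ => by ring

private lemma mul_vmv (M : Matrix (Fin 3) (Fin 3) ℝ) (a n : Fin 3 → ℝ) :
    M * vecMulVec a n = vecMulVec (M.mulVec a) n := by
  ext i j
  simp only [mul_apply, vecMulVec, of_apply, mulVec, dotProduct, Finset.sum_mul]
  exact Finset.sum_congr rfl fun k _ => by ring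

private lemma vmv_transpose (a n : Fin 3 → ℝ) : (vecMulVec a n)ᵀ = vecMulVec n a := by
  ext i j; simp [vecMulVec, mul_comm]

private lemma det_one_add_vmv (c n : Fin 3 → ℝ) : (1 + vecMulVec c n).det = 1 + c ⬝ᵥ n := by
  simp [Matrix.det_fin_three, vecMulVec, dotProduct, Fin.sum_univ_three, Matrix.one_apply]
  ring

private lemma eq_of_basis {v e1 e2 : Fin 3 → ℝ}
    (hcomp : vecMulVec v v + vecMulVec e1 e1 + vecMulVec e2 e2 = 1)
    {M N : Matrix (Fin 3) (Fin 3) ℝ}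
    (h1 : M.mulVec v = N.mulVec v) (h2 : M.mulVec e1 = N.mulVec e1)
    (h3 : M.mulVec e2 = N.mulVec e2) : M = N := by
  have key : M * (vecMulVec v v + vecMulVec e1 e1 + vecMulVec e2 e2)
      = N * (vecMulVec v v + vecMulVec e1 e1 + vecMulVec e2 e2) := by
    simp only [mul_add, mul_vmv, h1, h2, h3]
  rw [hcomp, mul_one, mul_one] at key
  exact key

private lemma exists_rot (U Uhat P N : Matrix (Fin 3) (Fin 3) ℝ)
    (hdetU : IsUnit U.det)
    (hP2 : P * P = 1) (hPt : Pᵀ = P) (hUt : Uᵀ = U)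
    (hUhat : Uhat = P * U * P)
    (hK : Nᵀ * N = P * (U * U) * P)
    (hdet : N.det = U.det) :
    ∃ R, SO3 R ∧ R * Uhat = N := by
  have hUinv : U⁻¹ * U = 1 := nonsing_inv_mul U hdetU
  have hUinv' : U * U⁻¹ = 1 := mul_nonsing_inv U hdetU
  have hPP : ∀ M : Matrix (Fin 3) (Fin 3) ℝ, P * (P * M) = M := fun M => by
    rw [← Matrix.mul_assoc, hP2, Matrix.one_mul]
  have hU1 : ∀ M : Matrix (Fin 3) (Fin 3) ℝ, U⁻¹ * (U * M) = M := fun M => by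
    rw [← Matrix.mul_assoc, hUinv, Matrix.one_mul]
  have hU2 : ∀ M : Matrix (Fin 3) (Fin 3) ℝ, U * (U⁻¹ * M) = M := fun M => by
    rw [← Matrix.mul_assoc, hUinv', Matrix.one_mul]
  have hKc : ∀ M : Matrix (Fin 3) (Fin 3) ℝ, Nᵀ * (N * M) = P * (U * (U * (P * M))) := by
    intro M
    rw [← Matrix.mul_assoc, hK]
    simp only [Matrix.mul_assoc]
  refine ⟨N * P * U⁻¹ * P, ⟨?_, ?_⟩, ?_⟩
  · rw [mul_eq_one_comm]
    have ht : (N * P * U⁻¹ * P)ᵀ = P * (U⁻¹ * (P * Nᵀ)) := by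
      simp only [Matrix.transpose_mul, Matrix.transpose_nonsing_inv, hPt, hUt, Matrix.mul_assoc]
    rw [ht]
    simp only [Matrix.mul_assoc]
    rw [hKc, hPP, hPP, hU1, hU2, hP2]
  · have hPdet : P.det * P.det = 1 := by rw [← Matrix.det_mul, hP2, Matrix.det_one]
    have hUne : U.det ≠ 0 := IsUnit.ne_zero hdetU
    simp only [Matrix.det_mul, hdet, Matrix.det_nonsing_inv, Ring.inverse_eq_inv']
    field_simp
    linarith [hPdet]
  · rw [hUhat]
    simp only [Matrix.mul_assoc]
    rw [hPP, hU1, hP2, Matrix.mul_one]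

set_option maxHeartbeats 2000000 in
theorem stmt_5 (U : Matrix (Fin 3) (Fin 3) ℝ) (v e1 e2 : Fin 3 → ℝ) (μ : ℝ)
    (hU : U.PosDef) (hv : v ⬝ᵥ v = 1) (hvEig : U.mulVec v = μ • v)
    (he1 : e1 ⬝ᵥ e1 = 1) (hperp : e1 ⬝ᵥ v = 0)
    (he2 : e2 = crossProduct v e1)
    (Uhat : Matrix (Fin 3) (Fin 3) ℝ)
    (hUhat : Uhat = reflMat e1 * U * reflMat e1)
    (hne : Uhat ≠ U)
    (ξ η : ℝ)
    (hξ : ξ = 2 * (e2 ⬝ᵥ (U⁻¹ * U⁻¹).mulVec e1) / (e1 ⬝ᵥ (U⁻¹ * U⁻¹).mulVec e1))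
    (hη : η = -2 * (e2 ⬝ᵥ (U * U).mulVec e1) / (e1 ⬝ᵥ (U * U).mulVec e1))
    (nC1 aC1 nC2 aC2 : Fin 3 → ℝ)
    (hn1 : nC1 = e1) (ha1 : aC1 = ξ • U.mulVec e2)
    (hn2 : nC2 = e2) (ha2 : aC2 = η • U.mulVec e1) :
    (∃ R1 : Matrix (Fin 3) (Fin 3) ℝ, SO3 R1 ∧
        R1 * Uhat = U + Matrix.vecMulVec aC1 nC1) ∧
    (∃ R2 : Matrix (Fin 3) (Fin 3) ℝ, SO3 R2 ∧
        R2 * Uhat = U + Matrix.vecMulVec aC2 nC2) ∧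
    Matrix.vecMulVec aC1 nC1 ≠ Matrix.vecMulVec aC2 nC2 := by
  -- dot product facts for the orthonormal basis (v, e1, e2)
  have hve1 : v ⬝ᵥ e1 = 0 := by rw [dotProduct_comm]; exact hperp
  have hcross : e2 ⬝ᵥ e2 = 1 ∧ e2 ⬝ᵥ v = 0 ∧ e2 ⬝ᵥ e1 = 0 := by
    simp only [dotProduct, Fin.sum_univ_three] at hv he1 hperp ⊢
    subst he2
    simp only [cross_apply, Matrix.cons_val_zero, Matrix.cons_val_one, Matrix.head_cons,
      Matrix.cons_val_two, Matrix.tail_cons]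
    refine ⟨?_, by ring, by ring⟩
    nlinarith [hv, he1, hperp, sq_nonneg (v 0), sq_nonneg (e1 0)]
  obtain ⟨he2e2, he2v, he2e1⟩ := hcross
  have hve2 : v ⬝ᵥ e2 = 0 := by rw [dotProduct_comm]; exact he2v
  have he1e2 : e1 ⬝ᵥ e2 = 0 := by rw [dotProduct_comm]; exact he2e1
  -- completeness of the basis
  have hcomp : vecMulVec v v + vecMulVec e1 e1 + vecMulVec e2 e2 = 1 := by
    have hv' := hv; have he1' := he1; have he2' := he2e2
    have hve1' := hve1; have he2v' := he2v; have he2e1' := he2e1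
    simp only [dotProduct, Fin.sum_univ_three] at hv' he1' he2' hve1' he2v' he2e1'
    have h2 : (⟨2, by omega⟩ : Fin 3) = 2 := rfl
    have hG : (Matrix.of ![v, e1, e2]) * (Matrix.of ![v, e1, e2])ᵀ = 1 := by
      ext i j
      fin_cases i <;> fin_cases j <;>
        simp only [Matrix.mul_apply, Matrix.transpose_apply, Matrix.of_apply, Fin.sum_univ_three,
          Fin.mk_zero, Fin.mk_one, h2,
          Matrix.cons_val_zero, Matrix.cons_val_one, Matrix.head_cons, Matrix.cons_val_two,
          Matrix.tail_cons, Matrix.one_apply] <;>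
        norm_num [Fin.ext_iff] <;>
        first
          | linear_combination hv'
          | linear_combination he1'
          | linear_combination he2'
          | linear_combination hve1'
          | linear_combination he2v'
          | linear_combination he2e1'
    have hGt : (Matrix.of ![v, e1, e2])ᵀ * (Matrix.of ![v, e1, e2]) = 1 :=
      mul_eq_one_comm.mp hG
    ext i j
    have h := congrFun (congrFun hGt i) j
    simp only [Matrix.mul_apply, Matrix.transpose_apply, Matrix.of_apply, Fin.sum_univ_three,
      Matrix.cons_val_zero, Matrix.cons_val_one, Matrix.head_cons, Matrix.cons_val_two,
      Matrix.tail_cons] at h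
    simp only [Matrix.add_apply, vecMulVec_apply]
    rw [← h]
  -- U is symmetric
  have hUt : Uᵀ = U := by
    rw [← Matrix.conjTranspose_eq_transpose_of_trivial U]; exact hU.1
  have hsymm : ∀ x y : Fin 3 → ℝ, x ⬝ᵥ U.mulVec y = y ⬝ᵥ U.mulVec x := by
    intro x y
    rw [Matrix.dotProduct_mulVec, ← Matrix.mulVec_transpose, hUt, dotProduct_comm]
  have hpos : ∀ x : Fin 3 → ℝ, x ≠ 0 → 0 < x ⬝ᵥ U.mulVec x := by
    intro x hx
    have := hU.dotProduct_mulVec_pos hx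
    simpa using this
  have he1ne : e1 ≠ 0 := by intro h; rw [h] at he1; simp at he1
  have he2ne : e2 ≠ 0 := by intro h; rw [h] at he2e2; simp at he2e2
  -- block scalars
  set α : ℝ := e1 ⬝ᵥ U.mulVec e1 with hαdef
  set β : ℝ := e2 ⬝ᵥ U.mulVec e1 with hβdef
  set δ : ℝ := e2 ⬝ᵥ U.mulVec e2 with hδdef
  -- orthonormal expansion
  have hexpand : ∀ x : Fin 3 → ℝ,
      x = (v ⬝ᵥ x) • v + (e1 ⬝ᵥ x) • e1 + (e2 ⬝ᵥ x) • e2 := by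
    intro x
    have h1 : (1 : Matrix (Fin 3) (Fin 3) ℝ).mulVec x = x := one_mulVec x
    rw [← hcomp] at h1
    simp only [Matrix.add_mulVec, vmv_mulVec] at h1
    exact h1.symm
  have hUe1 : U.mulVec e1 = α • e1 + β • e2 := by
    have h := hexpand (U.mulVec e1)
    rw [show v ⬝ᵥ U.mulVec e1 = 0 by
      rw [hsymm, hvEig, dotProduct_smul, hperp]; simp] at h
    rw [← hαdef, ← hβdef] at h
    simpa using h
  have hUe2 : U.mulVec e2 = β • e1 + δ • e2 := by
    have h := hexpand (U.mulVec e2)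
    rw [show v ⬝ᵥ U.mulVec e2 = 0 by
      rw [hsymm, hvEig, dotProduct_smul, he2v]; simp] at h
    rw [show e1 ⬝ᵥ U.mulVec e2 = β by rw [hsymm, ← hβdef]] at h
    rw [← hδdef] at h
    simpa using h
  -- positivity facts
  have hα_pos : 0 < α := by rw [hαdef]; exact hpos e1 he1ne
  have hδ_pos : 0 < δ := by rw [hδdef]; exact hpos e2 he2ne
  have hd_pos : 0 < α * δ - β * β := by
    have hxne : (δ • e1 + (-β) • e2) ≠ 0 := by
      intro h
      have h' : e1 ⬝ᵥ (δ • e1 + (-β) • e2) = δ := by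
        simp [dotProduct_add, dotProduct_smul, he1, he1e2]
      rw [h] at h'
      simp at h'
      exact (ne_of_gt hδ_pos) h'.symm
    have hx : U.mulVec (δ • e1 + (-β) • e2) = (α * δ - β * β) • e1 := by
      rw [Matrix.mulVec_add, Matrix.mulVec_smul, Matrix.mulVec_smul, hUe1, hUe2]
      match_scalars <;> ring
    have h1 := hpos _ hxne
    rw [hx] at h1
    have h2 : (δ • e1 + (-β) • e2) ⬝ᵥ ((α * δ - β * β) • e1) = (α * δ - β * β) * δ := by
      simp [dotProduct_smul, add_dotProduct, smul_dotProduct, he1, he2e1] <;> ring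
    rw [h2] at h1
    nlinarith [hδ_pos]
  -- the reflection P
  set P : Matrix (Fin 3) (Fin 3) ℝ := reflMat e1 with hPdef
  have hPx : ∀ x : Fin 3 → ℝ, P.mulVec x = -x + (2 * (e1 ⬝ᵥ x)) • e1 := by
    intro x
    rw [hPdef]
    simp only [reflMat, Matrix.add_mulVec, Matrix.neg_mulVec, Matrix.one_mulVec,
      Matrix.smul_mulVec, vmv_mulVec, smul_smul]
  have hPv : P.mulVec v = -v := by rw [hPx, hperp]; module
  have hPe1 : P.mulVec e1 = e1 := by rw [hPx, he1]; module
  have hPe2 : P.mulVec e2 = -e2 := by rw [hPx, he1e2]; module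
  have hPt : Pᵀ = P := by
    rw [hPdef]
    simp only [reflMat, Matrix.transpose_add, Matrix.transpose_neg, Matrix.transpose_one,
      Matrix.transpose_smul, vmv_transpose]
  have hP2 : P * P = 1 := by
    apply eq_of_basis hcomp
    · rw [← Matrix.mulVec_mulVec, hPv, Matrix.mulVec_neg, hPv, Matrix.one_mulVec, neg_neg]
    · rw [← Matrix.mulVec_mulVec, hPe1, hPe1, Matrix.one_mulVec]
    · rw [← Matrix.mulVec_mulVec, hPe2, Matrix.mulVec_neg, hPe2, Matrix.one_mulVec, neg_neg]
  -- inverse facts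
  have hUdet : IsUnit U.det := isUnit_iff_ne_zero.mpr (ne_of_gt hU.det_pos)
  have hUiU : U⁻¹ * U = 1 := nonsing_inv_mul U hUdet
  have hinv : ∀ x y : Fin 3 → ℝ, U.mulVec x = y → U⁻¹.mulVec y = x := by
    intro x y h
    rw [← h, Matrix.mulVec_mulVec, hUiU, Matrix.one_mulVec]
  set d : ℝ := α * δ - β * β with hddef
  have hdne : d ≠ 0 := ne_of_gt hd_pos
  have hUinv_e1 : U⁻¹.mulVec e1 = (d⁻¹ * δ) • e1 + (d⁻¹ * (-β)) • e2 := by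
    apply hinv
    rw [Matrix.mulVec_add, Matrix.mulVec_smul, Matrix.mulVec_smul, hUe1, hUe2]
    match_scalars
    · field_simp
      linear_combination hddef
    · ring
  have hUinv_e2 : U⁻¹.mulVec e2 = (d⁻¹ * (-β)) • e1 + (d⁻¹ * α) • e2 := by
    apply hinv
    rw [Matrix.mulVec_add, Matrix.mulVec_smul, Matrix.mulVec_smul, hUe1, hUe2]
    match_scalars
    · ring
    · field_simp
      linear_combination hddef
  have hUUinv_e1 : (U⁻¹ * U⁻¹).mulVec e1
      = (d⁻¹ * d⁻¹ * (δ * δ + β * β)) • e1 + (d⁻¹ * d⁻¹ * (-(β * (δ + α)))) • e2 := by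
    rw [← Matrix.mulVec_mulVec, hUinv_e1, Matrix.mulVec_add, Matrix.mulVec_smul,
      Matrix.mulVec_smul, hUinv_e1, hUinv_e2]
    match_scalars <;> ring
  have hUU_e1 : (U * U).mulVec e1
      = (α * α + β * β) • e1 + (α * β + β * δ) • e2 := by
    rw [← Matrix.mulVec_mulVec, hUe1, Matrix.mulVec_add, Matrix.mulVec_smul,
      Matrix.mulVec_smul, hUe1, hUe2]
    match_scalars <;> ring
  -- the scalar relations for ξ and η
  have hCpos : 0 < β * β + δ * δ := by nlinarith [hδ_pos]
  have hApos : 0 < α * α + β * β := by nlinarith [hα_pos]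
  have hCne : β * β + δ * δ ≠ 0 := ne_of_gt hCpos
  have hAne : α * α + β * β ≠ 0 := ne_of_gt hApos
  have hξC : ξ * (β * β + δ * δ) = -(2 * (α * β + β * δ)) := by
    rw [hξ, hUUinv_e1]
    rw [show e2 ⬝ᵥ ((d⁻¹ * d⁻¹ * (δ * δ + β * β)) • e1 + (d⁻¹ * d⁻¹ * (-(β * (δ + α)))) • e2)
        = d⁻¹ * d⁻¹ * (-(β * (δ + α))) by
      simp [dotProduct_add, dotProduct_smul, he2e1, he2e2]]
    rw [show e1 ⬝ᵥ ((d⁻¹ * d⁻¹ * (δ * δ + β * β)) • e1 + (d⁻¹ * d⁻¹ * (-(β * (δ + α)))) • e2)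
        = d⁻¹ * d⁻¹ * (δ * δ + β * β) by
      simp [dotProduct_add, dotProduct_smul, he1, he1e2]]
    have hC' : δ * δ + β * β ≠ 0 := by intro h; apply hCne; linarith
    field_simp
    ring
  have hηA : η * (α * α + β * β) = -(2 * (α * β + β * δ)) := by
    rw [hη, hUU_e1]
    rw [show e2 ⬝ᵥ ((α * α + β * β) • e1 + (α * β + β * δ) • e2) = α * β + β * δ by
      simp [dotProduct_add, dotProduct_smul, he2e1, he2e2]]
    rw [show e1 ⬝ᵥ ((α * α + β * β) • e1 + (α * β + β * δ) • e2) = α * α + β * β by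
      simp [dotProduct_add, dotProduct_smul, he1, he1e2]]
    field_simp
  -- expansions of a_C1, a_C2
  have hA1 : aC1 = (ξ * β) • e1 + (ξ * δ) • e2 := by
    rw [ha1, hUe2]; match_scalars <;> ring
  have hA2 : aC2 = (η * α) • e1 + (η * β) • e2 := by
    rw [ha2, hUe1]; match_scalars <;> ring
  -- the key quadratic identities
  have hK1 : (U + vecMulVec aC1 nC1)ᵀ * (U + vecMulVec aC1 nC1) = P * (U * U) * P := by
    rw [hn1, Matrix.transpose_add, hUt, vmv_transpose]
    apply eq_of_basis hcomp
    · simp only [← Matrix.mulVec_mulVec]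
      simp only [Matrix.add_mulVec, vmv_mulVec, hA1, hUe1, hUe2, hvEig, hPv, hPe1, hPe2,
        Matrix.mulVec_add, Matrix.mulVec_smul, Matrix.mulVec_neg, dotProduct_add,
        dotProduct_smul, dotProduct_neg, add_dotProduct, smul_dotProduct, neg_dotProduct, hperp, hve1, hve2, he1e2, he2e1, he2v, hv, he1, he2e2,
        smul_eq_mul]
      match_scalars <;> ring
    · simp only [← Matrix.mulVec_mulVec]
      simp only [Matrix.add_mulVec, vmv_mulVec, hA1, hUe1, hUe2, hvEig, hPv, hPe1, hPe2,
        Matrix.mulVec_add, Matrix.mulVec_smul, Matrix.mulVec_neg, dotProduct_add,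
        dotProduct_smul, dotProduct_neg, add_dotProduct, smul_dotProduct, neg_dotProduct, hperp, hve1, hve2, he1e2, he2e1, he2v, hv, he1, he2e2,
        smul_eq_mul]
      match_scalars <;>
        first
          | ring1
          | linear_combination hξC
          | linear_combination ξ * hξC
          | linear_combination (ξ * β) * hξC
          | linear_combination (ξ * δ) * hξC
    · simp only [← Matrix.mulVec_mulVec]
      simp only [Matrix.add_mulVec, vmv_mulVec, hA1, hUe1, hUe2, hvEig, hPv, hPe1, hPe2,
        Matrix.mulVec_add, Matrix.mulVec_smul, Matrix.mulVec_neg, dotProduct_add,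
        dotProduct_smul, dotProduct_neg, add_dotProduct, smul_dotProduct, neg_dotProduct, hperp, hve1, hve2, he1e2, he2e1, he2v, hv, he1, he2e2,
        smul_eq_mul]
      match_scalars <;>
        first
          | ring1
          | linear_combination hξC
          | linear_combination ξ * hξC
          | linear_combination (ξ * β) * hξC
          | linear_combination (ξ * δ) * hξC
  have hK2 : (U + vecMulVec aC2 nC2)ᵀ * (U + vecMulVec aC2 nC2) = P * (U * U) * P := by
    rw [hn2, Matrix.transpose_add, hUt, vmv_transpose]
    apply eq_of_basis hcomp
    · simp only [← Matrix.mulVec_mulVec]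
      simp only [Matrix.add_mulVec, vmv_mulVec, hA2, hUe1, hUe2, hvEig, hPv, hPe1, hPe2,
        Matrix.mulVec_add, Matrix.mulVec_smul, Matrix.mulVec_neg, dotProduct_add,
        dotProduct_smul, dotProduct_neg, add_dotProduct, smul_dotProduct, neg_dotProduct, hperp, hve1, hve2, he1e2, he2e1, he2v, hv, he1, he2e2,
        smul_eq_mul]
      match_scalars <;> ring
    · simp only [← Matrix.mulVec_mulVec]
      simp only [Matrix.add_mulVec, vmv_mulVec, hA2, hUe1, hUe2, hvEig, hPv, hPe1, hPe2,
        Matrix.mulVec_add, Matrix.mulVec_smul, Matrix.mulVec_neg, dotProduct_add,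
        dotProduct_smul, dotProduct_neg, add_dotProduct, smul_dotProduct, neg_dotProduct, hperp, hve1, hve2, he1e2, he2e1, he2v, hv, he1, he2e2,
        smul_eq_mul]
      match_scalars <;>
        first
          | ring1
          | linear_combination hηA
          | linear_combination η * hηA
          | linear_combination (η * α) * hηA
          | linear_combination (η * β) * hηA
    · simp only [← Matrix.mulVec_mulVec]
      simp only [Matrix.add_mulVec, vmv_mulVec, hA2, hUe1, hUe2, hvEig, hPv, hPe1, hPe2,
        Matrix.mulVec_add, Matrix.mulVec_smul, Matrix.mulVec_neg, dotProduct_add,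
        dotProduct_smul, dotProduct_neg, add_dotProduct, smul_dotProduct, neg_dotProduct, hperp, hve1, hve2, he1e2, he2e1, he2v, hv, he1, he2e2,
        smul_eq_mul]
      match_scalars <;>
        first
          | ring1
          | linear_combination hηA
          | linear_combination η * hηA
          | linear_combination (η * α) * hηA
          | linear_combination (η * β) * hηA
  -- determinants
  have hdet1 : (U + vecMulVec aC1 nC1).det = U.det := by
    rw [hn1]
    have hfac : U + vecMulVec aC1 e1 = U * (1 + vecMulVec (ξ • e2) e1) := by
      rw [Matrix.mul_add, Matrix.mul_one, mul_vmv, Matrix.mulVec_smul, ← ha1]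
    rw [hfac, Matrix.det_mul, det_one_add_vmv, smul_dotProduct, he2e1]
    simp
  have hdet2 : (U + vecMulVec aC2 nC2).det = U.det := by
    rw [hn2]
    have hfac : U + vecMulVec aC2 e2 = U * (1 + vecMulVec (η • e1) e2) := by
      rw [Matrix.mul_add, Matrix.mul_one, mul_vmv, Matrix.mulVec_smul, ← ha2]
    rw [hfac, Matrix.det_mul, det_one_add_vmv, smul_dotProduct, he1e2]
    simp
  obtain ⟨R1, hR1, hR1e⟩ :=
    exists_rot U Uhat P (U + vecMulVec aC1 nC1) hUdet hP2 hPt hUt hUhat hK1 hdet1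
  obtain ⟨R2, hR2, hR2e⟩ :=
    exists_rot U Uhat P (U + vecMulVec aC2 nC2) hUdet hP2 hPt hUt hUhat hK2 hdet2
  refine ⟨⟨R1, hR1, hR1e⟩, ⟨R2, hR2, hR2e⟩, ?_⟩
  -- the two rank-one corrections differ
  have hβne : β ≠ 0 := by
    intro hβ
    apply hne
    rw [hUhat]
    rw [hβ] at hUe1 hUe2
    apply eq_of_basis hcomp
    · simp only [← Matrix.mulVec_mulVec]
      simp only [Matrix.add_mulVec, vmv_mulVec, hUe1, hUe2, hvEig, hPv, hPe1, hPe2,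
        Matrix.mulVec_add, Matrix.mulVec_smul, Matrix.mulVec_neg, dotProduct_add,
        dotProduct_smul, dotProduct_neg, add_dotProduct, smul_dotProduct, neg_dotProduct, hperp, hve1, hve2, he1e2, he2e1, he2v, hv, he1, he2e2,
        smul_eq_mul]
      match_scalars <;> ring
    · simp only [← Matrix.mulVec_mulVec]
      simp only [Matrix.add_mulVec, vmv_mulVec, hUe1, hUe2, hvEig, hPv, hPe1, hPe2,
        Matrix.mulVec_add, Matrix.mulVec_smul, Matrix.mulVec_neg, dotProduct_add,
        dotProduct_smul, dotProduct_neg, add_dotProduct, smul_dotProduct, neg_dotProduct, hperp, hve1, hve2, he1e2, he2e1, he2v, hv, he1, he2e2,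
        smul_eq_mul]
      match_scalars <;> ring
    · simp only [← Matrix.mulVec_mulVec]
      simp only [Matrix.add_mulVec, vmv_mulVec, hUe1, hUe2, hvEig, hPv, hPe1, hPe2,
        Matrix.mulVec_add, Matrix.mulVec_smul, Matrix.mulVec_neg, dotProduct_add,
        dotProduct_smul, dotProduct_neg, add_dotProduct, smul_dotProduct, neg_dotProduct, hperp, hve1, hve2, he1e2, he2e1, he2v, hv, he1, he2e2,
        smul_eq_mul]
      match_scalars <;> ring
  have hξne : ξ ≠ 0 := by
    intro h
    rw [h, zero_mul] at hξC
    have hsum : 0 < α + δ := by linarith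
    have hβ0 : β * (α + δ) = 0 := by linarith
    exact hβne ((mul_eq_zero.mp hβ0).resolve_right (ne_of_gt hsum))
  intro heq
  have h1 := congrArg (fun M : Matrix (Fin 3) (Fin 3) ℝ => M.mulVec e1) heq
  simp only [hn1, hn2, vmv_mulVec, he1, he2e1, one_smul, zero_smul] at h1
  have h2 : e2 ⬝ᵥ aC1 = ξ * δ := by
    rw [hA1]
    simp [dotProduct_add, dotProduct_smul, he2e1, he2e2]
  rw [h1] at h2
  simp only [dotProduct_zero] at h2
  exact hξne ((mul_eq_zero.mp h2.symm).resolve_right (ne_of_gt hδ_pos))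
end

section
/- Let U = λ₁ v₁⊗v₁ + v₂⊗v₂ + λ₃ v₃⊗v₃, where v₁, v₂, v₃ ∈ ℝ³ are orthonormal and 0 < λ₁ < 1 < λ₃. Let ê be a unit vector with ê · v₂ ≠ 0, set Û = (−I + 2 ê⊗ê) U (−I + 2 ê⊗ê), and assume Û ≠ U. Define the Type II vectors n_II = 2 (ê − U²ê/|U ê|²) and a_II = U ê. Then the following three conditions are equivalent: (i) (a_II · v₂)(n_II · v₂) = 0; (ii) n_II · v₂ = 0; (iii) |U ê| = 1. -/
open Matrix

lemma dp_self_nonneg (v : Fin 3 → ℝ) : 0 ≤ v ⬝ᵥ v :=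
  Finset.sum_nonneg fun i _ => mul_self_nonneg (v i)

lemma vmv_mulVec_s7 (w v x : Fin 3 → ℝ) :
    (Matrix.vecMulVec w v).mulVec x = (v ⬝ᵥ x) • w := by
  ext i
  simp only [Matrix.vecMulVec, Matrix.mulVec, dotProduct, Matrix.of_apply,
    Pi.smul_apply, smul_eq_mul, Finset.sum_mul]
  refine Finset.sum_congr rfl fun j _ => by ring

lemma key (U : Matrix (Fin 3) (Fin 3) ℝ) (v1 v2 v3 : Fin 3 → ℝ) (l1 l3 : ℝ)
    (hv2 : v2 ⬝ᵥ v2 = 1)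
    (h12 : v1 ⬝ᵥ v2 = 0) (h23 : v2 ⬝ᵥ v3 = 0)
    (hU : U = l1 • Matrix.vecMulVec v1 v1 + Matrix.vecMulVec v2 v2
        + l3 • Matrix.vecMulVec v3 v3) (x : Fin 3 → ℝ) :
    U.mulVec x ⬝ᵥ v2 = x ⬝ᵥ v2 := by
  have h12' : v1 ⬝ᵥ v2 = 0 := h12
  have h23' : v3 ⬝ᵥ v2 = 0 := by rw [dotProduct_comm]; exact h23
  subst hU
  rw [Matrix.add_mulVec, Matrix.add_mulVec, Matrix.smul_mulVec,
    Matrix.smul_mulVec, vmv_mulVec_s7, vmv_mulVec_s7, vmv_mulVec_s7,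
    add_dotProduct, add_dotProduct, smul_dotProduct,
    smul_dotProduct, smul_dotProduct, smul_dotProduct,
    smul_dotProduct, h12', h23', hv2, dotProduct_comm v2 x]
  simp

theorem stmt_7 (U : Matrix (Fin 3) (Fin 3) ℝ) (v1 v2 v3 e : Fin 3 → ℝ) (l1 l3 : ℝ)
    (hl1 : 0 < l1) (hl1' : l1 < 1) (hl3 : 1 < l3)
    (hv1 : v1 ⬝ᵥ v1 = 1) (hv2 : v2 ⬝ᵥ v2 = 1) (hv3 : v3 ⬝ᵥ v3 = 1)
    (h12 : v1 ⬝ᵥ v2 = 0) (h13 : v1 ⬝ᵥ v3 = 0) (h23 : v2 ⬝ᵥ v3 = 0)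
    (hU : U = l1 • Matrix.vecMulVec v1 v1 + Matrix.vecMulVec v2 v2
        + l3 • Matrix.vecMulVec v3 v3)
    (he : e ⬝ᵥ e = 1) (hev2 : e ⬝ᵥ v2 ≠ 0)
    (hne : reflMat e * U * reflMat e ≠ U)
    (nII aII : Fin 3 → ℝ)
    (hnII : nII = (2 : ℝ) • (e - (U.mulVec e ⬝ᵥ U.mulVec e)⁻¹ • (U * U).mulVec e))
    (haII : aII = U.mulVec e) :
    ((aII ⬝ᵥ v2) * (nII ⬝ᵥ v2) = 0 ↔ nII ⬝ᵥ v2 = 0) ∧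
    (nII ⬝ᵥ v2 = 0 ↔ Real.sqrt (U.mulVec e ⬝ᵥ U.mulVec e) = 1) := by
  have hkey := key U v1 v2 v3 l1 l3 hv2 h12 h23 hU
  set s := U.mulVec e ⬝ᵥ U.mulVec e with hs
  have ha : aII ⬝ᵥ v2 = e ⬝ᵥ v2 := by rw [haII, hkey]
  have hUU : (U * U).mulVec e ⬝ᵥ v2 = e ⬝ᵥ v2 := by
    rw [← Matrix.mulVec_mulVec, hkey, hkey]
  have hUe : U.mulVec e ≠ 0 := by
    intro h
    apply hev2
    rw [← hkey e, h, zero_dotProduct]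
  have hs0 : 0 < s := by
    rcases lt_or_eq_of_le (dp_self_nonneg (U.mulVec e)) with h | h
    · exact h
    · exact absurd ((dotProduct_self_eq_zero).mp h.symm) hUe
  have hn : nII ⬝ᵥ v2 = 2 * ((e ⬝ᵥ v2) * (1 - s⁻¹)) := by
    rw [hnII, smul_dotProduct, sub_dotProduct, smul_dotProduct, hUU]
    simp only [smul_eq_mul]
    ring
  constructor
  · rw [mul_eq_zero, ha]
    exact ⟨fun h => h.resolve_left hev2, Or.inr⟩
  · rw [hn, Real.sqrt_eq_one]
    constructor
    · intro h
      rcases mul_eq_zero.mp h with h | h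
      · norm_num at h
      · rcases mul_eq_zero.mp h with h | h
        · exact absurd h hev2
        · field_simp at h
          linarith [h]
    · intro h
      rw [h]
      norm_num
end

section
/- Let U = λ₁ v₁⊗v₁ + v₂⊗v₂ + λ₃ v₃⊗v₃, where v₁, v₂, v₃ ∈ ℝ³ are orthonormal and 0 < λ₁ < 1 < λ₃. Let ê₁, ê₂ ∈ ℝ³ be orthonormal unit vectors such that (−I + 2 ê₁⊗ê₁) U (−I + 2 ê₁⊗ê₁) = (−I + 2 ê₂⊗ê₂) U (−I + 2 ê₂⊗ê₂) = Û and Û ≠ U. Define n_C¹ = ê₁, a_C¹ = ξ U ê₂ with ξ = 2 (ê₂ · U⁻²ê₁)/(ê₁ · U⁻²ê₁), and n_C² = ê₂, a_C² = η U ê₁ with η = −2 (ê₂ · U²ê₁)/(ê₁ · U²ê₁). Then, for each i ∈ {1, 2}, the cofactor conditions hold for (U, a_Cⁱ, n_Cⁱ) if and only if: ê₁ · v₂ = 0, ê₂ · v₂ = 0, ê₁ is parallel to neither v₁ nor v₃, and the inequality (CC3) tr(U²) − det(U²) − |a_Cⁱ|²|n_Cⁱ|²/4 − 2 ≥ 0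 holds. -/
open Matrix Polynomial

namespace CCaux

lemma vmv_mulVec (a b x : Fin 3 → ℝ) : (vecMulVec a b).mulVec x = (b ⬝ᵥ x) • a := by
  ext i; simp [vecMulVec_apply, mulVec, dotProduct, Fin.sum_univ_three]; ring

lemma mul_vmv (A : Matrix (Fin 3) (Fin 3) ℝ) (a b : Fin 3 → ℝ) :
    A * vecMulVec a b = vecMulVec (A.mulVec a) b := by
  ext i j; simp [vecMulVec_apply, mul_apply, mulVec, dotProduct, Fin.sum_univ_three]; ring

lemma vmv_mul (a b : Fin 3 → ℝ) (A : Matrix (Fin 3) (Fin 3) ℝ) :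
    vecMulVec a b * A = vecMulVec a (Aᵀ.mulVec b) := by
  ext i j
  simp [vecMulVec_apply, mul_apply, mulVec, dotProduct, Fin.sum_univ_three, transpose_apply]
  ring

lemma vmv_mul_vmv (a b c d : Fin 3 → ℝ) :
    vecMulVec a b * vecMulVec c d = (b ⬝ᵥ c) • vecMulVec a d := by
  ext i j; simp [vecMulVec_apply, mul_apply, dotProduct, Fin.sum_univ_three]; ring

lemma vmv_smul_right (a b : Fin 3 → ℝ) (t : ℝ) :
    vecMulVec a (t • b) = t • vecMulVec a b := by
  ext i j; simp [vecMulVec_apply]; ring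

lemma vmv_smul_left (a b : Fin 3 → ℝ) (t : ℝ) :
    vecMulVec (t • a) b = t • vecMulVec a b := by
  ext i j; simp [vecMulVec_apply]; ring

lemma dot_vmv_mulVec (x a b y : Fin 3 → ℝ) :
    x ⬝ᵥ (vecMulVec a b).mulVec y = (x ⬝ᵥ a) * (b ⬝ᵥ y) := by
  rw [vmv_mulVec, dotProduct_smul, smul_eq_mul]; ring

lemma rows_gram (u1 u2 u3 : Fin 3 → ℝ)
    (h11 : u1 ⬝ᵥ u1 = 1) (h22 : u2 ⬝ᵥ u2 = 1) (h33 : u3 ⬝ᵥ u3 = 1)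
    (h12 : u1 ⬝ᵥ u2 = 0) (h13 : u1 ⬝ᵥ u3 = 0) (h23 : u2 ⬝ᵥ u3 = 0) :
    (Matrix.of ![u1, u2, u3]) * (Matrix.of ![u1, u2, u3])ᵀ = 1 := by
  ext i j
  fin_cases i <;> fin_cases j <;>
    simp only [mul_apply, transpose_apply, Matrix.of_apply, Fin.sum_univ_three,
      Matrix.cons_val', Matrix.cons_val_zero, Matrix.cons_val_one, Matrix.head_cons,
      Matrix.cons_val_two, Matrix.tail_cons, Matrix.one_apply] <;>
    simp only [dotProduct, Fin.sum_univ_three] at h11 h22 h33 h12 h13 h23 <;>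
    simp <;> linarith

lemma ortho_complete (u1 u2 u3 : Fin 3 → ℝ)
    (h11 : u1 ⬝ᵥ u1 = 1) (h22 : u2 ⬝ᵥ u2 = 1) (h33 : u3 ⬝ᵥ u3 = 1)
    (h12 : u1 ⬝ᵥ u2 = 0) (h13 : u1 ⬝ᵥ u3 = 0) (h23 : u2 ⬝ᵥ u3 = 0) :
    vecMulVec u1 u1 + vecMulVec u2 u2 + vecMulVec u3 u3 = 1 := by
  have hG' : (Matrix.of ![u1, u2, u3])ᵀ * (Matrix.of ![u1, u2, u3]) = 1 :=
    mul_eq_one_comm.mp (rows_gram u1 u2 u3 h11 h22 h33 h12 h13 h23)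
  rw [← hG']
  ext i j
  fin_cases i <;> fin_cases j <;>
    simp [mul_apply, Matrix.transpose, Fin.sum_univ_three, vecMulVec_apply, vecHead, vecTail]

lemma expand_basis (u1 u2 u3 : Fin 3 → ℝ)
    (hcomp : vecMulVec u1 u1 + vecMulVec u2 u2 + vecMulVec u3 u3 = 1) (w : Fin 3 → ℝ) :
    w = (u1 ⬝ᵥ w) • u1 + (u2 ⬝ᵥ w) • u2 + (u3 ⬝ᵥ w) • u3 := by
  have h := congrArg (fun M : Matrix (Fin 3) (Fin 3) ℝ => M.mulVec w) hcomp
  simpa [Matrix.add_mulVec, vmv_mulVec, Matrix.one_mulVec] using h.symm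

lemma charpoly_conj (Q A : Matrix (Fin 3) (Fin 3) ℝ) (h : Q * Qᵀ = 1) :
    (Qᵀ * A * Q).charpoly = A.charpoly := by
  have h' : Qᵀ * Q = 1 := mul_eq_one_comm.mp h
  have key : charmatrix (Qᵀ * A * Q) =
      (C : ℝ →+* ℝ[X]).mapMatrix Qᵀ * charmatrix A * (C : ℝ →+* ℝ[X]).mapMatrix Q := by
    unfold charmatrix
    rw [mul_sub, sub_mul]
    congr 1
    · rw [← (scalar_commute (X : ℝ[X]) (Commute.all X) (C.mapMatrix Qᵀ)).eq, mul_assoc,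
        ← _root_.map_mul _ _ _, h', _root_.map_one C.mapMatrix, mul_one]
    · rw [← _root_.map_mul _ _ _, ← _root_.map_mul _ _ _]
  have hdet : (C.mapMatrix Qᵀ).det * ((C : ℝ →+* ℝ[X]).mapMatrix Q).det = 1 := by
    rw [← RingHom.map_det, ← RingHom.map_det, ← _root_.map_mul _ _ _, ← det_mul, h', det_one,
      _root_.map_one]
  rw [Matrix.charpoly, key, det_mul, det_mul, mul_right_comm, hdet, one_mul, Matrix.charpoly]

lemma charpoly_diag (a b c : ℝ) :
    (Matrix.diagonal ![a, b, c]).charpoly = (X - C a) * (X - C b) * (X - C c) := by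
  have : charmatrix (Matrix.diagonal ![a, b, c])
      = Matrix.diagonal ![X - C a, X - C b, X - C c] := by
    ext i j
    by_cases hij : i = j
    · subst hij; fin_cases i <;> simp [charmatrix_apply]
    · rw [charmatrix_apply, Matrix.diagonal_apply_ne _ hij, Matrix.diagonal_apply_ne _ hij]
      simp [Matrix.diagonal_apply_ne _ hij]
  rw [Matrix.charpoly, this, det_diagonal, Fin.prod_univ_three]
  simp

lemma rowsT_diag_rows (u1 u2 u3 : Fin 3 → ℝ) (d : Fin 3 → ℝ) :
    (Matrix.of ![u1,u2,u3])ᵀ * Matrix.diagonal d * Matrix.of ![u1,u2,u3]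
      = d 0 • vecMulVec u1 u1 + d 1 • vecMulVec u2 u2 + d 2 • vecMulVec u3 u3 := by
  ext i j
  simp [mul_apply, Fin.sum_univ_three, Matrix.diagonal_apply, vecMulVec_apply, Matrix.transpose,
    vecHead, vecTail]
  ring

lemma cof_eq (M : Matrix (Fin 3) (Fin 3) ℝ) : cof M = (Matrix.adjugate M)ᵀ := by
  rw [Matrix.adjugate_fin_three]
  ext i j
  fin_cases i <;> fin_cases j <;>
    simp [cof, Matrix.det_fin_two, Fin.succAbove, Fin.lt_def, -Fin.val_pos_iff] <;> ring

lemma adj_diag (a b c : ℝ) :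
    Matrix.adjugate (Matrix.diagonal ![a,b,c]) = Matrix.diagonal ![b*c, a*c, a*b] := by
  have h : (Matrix.diagonal ![a,b,c]) = !![a,0,0;0,b,0;0,0,c] := by
    ext i j
    fin_cases i <;> fin_cases j <;> simp [Matrix.diagonal_apply, vecHead, vecTail]
  rw [h, Matrix.adjugate_fin_three_of]
  ext i j
  fin_cases i <;> fin_cases j <;> simp [Matrix.diagonal_apply, vecHead, vecTail] <;> ring

lemma conj_mul (Q A B : Matrix (Fin 3) (Fin 3) ℝ) (h : Q * Qᵀ = 1) :
    (Qᵀ * A * Q) * (Qᵀ * B * Q) = Qᵀ * (A * B) * Q := by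
  have h2 : (Qᵀ * A * Q) * (Qᵀ * B * Q) = Qᵀ * A * (Q * Qᵀ) * B * Q := by noncomm_ring
  rw [h2, h, mul_one]
  noncomm_ring

lemma diag_vec_mul (a b c x y z : ℝ) : (![a,b,c] : Fin 3 → ℝ) * ![x,y,z] = ![a*x,b*y,c*z] := by
  funext i; fin_cases i <;> simp

lemma diag_one : (Matrix.diagonal ![(1:ℝ),1,1] : Matrix (Fin 3) (Fin 3) ℝ) = 1 := by
  ext i j; fin_cases i <;> fin_cases j <;> simp

lemma diag_fun_mul (a b c x y z : ℝ) :
    (Matrix.diagonal fun i => (![a,b,c] : Fin 3 → ℝ) i * (![x,y,z] : Fin 3 → ℝ) i)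
      = Matrix.diagonal ![a*x, b*y, c*z] := by
  have h : (fun i => (![a,b,c] : Fin 3 → ℝ) i * (![x,y,z] : Fin 3 → ℝ) i) = ![a*x, b*y, c*z] := by
    funext i; fin_cases i <;> simp
  rw [h]

lemma refl_mul (e f : Fin 3 → ℝ) (hef : e ⬝ᵥ f = 0) :
    reflMat e * reflMat f = 1 - (2:ℝ) • (vecMulVec e e + vecMulVec f f) := by
  simp only [reflMat, add_mul, mul_add, Matrix.smul_mul, Matrix.mul_smul, vmv_mul_vmv,
    neg_one_mul, mul_neg_one, neg_neg, smul_smul, neg_smul, hef, zero_smul, smul_zero,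
    add_zero]
  module

lemma refl_sq (e : Fin 3 → ℝ) (he : e ⬝ᵥ e = 1) : reflMat e * reflMat e = 1 := by
  simp only [reflMat, add_mul, mul_add, Matrix.smul_mul, Matrix.mul_smul, vmv_mul_vmv,
    neg_one_mul, mul_neg_one, neg_neg, smul_smul, neg_smul, he, one_smul]
  module

lemma refl_comm (U : Matrix (Fin 3) (Fin 3) ℝ) (hUs : Uᵀ = U) (w : Fin 3 → ℝ) (lam : ℝ)
    (hw : U.mulVec w = lam • w) : reflMat w * U = U * reflMat w := by
  simp only [reflMat, add_mul, mul_add, Matrix.smul_mul, Matrix.mul_smul, neg_one_mul,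
    mul_neg_one, vmv_mul, mul_vmv, hUs, hw, vmv_smul_right, vmv_smul_left]

lemma sq_ne_one {lam : ℝ} (h0 : 0 < lam) (h1 : lam ≠ 1) : lam*lam ≠ 1 := by
  intro h
  rcases h1.lt_or_gt with h' | h' <;> nlinarith

lemma inv_sq_ne_one {lam : ℝ} (h0 : 0 < lam) (h1 : lam*lam ≠ 1) : 1 - lam⁻¹*lam⁻¹ ≠ 0 := by
  intro h
  have h2 : lam⁻¹ * lam = 1 := inv_mul_cancel₀ (ne_of_gt h0)
  apply h1
  nlinarith

lemma dot_mulVec_symm (U : Matrix (Fin 3) (Fin 3) ℝ) (hUs : Uᵀ = U) (x y : Fin 3 → ℝ) :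
    x ⬝ᵥ U.mulVec y = (U.mulVec x) ⬝ᵥ y := by
  rw [Matrix.dotProduct_mulVec, ← Matrix.mulVec_transpose, hUs]

end CCaux

set_option maxHeartbeats 3200000 in
theorem stmt_10 (U : Matrix (Fin 3) (Fin 3) ℝ) (v1 v2 v3 e1 e2 : Fin 3 → ℝ)
    (l1 l3 : ℝ)
    (hl1 : 0 < l1) (hl1' : l1 < 1) (hl3 : 1 < l3)
    (hv1 : v1 ⬝ᵥ v1 = 1) (hv2 : v2 ⬝ᵥ v2 = 1) (hv3 : v3 ⬝ᵥ v3 = 1)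
    (hv12 : v1 ⬝ᵥ v2 = 0) (hv13 : v1 ⬝ᵥ v3 = 0) (hv23 : v2 ⬝ᵥ v3 = 0)
    (hU : U = l1 • Matrix.vecMulVec v1 v1 + Matrix.vecMulVec v2 v2
        + l3 • Matrix.vecMulVec v3 v3)
    (he1 : e1 ⬝ᵥ e1 = 1) (he2 : e2 ⬝ᵥ e2 = 1) (he12 : e1 ⬝ᵥ e2 = 0)
    (Uhat : Matrix (Fin 3) (Fin 3) ℝ)
    (hUhat1 : Uhat = reflMat e1 * U * reflMat e1)
    (hUhat2 : Uhat = reflMat e2 * U * reflMat e2)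
    (hne : Uhat ≠ U)
    (ξ η : ℝ)
    (hξ : ξ = 2 * (e2 ⬝ᵥ (U⁻¹ * U⁻¹).mulVec e1) / (e1 ⬝ᵥ (U⁻¹ * U⁻¹).mulVec e1))
    (hη : η = -2 * (e2 ⬝ᵥ (U * U).mulVec e1) / (e1 ⬝ᵥ (U * U).mulVec e1))
    (nC1 aC1 nC2 aC2 : Fin 3 → ℝ)
    (hn1 : nC1 = e1) (ha1 : aC1 = ξ • U.mulVec e2)
    (hn2 : nC2 = e2) (ha2 : aC2 = η • U.mulVec e1) :
    ((CC1 U ∧ CC2 U aC1 nC1 ∧ CC3 U aC1 nC1) ↔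
      (e1 ⬝ᵥ v2 = 0 ∧ e2 ⬝ᵥ v2 = 0 ∧
        (¬ ∃ c : ℝ, e1 = c • v1) ∧ (¬ ∃ c : ℝ, e1 = c • v3) ∧
        CC3 U aC1 nC1)) ∧
    ((CC1 U ∧ CC2 U aC2 nC2 ∧ CC3 U aC2 nC2) ↔
      (e1 ⬝ᵥ v2 = 0 ∧ e2 ⬝ᵥ v2 = 0 ∧
        (¬ ∃ c : ℝ, e1 = c • v1) ∧ (¬ ∃ c : ℝ, e1 = c • v3) ∧
        CC3 U aC2 nC2)) := by
  have hl1ne : l1 ≠ 0 := ne_of_gt hl1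
  have hl3pos : (0:ℝ) < l3 := lt_trans one_pos hl3
  have hl3ne : l3 ≠ 0 := ne_of_gt hl3pos
  -- commuted dot products
  have hv21 : v2 ⬝ᵥ v1 = 0 := by rw [dotProduct_comm]; exact hv12
  have hv31 : v3 ⬝ᵥ v1 = 0 := by rw [dotProduct_comm]; exact hv13
  have hv32 : v3 ⬝ᵥ v2 = 0 := by rw [dotProduct_comm]; exact hv23
  have he21 : e2 ⬝ᵥ e1 = 0 := by rw [dotProduct_comm]; exact he12
  -- the orthogonal matrix Q with rows v1 v2 v3
  set Q : Matrix (Fin 3) (Fin 3) ℝ := Matrix.of ![v1, v2, v3] with hQdef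
  have hQ : Q * Qᵀ = 1 := CCaux.rows_gram v1 v2 v3 hv1 hv2 hv3 hv12 hv13 hv23
  have hQ' : Qᵀ * Q = 1 := mul_eq_one_comm.mp hQ
  have hUQ : U = Qᵀ * Matrix.diagonal ![l1, 1, l3] * Q := by
    rw [hQdef, CCaux.rowsT_diag_rows, hU]
    norm_num
    rfl
  have hUsymm : Uᵀ = U := by
    rw [hUQ, Matrix.transpose_mul, Matrix.transpose_mul, Matrix.transpose_transpose,
      Matrix.diagonal_transpose, mul_assoc]
  have hCC1 : CC1 U := ⟨l1, l3, le_of_lt hl1', le_of_lt hl3, by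
    rw [hUQ, CCaux.charpoly_conj _ _ hQ, CCaux.charpoly_diag]⟩
  -- U * U and U⁻¹
  have hU2 : U * U = Qᵀ * Matrix.diagonal ![l1*l1, 1, l3*l3] * Q := by
    rw [hUQ, CCaux.conj_mul _ _ _ hQ, Matrix.diagonal_mul_diagonal, CCaux.diag_fun_mul]
    norm_num
  have hUinv : U⁻¹ = Qᵀ * Matrix.diagonal ![l1⁻¹, 1, l3⁻¹] * Q := by
    apply Matrix.inv_eq_left_inv
    rw [hUQ, CCaux.conj_mul _ _ _ hQ, Matrix.diagonal_mul_diagonal, CCaux.diag_fun_mul,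
      inv_mul_cancel₀ hl1ne, inv_mul_cancel₀ hl3ne, one_mul, CCaux.diag_one, mul_one, hQ']
  have hUinv2 : U⁻¹ * U⁻¹ = Qᵀ * Matrix.diagonal ![l1⁻¹*l1⁻¹, 1, l3⁻¹*l3⁻¹] * Q := by
    rw [hUinv, CCaux.conj_mul _ _ _ hQ, Matrix.diagonal_mul_diagonal, CCaux.diag_fun_mul]
    norm_num
  -- the quadratic form evaluation
  have hquad : ∀ (d : Fin 3 → ℝ) (x y : Fin 3 → ℝ),
      x ⬝ᵥ (Qᵀ * Matrix.diagonal d * Q).mulVec y =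
        d 0 * ((x ⬝ᵥ v1) * (v1 ⬝ᵥ y)) + d 1 * ((x ⬝ᵥ v2) * (v2 ⬝ᵥ y))
          + d 2 * ((x ⬝ᵥ v3) * (v3 ⬝ᵥ y)) := by
    intro d x y
    rw [hQdef, CCaux.rowsT_diag_rows]
    rw [Matrix.add_mulVec, Matrix.add_mulVec, Matrix.smul_mulVec,
      Matrix.smul_mulVec, Matrix.smul_mulVec, CCaux.vmv_mulVec, CCaux.vmv_mulVec,
      CCaux.vmv_mulVec, dotProduct_add, dotProduct_add]
    simp only [dotProduct_smul, smul_eq_mul]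
    ring
  -- U * cof (U*U - 1)
  set κ : ℝ := (l1*l1-1) * (l3*l3-1) with hκdef
  have hκ : κ ≠ 0 := by
    have h1 : l1*l1 - 1 < 0 := by nlinarith
    have h2 : 0 < l3*l3 - 1 := by nlinarith
    exact ne_of_lt (mul_neg_of_neg_of_pos h1 h2)
  have hdet2 : Q.det * Q.det = 1 := by
    have h := congrArg Matrix.det hQ
    rwa [det_mul, det_transpose, det_one] at h
  have hAdjQ : Matrix.adjugate Q = Q.det • Qᵀ := by
    calc Matrix.adjugate Q = (Qᵀ * Q) * Matrix.adjugate Q := by rw [hQ', one_mul]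
    _ = Qᵀ * (Q * Matrix.adjugate Q) := by rw [mul_assoc]
    _ = Qᵀ * (Q.det • 1) := by rw [Matrix.mul_adjugate]
    _ = Q.det • Qᵀ := by rw [Matrix.mul_smul, mul_one]
  have hAdjQT : Matrix.adjugate Qᵀ = Q.det • Q := by
    calc Matrix.adjugate Qᵀ = (Q * Qᵀ) * Matrix.adjugate Qᵀ := by rw [hQ, one_mul]
    _ = Q * (Qᵀ * Matrix.adjugate Qᵀ) := by rw [mul_assoc]
    _ = Q * (Qᵀ.det • 1) := by rw [Matrix.mul_adjugate]
    _ = Q.det • Q := by rw [Matrix.mul_smul, mul_one, Matrix.det_transpose]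
  have hM : U * U - 1 = Qᵀ * Matrix.diagonal ![l1*l1-1, 0, l3*l3-1] * Q := by
    have h1 : (1 : Matrix (Fin 3) (Fin 3) ℝ) = Qᵀ * Matrix.diagonal ![(1:ℝ),1,1] * Q := by
      have : Matrix.diagonal ![(1:ℝ),1,1] = 1 := by
        ext i j; fin_cases i <;> fin_cases j <;> simp
      rw [this, mul_one, hQ']
    rw [hU2]
    conv_lhs => rw [h1]
    rw [← sub_mul, ← Matrix.mul_sub]
    have h : Matrix.diagonal ![l1*l1, 1, l3*l3] - Matrix.diagonal ![(1:ℝ),1,1]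
        = Matrix.diagonal ![l1*l1-1, 0, l3*l3-1] := by
      ext i j; fin_cases i <;> fin_cases j <;> simp [Matrix.diagonal_apply] <;> norm_num
    rw [h]
  have hUcof : U * cof (U * U - 1) = κ • vecMulVec v2 v2 := by
    have hsym : (U * U - 1)ᵀ = U * U - 1 := by
      rw [Matrix.transpose_sub, Matrix.transpose_mul, hUsymm, Matrix.transpose_one]
    have hvec : (![0*(l3*l3-1), (l1*l1-1)*(l3*l3-1), (l1*l1-1)*0] : Fin 3 → ℝ) = ![0, κ, 0] := by
      funext i; fin_cases i <;> simp [hκdef]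
    have hadj : Matrix.adjugate (U*U-1) = Qᵀ * Matrix.diagonal ![0, κ, 0] * Q := by
      rw [hM, Matrix.adjugate_mul_distrib, Matrix.adjugate_mul_distrib, hAdjQ, hAdjQT,
        CCaux.adj_diag, hvec]
      rw [Matrix.smul_mul, Matrix.mul_smul, Matrix.mul_smul, smul_smul, hdet2, one_smul, ← mul_assoc]
    rw [CCaux.cof_eq, Matrix.adjugate_transpose, hsym, hadj, hUQ, CCaux.conj_mul _ _ _ hQ,
      Matrix.diagonal_mul_diagonal, CCaux.diag_fun_mul]
    have hvec2 : (![l1 * 0, 1 * κ, l3 * 0] : Fin 3 → ℝ) = ![0, κ, 0] := by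
      funext i; fin_cases i <;> simp
    rw [hvec2, hQdef, CCaux.rowsT_diag_rows]
    simp
  -- CC2 in terms of dot products with v2
  have hCC2iff : ∀ a n : Fin 3 → ℝ, (CC2 U a n ↔ (a ⬝ᵥ v2) * (v2 ⬝ᵥ n) = 0) := by
    intro a n
    unfold CC2
    rw [hUcof, Matrix.smul_mulVec, dotProduct_smul, CCaux.dot_vmv_mulVec, smul_eq_mul]
    constructor
    · intro h
      rcases mul_eq_zero.mp h with h | h
      · exact absurd h hκ
      · exact h
    · intro h; rw [h, mul_zero]
  -- eigenvector equations
  have hUv1 : U.mulVec v1 = l1 • v1 := by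
    rw [hU, Matrix.add_mulVec, Matrix.add_mulVec, Matrix.smul_mulVec,
      Matrix.smul_mulVec, CCaux.vmv_mulVec, CCaux.vmv_mulVec, CCaux.vmv_mulVec,
      hv1, hv21, hv31]
    simp
  have hUv2 : U.mulVec v2 = v2 := by
    rw [hU, Matrix.add_mulVec, Matrix.add_mulVec, Matrix.smul_mulVec,
      Matrix.smul_mulVec, CCaux.vmv_mulVec, CCaux.vmv_mulVec, CCaux.vmv_mulVec,
      hv12, hv2, hv32]
    simp
  have hUv3 : U.mulVec v3 = l3 • v3 := by
    rw [hU, Matrix.add_mulVec, Matrix.add_mulVec, Matrix.smul_mulVec,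
      Matrix.smul_mulVec, CCaux.vmv_mulVec, CCaux.vmv_mulVec, CCaux.vmv_mulVec,
      hv13, hv23, hv3]
    simp
  -- reflections through eigenvectors fix U
  have hUhatU : ∀ (w : Fin 3 → ℝ) (lam : ℝ), w ⬝ᵥ w = 1 → U.mulVec w = lam • w →
      reflMat w * U * reflMat w = U := by
    intro w lam hw hUw
    rw [CCaux.refl_comm U hUsymm w lam hUw, mul_assoc, CCaux.refl_sq w hw, mul_one]
  have hnp1 : (∃ c : ℝ, e1 = c • v1) → False := by
    rintro ⟨c, hc⟩
    refine hne ?_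
    rw [hUhat1]
    refine hUhatU e1 l1 he1 ?_
    rw [hc, Matrix.mulVec_smul, hUv1, smul_smul, smul_smul, mul_comm]
  have hnp3 : (∃ c : ℝ, e1 = c • v3) → False := by
    rintro ⟨c, hc⟩
    refine hne ?_
    rw [hUhat1]
    refine hUhatU e1 l3 he1 ?_
    rw [hc, Matrix.mulVec_smul, hUv3, smul_smul, smul_smul, mul_comm]
  have hnp2e1 : (∃ c : ℝ, e1 = c • v2) → False := by
    rintro ⟨c, hc⟩
    refine hne ?_
    rw [hUhat1]
    refine hUhatU e1 1 he1 ?_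
    rw [hc, Matrix.mulVec_smul, hUv2, one_smul]
  have hnp2e2 : (∃ c : ℝ, e2 = c • v2) → False := by
    rintro ⟨c, hc⟩
    refine hne ?_
    rw [hUhat2]
    refine hUhatU e2 1 he2 ?_
    rw [hc, Matrix.mulVec_smul, hUv2, one_smul]
  -- the projection P commutes with U
  set P : Matrix (Fin 3) (Fin 3) ℝ := vecMulVec e1 e1 + vecMulVec e2 e2 with hPdef
  have hS12 : reflMat e1 * reflMat e2 = 1 - (2:ℝ) • P := CCaux.refl_mul e1 e2 he12
  have hS21 : reflMat e2 * reflMat e1 = 1 - (2:ℝ) • P := by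
    rw [CCaux.refl_mul e2 e1 he21, hPdef, add_comm (vecMulVec e2 e2)]
  have hPP : P * P = P := by
    rw [hPdef]
    simp only [add_mul, mul_add, CCaux.vmv_mul_vmv, he1, he2, he12, he21, one_smul, zero_smul]
    abel
  have hR1 := CCaux.refl_sq e1 he1
  have hR2 := CCaux.refl_sq e2 he2
  have hUSS : U = (1 - (2:ℝ)•P) * U * (1 - (2:ℝ)•P) := by
    have h0 : reflMat e1 * Uhat * reflMat e1 = U := by
      rw [hUhat1, show reflMat e1 * (reflMat e1 * U * reflMat e1) * reflMat e1
        = (reflMat e1 * reflMat e1) * U * (reflMat e1 * reflMat e1) from by noncomm_ring, hR1,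
        one_mul, mul_one]
    conv_lhs => rw [← h0, hUhat2]
    rw [show reflMat e1 * (reflMat e2 * U * reflMat e2) * reflMat e1
      = (reflMat e1 * reflMat e2) * U * (reflMat e2 * reflMat e1) from by noncomm_ring,
      hS12, hS21]
  have hSS : (1 - (2:ℝ)•P) * (1 - (2:ℝ)•P) = 1 := by
    simp only [mul_sub, sub_mul, mul_one, one_mul, Matrix.smul_mul, Matrix.mul_smul,
      smul_smul, hPP]
    module
  have hUP : U * P = P * U := by
    have h1 : U * (1 - (2:ℝ)•P) = (1 - (2:ℝ)•P) * U := by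
      calc U * (1-(2:ℝ)•P) = ((1-(2:ℝ)•P) * U * (1-(2:ℝ)•P)) * (1-(2:ℝ)•P) := by
            rw [← hUSS]
        _ = (1-(2:ℝ)•P) * U * ((1-(2:ℝ)•P) * (1-(2:ℝ)•P)) := by noncomm_ring
        _ = (1-(2:ℝ)•P) * U := by rw [hSS, mul_one]
    have h2 : U - (2:ℝ)•(U*P) = U - (2:ℝ)•(P*U) := by
      simpa [mul_sub, sub_mul, Matrix.mul_smul, Matrix.smul_mul, mul_one, one_mul] using h1
    have h3 : (2:ℝ)•(U*P) = (2:ℝ)•(P*U) := by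
      calc (2:ℝ)•(U*P) = U - (U - (2:ℝ)•(U*P)) := by abel
        _ = U - (U - (2:ℝ)•(P*U)) := by rw [h2]
        _ = (2:ℝ)•(P*U) := by abel
    have h4 := congrArg (fun M : Matrix (Fin 3) (Fin 3) ℝ => (2:ℝ)⁻¹ • M) h3
    simpa [smul_smul] using h4
  -- the third vector e3 = e1 × e2
  set e3 : Fin 3 → ℝ := ![e1 1 * e2 2 - e1 2 * e2 1, e1 2 * e2 0 - e1 0 * e2 2,
    e1 0 * e2 1 - e1 1 * e2 0] with he3def
  have he13 : e1 ⬝ᵥ e3 = 0 := by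
    simp [he3def, dotProduct, Fin.sum_univ_three]; ring
  have he23 : e2 ⬝ᵥ e3 = 0 := by
    simp [he3def, dotProduct, Fin.sum_univ_three]; ring
  have he1c : e1 0*e1 0 + e1 1*e1 1 + e1 2*e1 2 = 1 := by
    simpa [dotProduct, Fin.sum_univ_three] using he1
  have he2c : e2 0*e2 0 + e2 1*e2 1 + e2 2*e2 2 = 1 := by
    simpa [dotProduct, Fin.sum_univ_three] using he2
  have he12c : e1 0*e2 0 + e1 1*e2 1 + e1 2*e2 2 = 0 := by
    simpa [dotProduct, Fin.sum_univ_three] using he12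
  have he33 : e3 ⬝ᵥ e3 = 1 := by
    simp only [he3def, dotProduct, Fin.sum_univ_three, Matrix.cons_val_zero, Matrix.cons_val_one,
      Matrix.head_cons, Matrix.cons_val_two, Matrix.tail_cons]
    linear_combination (e2 0^2 + e2 1^2 + e2 2^2) * he1c + he2c
      - (e1 0*e2 0 + e1 1*e2 1 + e1 2*e2 2) * he12c
  have hcomp_e : vecMulVec e1 e1 + vecMulVec e2 e2 + vecMulVec e3 e3 = 1 :=
    CCaux.ortho_complete e1 e2 e3 he1 he2 he33 he12 he13 he23
  have hcomp_v : vecMulVec v1 v1 + vecMulVec v2 v2 + vecMulVec v3 v3 = 1 :=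
    CCaux.ortho_complete v1 v2 v3 hv1 hv2 hv3 hv12 hv13 hv23
  have hvmv3 : vecMulVec e3 e3 = 1 - P := by
    rw [hPdef, ← hcomp_e]; abel
  have hU3comm : U * vecMulVec e3 e3 = vecMulVec e3 e3 * U := by
    rw [hvmv3, mul_sub, sub_mul, mul_one, one_mul, hUP]
  set μ : ℝ := (U.mulVec e3) ⬝ᵥ e3 with hμdef
  have hUe3 : U.mulVec e3 = μ • e3 := by
    have h := congrArg (fun M : Matrix (Fin 3) (Fin 3) ℝ => M.mulVec e3) hU3comm
    rw [CCaux.mul_vmv, CCaux.vmv_mul, hUsymm, CCaux.vmv_mulVec, CCaux.vmv_mulVec, he33,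
      one_smul] at h
    exact h
  set c1 : ℝ := v1 ⬝ᵥ e3 with hc1def
  set c2 : ℝ := v2 ⬝ᵥ e3 with hc2def
  set c3 : ℝ := v3 ⬝ᵥ e3 with hc3def
  have heq1 : l1 * c1 = μ * c1 := by
    have h := congrArg (fun w => v1 ⬝ᵥ w) hUe3
    simp only [dotProduct_smul, smul_eq_mul] at h
    rw [CCaux.dot_mulVec_symm U hUsymm, hUv1, smul_dotProduct, smul_eq_mul] at h
    exact h
  have heq2 : c2 = μ * c2 := by
    have h := congrArg (fun w => v2 ⬝ᵥ w) hUe3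
    simp only [dotProduct_smul, smul_eq_mul] at h
    rw [CCaux.dot_mulVec_symm U hUsymm, hUv2] at h
    exact h
  have heq3 : l3 * c3 = μ * c3 := by
    have h := congrArg (fun w => v3 ⬝ᵥ w) hUe3
    simp only [dotProduct_smul, smul_eq_mul] at h
    rw [CCaux.dot_mulVec_symm U hUsymm, hUv3, smul_dotProduct, smul_eq_mul] at h
    exact h
  have hsum : c1*c1 + c2*c2 + c3*c3 = 1 := by
    have hx := CCaux.expand_basis v1 v2 v3 hcomp_v e3
    calc c1*c1 + c2*c2 + c3*c3 = (c1 • v1 + c2 • v2 + c3 • v3) ⬝ᵥ e3 := by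
          rw [add_dotProduct, add_dotProduct, smul_dotProduct, smul_dotProduct,
            smul_dotProduct]
          simp only [smul_eq_mul]
          rfl
      _ = e3 ⬝ᵥ e3 := by rw [← hx]
      _ = 1 := he33
  have hexpand_e := CCaux.expand_basis e1 e2 e3 hcomp_e
  have hexpand_v := CCaux.expand_basis v1 v2 v3 hcomp_v
  set α : ℝ := e1 ⬝ᵥ v2 with hαdef
  set β : ℝ := e2 ⬝ᵥ v2 with hβdef
  have hdich : (α = 0 ∧ β = 0 ∧ ¬(∃ c : ℝ, e1 = c • v1) ∧ ¬(∃ c : ℝ, e1 = c • v3)) ∨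
      (α ≠ 0 ∧ β ≠ 0 ∧ ξ ≠ 0 ∧ η ≠ 0) := by
    by_cases hc2z : c2 = 0
    · -- c2 = 0 : the rotation axis is v1 or v3; CC2 must fail
      right
      have hc2z' : e3 ⬝ᵥ v2 = 0 := by rw [dotProduct_comm]; exact hc2z
      have hv2e : v2 = α • e1 + β • e2 := by
        have hx := hexpand_e v2
        rw [hc2z', zero_smul, add_zero] at hx
        exact hx
      have hαβ1 : α*α + β*β = 1 := by
        have h := congrArg (fun w => w ⬝ᵥ v2) hv2e
        simp only [add_dotProduct, smul_dotProduct, smul_eq_mul] at h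
        rw [hv2] at h
        linarith
      have hαne : α ≠ 0 := by
        intro h0
        have hβne : β ≠ 0 := by intro hb; rw [h0, hb] at hαβ1; norm_num at hαβ1
        apply hnp2e2
        refine ⟨β⁻¹, ?_⟩
        rw [hv2e, h0, zero_smul, zero_add, smul_smul, inv_mul_cancel₀ hβne, one_smul]
      have hβne : β ≠ 0 := by
        intro h0
        have hαne' : α ≠ 0 := by intro ha; rw [ha, h0] at hαβ1; norm_num at hαβ1
        apply hnp2e1
        refine ⟨α⁻¹, ?_⟩
        rw [hv2e, h0, zero_smul, add_zero, smul_smul, inv_mul_cancel₀ hαne', one_smul]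
      -- now show ξ ≠ 0 and η ≠ 0, splitting on whether the axis is v1 or v3
      have hv2e1 : v2 ⬝ᵥ e1 = α := by rw [dotProduct_comm, ← hαdef]
      have hv2e2 : v2 ⬝ᵥ e2 = β := by rw [dotProduct_comm, ← hβdef]
      have he2v2 : e2 ⬝ᵥ v2 = β := hβdef.symm
      obtain ⟨lam, hlpos, hlne1, w, hwdot, hwgd, hwperp⟩ :
          ∃ lam : ℝ, 0 < lam ∧ lam ≠ 1 ∧ ∃ w : Fin 3 → ℝ,
            ((e2 ⬝ᵥ (U⁻¹ * U⁻¹).mulVec e1 = α*β + lam⁻¹*lam⁻¹*((e2 ⬝ᵥ w)*(w ⬝ᵥ e1)) ∧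
              e1 ⬝ᵥ (U⁻¹ * U⁻¹).mulVec e1 = α*α + lam⁻¹*lam⁻¹*((e1 ⬝ᵥ w)*(w ⬝ᵥ e1)) ∧
              e2 ⬝ᵥ (U * U).mulVec e1 = α*β + lam*lam*((e2 ⬝ᵥ w)*(w ⬝ᵥ e1)) ∧
              e1 ⬝ᵥ (U * U).mulVec e1 = α*α + lam*lam*((e1 ⬝ᵥ w)*(w ⬝ᵥ e1)))) ∧
            ((e2 ⬝ᵥ w)*(w ⬝ᵥ e1) = -(α*β)) ∧ ((e1 ⬝ᵥ w)*(w ⬝ᵥ e1) = (e1 ⬝ᵥ w)*(e1 ⬝ᵥ w)) := by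
        by_cases hc1z : c1 = 0
        · -- axis is v3; the in-plane eigenvector is v1 with eigenvalue l1
          have hc3sq : c3*c3 = 1 := by rw [hc1z, hc2z] at hsum; linarith
          have hc3ne : c3 ≠ 0 := by intro h; rw [h] at hc3sq; norm_num at hc3sq
          have he3v3 : e3 = c3 • v3 := by
            have hx := hexpand_v e3
            rw [← hc1def, ← hc2def, ← hc3def, hc1z, hc2z] at hx
            simpa using hx
          have hv3e1 : v3 ⬝ᵥ e1 = 0 := by
            have h := congrArg (fun u => u ⬝ᵥ e1) he3v3
            simp only [smul_dotProduct, smul_eq_mul] at h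
            have h0 : e3 ⬝ᵥ e1 = 0 := by rw [dotProduct_comm]; exact he13
            rw [h0] at h
            exact (mul_eq_zero.mp h.symm).resolve_left hc3ne
          have he3v1 : e3 ⬝ᵥ v1 = 0 := by
            have h := congrArg (fun u => u ⬝ᵥ v1) he3v3
            simp only [smul_dotProduct, smul_eq_mul] at h
            rw [hv31, mul_zero] at h
            exact h
          have hv1e : v1 = (e1 ⬝ᵥ v1) • e1 + (e2 ⬝ᵥ v1) • e2 := by
            have hx := hexpand_e v1
            rw [he3v1, zero_smul, add_zero] at hx
            exact hx
          have hperp0 : (e1 ⬝ᵥ v1)*α + (e2 ⬝ᵥ v1)*β = 0 := by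
            have h := congrArg (fun u => u ⬝ᵥ v2) hv1e
            simp only [add_dotProduct, smul_dotProduct, smul_eq_mul] at h
            rw [hv12, ← hαdef, ← hβdef] at h
            linarith
          have hγδ1 : (e1 ⬝ᵥ v1)*(e1 ⬝ᵥ v1) + (e2 ⬝ᵥ v1)*(e2 ⬝ᵥ v1) = 1 := by
            have h := congrArg (fun u => u ⬝ᵥ v1) hv1e
            simp only [add_dotProduct, smul_dotProduct, smul_eq_mul] at h
            rw [hv1] at h
            linarith
          refine ⟨l1, hl1, ne_of_lt hl1', v1, ⟨?_, ?_, ?_, ?_⟩, ?_, ?_⟩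
          · rw [hUinv2, hquad]
            simp only [Matrix.cons_val_zero, Matrix.cons_val_one, Matrix.head_cons,
              Matrix.cons_val_two, Matrix.tail_cons]
            rw [hv3e1, hv2e1, ← hβdef]
            ring
          · rw [hUinv2, hquad]
            simp only [Matrix.cons_val_zero, Matrix.cons_val_one, Matrix.head_cons,
              Matrix.cons_val_two, Matrix.tail_cons]
            rw [hv3e1, hv2e1, ← hαdef]
            ring
          · rw [hU2, hquad]
            simp only [Matrix.cons_val_zero, Matrix.cons_val_one, Matrix.head_cons,
              Matrix.cons_val_two, Matrix.tail_cons]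
            rw [hv3e1, hv2e1, ← hβdef]
            ring
          · rw [hU2, hquad]
            simp only [Matrix.cons_val_zero, Matrix.cons_val_one, Matrix.head_cons,
              Matrix.cons_val_two, Matrix.tail_cons]
            rw [hv3e1, hv2e1, ← hαdef]
            ring
          · rw [dotProduct_comm v1 e1]
            linear_combination (α*(e2 ⬝ᵥ v1) + β*(e1 ⬝ᵥ v1)) * hperp0
              - ((e1 ⬝ᵥ v1)*(e2 ⬝ᵥ v1)) * hαβ1 - (α*β) * hγδ1
          · rw [dotProduct_comm v1 e1]
        · -- axis is v1; the in-plane eigenvector is v3 with eigenvalue l3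
          have hμl1 : μ = l1 := by
            have h : (l1 - μ) * c1 = 0 := by linarith [heq1]
            rcases mul_eq_zero.mp h with h | h
            · linarith
            · exact absurd h hc1z
          have hc3z : c3 = 0 := by
            have h : (l3 - l1) * c3 = 0 := by rw [hμl1] at heq3; linarith
            rcases mul_eq_zero.mp h with h | h
            · linarith
            · exact h
          have he3v1 : e3 = c1 • v1 := by
            have hx := hexpand_v e3
            rw [← hc1def, ← hc2def, ← hc3def, hc2z, hc3z] at hx
            simpa using hx
          have hv1e1 : v1 ⬝ᵥ e1 = 0 := by
            have h := congrArg (fun u => u ⬝ᵥ e1) he3v1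
            simp only [smul_dotProduct, smul_eq_mul] at h
            have h0 : e3 ⬝ᵥ e1 = 0 := by rw [dotProduct_comm]; exact he13
            rw [h0] at h
            exact (mul_eq_zero.mp h.symm).resolve_left hc1z
          have he3v3 : e3 ⬝ᵥ v3 = 0 := by
            have h := congrArg (fun u => u ⬝ᵥ v3) he3v1
            simp only [smul_dotProduct, smul_eq_mul] at h
            rw [hv13, mul_zero] at h
            exact h
          have hv3e : v3 = (e1 ⬝ᵥ v3) • e1 + (e2 ⬝ᵥ v3) • e2 := by
            have hx := hexpand_e v3
            rw [he3v3, zero_smul, add_zero] at hx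
            exact hx
          have hperp0 : (e1 ⬝ᵥ v3)*α + (e2 ⬝ᵥ v3)*β = 0 := by
            have h := congrArg (fun u => u ⬝ᵥ v2) hv3e
            simp only [add_dotProduct, smul_dotProduct, smul_eq_mul] at h
            rw [hv32, ← hαdef, ← hβdef] at h
            linarith
          have hγδ1 : (e1 ⬝ᵥ v3)*(e1 ⬝ᵥ v3) + (e2 ⬝ᵥ v3)*(e2 ⬝ᵥ v3) = 1 := by
            have h := congrArg (fun u => u ⬝ᵥ v3) hv3e
            simp only [add_dotProduct, smul_dotProduct, smul_eq_mul] at h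
            rw [hv3] at h
            linarith
          refine ⟨l3, hl3pos, ne_of_gt hl3, v3, ⟨?_, ?_, ?_, ?_⟩, ?_, ?_⟩
          · rw [hUinv2, hquad]
            simp only [Matrix.cons_val_zero, Matrix.cons_val_one, Matrix.head_cons,
              Matrix.cons_val_two, Matrix.tail_cons]
            rw [hv1e1, hv2e1, ← hβdef]
            ring
          · rw [hUinv2, hquad]
            simp only [Matrix.cons_val_zero, Matrix.cons_val_one, Matrix.head_cons,
              Matrix.cons_val_two, Matrix.tail_cons]
            rw [hv1e1, hv2e1, ← hαdef]
            ring
          · rw [hU2, hquad]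
            simp only [Matrix.cons_val_zero, Matrix.cons_val_one, Matrix.head_cons,
              Matrix.cons_val_two, Matrix.tail_cons]
            rw [hv1e1, hv2e1, ← hβdef]
            ring
          · rw [hU2, hquad]
            simp only [Matrix.cons_val_zero, Matrix.cons_val_one, Matrix.head_cons,
              Matrix.cons_val_two, Matrix.tail_cons]
            rw [hv1e1, hv2e1, ← hαdef]
            ring
          · rw [dotProduct_comm v3 e1]
            linear_combination (α*(e2 ⬝ᵥ v3) + β*(e1 ⬝ᵥ v3)) * hperp0
              - ((e1 ⬝ᵥ v3)*(e2 ⬝ᵥ v3)) * hαβ1 - (α*β) * hγδ1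
          · rw [dotProduct_comm v3 e1]
      have hnum1 : e2 ⬝ᵥ (U⁻¹ * U⁻¹).mulVec e1 = α*β*(1 - lam⁻¹*lam⁻¹) := by
        rw [hwdot.1, hwgd]; ring
      have hden1 : e1 ⬝ᵥ (U⁻¹ * U⁻¹).mulVec e1 = α*α + lam⁻¹*lam⁻¹*((e1 ⬝ᵥ w)*(e1 ⬝ᵥ w)) := by
        rw [hwdot.2.1, hwperp]
      have hnum2 : e2 ⬝ᵥ (U * U).mulVec e1 = α*β*(1 - lam*lam) := by
        rw [hwdot.2.2.1, hwgd]; ring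
      have hden2 : e1 ⬝ᵥ (U * U).mulVec e1 = α*α + lam*lam*((e1 ⬝ᵥ w)*(e1 ⬝ᵥ w)) := by
        rw [hwdot.2.2.2, hwperp]
      have hlamne : lam ≠ 0 := ne_of_gt hlpos
      have hl2ne1 : lam*lam ≠ 1 := CCaux.sq_ne_one hlpos hlne1
      have hαpos : 0 < α*α := mul_self_pos.mpr hαne
      have hinvsq : 0 ≤ lam⁻¹*lam⁻¹*((e1 ⬝ᵥ w)*(e1 ⬝ᵥ w)) :=
        mul_nonneg (mul_self_nonneg _) (mul_self_nonneg _)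
      have hsqpos : 0 ≤ lam*lam*((e1 ⬝ᵥ w)*(e1 ⬝ᵥ w)) :=
        mul_nonneg (mul_self_nonneg _) (mul_self_nonneg _)
      have hinv2ne1 : 1 - lam⁻¹*lam⁻¹ ≠ 0 := CCaux.inv_sq_ne_one hlpos hl2ne1
      refine ⟨hαne, hβne, ?_, ?_⟩
      · rw [hξ, hnum1]
        apply div_ne_zero
        · refine mul_ne_zero two_ne_zero (mul_ne_zero (mul_ne_zero hαne hβne) hinv2ne1)
        · rw [hden1]; exact ne_of_gt (by linarith)
      · rw [hη, hnum2]
        apply div_ne_zero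
        · refine mul_ne_zero (by norm_num) (mul_ne_zero (mul_ne_zero hαne hβne) ?_)
          intro h
          apply hl2ne1
          linarith
        · rw [hden2]; exact ne_of_gt (by linarith)
    · -- c2 ≠ 0 : the rotation axis is v2; everything on the right holds
      left
      have hμ1 : μ = 1 := by
        have h : (μ - 1) * c2 = 0 := by linarith [heq2]
        rcases mul_eq_zero.mp h with h | h
        · linarith
        · exact absurd h hc2z
      have hc1z : c1 = 0 := by
        have h : (l1 - 1) * c1 = 0 := by rw [hμ1] at heq1; linarith
        rcases mul_eq_zero.mp h with h | h
        · linarith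
        · exact h
      have hc3z : c3 = 0 := by
        have h : (l3 - 1) * c3 = 0 := by rw [hμ1] at heq3; linarith
        rcases mul_eq_zero.mp h with h | h
        · linarith
        · exact h
      have he3v2 : e3 = c2 • v2 := by
        have hx := hexpand_v e3
        rw [← hc1def, ← hc2def, ← hc3def, hc1z, hc3z] at hx
        simpa using hx
      have hα0 : α = 0 := by
        have h := congrArg (fun w => e1 ⬝ᵥ w) he3v2
        simp only [dotProduct_smul, smul_eq_mul] at h
        rw [he13] at h
        rcases mul_eq_zero.mp h.symm with h' | h'
        · exact absurd h' hc2z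
        · exact h'
      have hβ0 : β = 0 := by
        have h := congrArg (fun w => e2 ⬝ᵥ w) he3v2
        simp only [dotProduct_smul, smul_eq_mul] at h
        rw [he23] at h
        rcases mul_eq_zero.mp h.symm with h' | h'
        · exact absurd h' hc2z
        · exact h'
      exact ⟨hα0, hβ0, hnp1, hnp3⟩
  -- final translations
  have hUe2v2 : (U.mulVec e2) ⬝ᵥ v2 = β := by
    rw [← CCaux.dot_mulVec_symm U hUsymm, hUv2]
  have hUe1v2 : (U.mulVec e1) ⬝ᵥ v2 = α := by
    rw [← CCaux.dot_mulVec_symm U hUsymm, hUv2]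
  have hkey1 : aC1 ⬝ᵥ v2 * (v2 ⬝ᵥ nC1) = (ξ * β) * α := by
    rw [ha1, hn1, smul_dotProduct, smul_eq_mul, hUe2v2, dotProduct_comm v2 e1]
  have hkey2 : aC2 ⬝ᵥ v2 * (v2 ⬝ᵥ nC2) = (η * α) * β := by
    rw [ha2, hn2, smul_dotProduct, smul_eq_mul, hUe1v2, dotProduct_comm v2 e2]
  rcases hdich with ⟨hA, hB, hC, hD⟩ | ⟨hA, hB, hX, hH⟩
  · constructor
    · constructor
      · rintro ⟨_, _, h3⟩; exact ⟨hA, hB, hC, hD, h3⟩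
      · rintro ⟨_, _, _, _, h3⟩
        exact ⟨hCC1, (hCC2iff _ _).mpr (by rw [hkey1, hA, mul_zero]), h3⟩
    · constructor
      · rintro ⟨_, _, h3⟩; exact ⟨hA, hB, hC, hD, h3⟩
      · rintro ⟨_, _, _, _, h3⟩
        exact ⟨hCC1, (hCC2iff _ _).mpr (by rw [hkey2, hB, mul_zero]), h3⟩
  · constructor
    · constructor
      · rintro ⟨_, h2, _⟩
        exact absurd ((hCC2iff _ _).mp h2)
          (by rw [hkey1]; exact mul_ne_zero (mul_ne_zero hX hB) hA)
      · rintro ⟨hA0, _, _, _, _⟩; exact absurd hA0 hA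
    · constructor
      · rintro ⟨_, h2, _⟩
        exact absurd ((hCC2iff _ _).mp h2)
          (by rw [hkey2]; exact mul_ne_zero (mul_ne_zero hH hA) hB)
      · rintro ⟨hA0, _, _, _, _⟩; exact absurd hA0 hA
end

section
/- Let S be a nonzero symmetric 3×3 real matrix with eigenvalues s₁ ≤ s₂ ≤ s₃. Then there exist nonzero vectors a, n ∈ ℝ³ with S = (1/2)(a ⊗ n + n ⊗ a) if and only if the middle eigenvalue s₂ equals zero. Moreover, if S = s₁ e₁⊗e₁ + s₃ e₃⊗e₃ with e₁, e₃ ∈ ℝ³ orthonormal and s₁ ≤ 0 ≤ s₃, then the vectors a = √(−s₁) e₁ + √(s₃) e₃ and n = −√(−s₁) e₁ + √(s₃) e₃ satisfy S = (1/2)(a ⊗ n + n ⊗ a). -/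
open Matrix Polynomial

private lemma pair_cases' {b c e f : ℝ} (h : ({b,c} : Multiset ℝ) = {e,f}) :
    (b = e ∧ c = f) ∨ (b = f ∧ c = e) := by
  have hb : b ∈ ({e,f} : Multiset ℝ) := by rw [← h]; simp
  simp only [Multiset.insert_eq_cons, Multiset.mem_cons, Multiset.mem_singleton] at hb
  rcases hb with hb | hb
  · subst hb
    left
    refine ⟨rfl, ?_⟩
    have := (Multiset.cons_inj_right b).mp h
    simpa using this
  · subst hb
    right
    refine ⟨rfl, ?_⟩
    rw [show ({e, b} : Multiset ℝ) = {b, e} from Multiset.cons_swap e b _] at h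
    have := (Multiset.cons_inj_right b).mp h
    simpa using this

private lemma triple_cases' {a b c d e f : ℝ} (h : ({a,b,c} : Multiset ℝ) = {d,e,f}) :
    (a = d ∧ ((b = e ∧ c = f) ∨ (b = f ∧ c = e))) ∨
    (a = e ∧ ((b = d ∧ c = f) ∨ (b = f ∧ c = d))) ∨
    (a = f ∧ ((b = d ∧ c = e) ∨ (b = e ∧ c = d))) := by
  have ha : a ∈ ({d,e,f} : Multiset ℝ) := by rw [← h]; simp
  simp only [Multiset.insert_eq_cons, Multiset.mem_cons, Multiset.mem_singleton] at ha
  rcases ha with ha | ha | ha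
  · subst ha
    exact Or.inl ⟨rfl, pair_cases' ((Multiset.cons_inj_right a).mp h)⟩
  · subst ha
    refine Or.inr (Or.inl ⟨rfl, pair_cases' ?_⟩)
    rw [show ({d, a, f} : Multiset ℝ) = a ::ₘ {d, f} from Multiset.cons_swap d a _] at h
    exact (Multiset.cons_inj_right a).mp h
  · subst ha
    refine Or.inr (Or.inr ⟨rfl, pair_cases' ?_⟩)
    rw [show ({d, e, a} : Multiset ℝ) = a ::ₘ {d, e} from ?_] at h
    · exact (Multiset.cons_inj_right a).mp h
    · show d ::ₘ e ::ₘ a ::ₘ 0 = a ::ₘ d ::ₘ e ::ₘ 0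
      rw [Multiset.cons_swap e a, Multiset.cons_swap d a]

private lemma keyid' (p q : Fin 3 → ℝ) (s1 s3 : ℝ) (h1 : s1 ≤ 0) (h3 : 0 ≤ s3) :
    s1 • Matrix.vecMulVec p p + s3 • Matrix.vecMulVec q q
    = (1/2:ℝ) • (Matrix.vecMulVec (Real.sqrt (-s1) • p + Real.sqrt s3 • q)
          (-(Real.sqrt (-s1)) • p + Real.sqrt s3 • q)
        + Matrix.vecMulVec (-(Real.sqrt (-s1)) • p + Real.sqrt s3 • q)
          (Real.sqrt (-s1) • p + Real.sqrt s3 • q)) := by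
  have hα : Real.sqrt (-s1) * Real.sqrt (-s1) = -s1 := Real.mul_self_sqrt (by linarith)
  have hβ : Real.sqrt s3 * Real.sqrt s3 = s3 := Real.mul_self_sqrt h3
  ext i j
  simp only [Matrix.add_apply, Matrix.smul_apply, Matrix.vecMulVec_apply, Pi.add_apply,
    Pi.smul_apply, Pi.neg_apply, smul_eq_mul, neg_mul]
  linear_combination (p i * p j) * hα - (q i * q j) * hβ

private lemma construct' (S : Matrix (Fin 3) (Fin 3) ℝ) (p q : Fin 3 → ℝ)
    (hp : p ⬝ᵥ p = 1) (hq : q ⬝ᵥ q = 1) (hpq : p ⬝ᵥ q = 0)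
    (s1 s3 : ℝ) (h1 : s1 ≤ 0) (h3 : 0 ≤ s3) (hS0 : S ≠ 0)
    (hS : S = s1 • Matrix.vecMulVec p p + s3 • Matrix.vecMulVec q q) :
    ∃ a n : Fin 3 → ℝ, a ≠ 0 ∧ n ≠ 0 ∧
      S = (1/2 : ℝ) • (Matrix.vecMulVec a n + Matrix.vecMulVec n a) := by
  have hns : ¬ (s1 = 0 ∧ s3 = 0) := by
    rintro ⟨rfl, rfl⟩
    simp at hS
    exact hS0 hS
  have hpos : 0 < -s1 + s3 := by
    rcases lt_or_eq_of_le h1 with h | h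
    · linarith
    rcases lt_or_eq_of_le h3 with h' | h'
    · linarith
    exact absurd ⟨h, h'.symm⟩ hns
  have hqp : q ⬝ᵥ p = 0 := by rwa [dotProduct_comm]
  set α := Real.sqrt (-s1)
  set β := Real.sqrt s3
  have hα : α * α = -s1 := Real.mul_self_sqrt (by linarith)
  have hβ : β * β = s3 := Real.mul_self_sqrt h3
  have hd : ∀ (c d : ℝ), (c • p + d • q) ⬝ᵥ (c • p + d • q) = c^2 + d^2 := by
    intro c d
    simp [dotProduct_add, add_dotProduct, smul_dotProduct, dotProduct_smul, hp, hq, hpq, hqp]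
    ring
  have hnz : ∀ (c d : ℝ), c^2 + d^2 = -s1 + s3 → (c • p + d • q) ≠ 0 := by
    intro c d hcd h0
    have := hd c d
    rw [h0] at this
    simp [dotProduct] at this
    rw [hcd] at this
    linarith
  refine ⟨α • p + β • q, (-α) • p + β • q, hnz α β (by rw [← hα, ← hβ]; ring), ?_, ?_⟩
  · exact hnz (-α) β (by rw [← hα, ← hβ]; ring)
  · rw [hS, keyid' p q s1 s3 h1 h3]

private lemma charpoly_conj' (U D : Matrix (Fin 3) (Fin 3) ℝ) (h1 : U * star U = 1) :
    (U * D * star U).charpoly = D.charpoly := by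
  have hmap : ∀ A B : Matrix (Fin 3) (Fin 3) ℝ,
      (A * B).map (C : ℝ →+* ℝ[X]) = A.map C * B.map C := by
    intro A B; exact Matrix.map_mul
  have hone : (U.map (C : ℝ →+* ℝ[X])) * ((star U).map C) = 1 := by
    rw [← hmap, h1]; simp
  have hsc : (U.map (C : ℝ →+* ℝ[X])) * (Matrix.scalar (Fin 3) (X : ℝ[X])) * ((star U).map C)
      = Matrix.scalar (Fin 3) (X : ℝ[X]) := by
    have := (Matrix.scalar_commute (n := Fin 3) (X : ℝ[X]) (fun r => Commute.all _ _)
      (U.map C)).symm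
    rw [this, mul_assoc, hone, mul_one]
  have key : charmatrix (U * D * star U) = (U.map C) * charmatrix D * ((star U).map C) := by
    have hm : (C : ℝ →+* ℝ[X]).mapMatrix (U * D * star U)
        = (U.map C) * ((C : ℝ →+* ℝ[X]).mapMatrix D) * ((star U).map C) := by
      simp only [RingHom.mapMatrix_apply, hmap]
    rw [charmatrix, charmatrix, mul_sub, sub_mul, hsc, hm]
  have hdet : ((U.map (C : ℝ →+* ℝ[X])).det) * (((star U).map (C : ℝ →+* ℝ[X])).det) = 1 := by
    rw [← det_mul, hone, det_one]
  rw [Matrix.charpoly, Matrix.charpoly, key, det_mul, det_mul]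
  calc (U.map (C:ℝ →+* ℝ[X])).det * (charmatrix D).det * ((star U).map (C:ℝ →+* ℝ[X])).det
      = (charmatrix D).det * ((U.map (C:ℝ →+* ℝ[X])).det * ((star U).map (C:ℝ →+* ℝ[X])).det) := by
        ring
    _ = (charmatrix D).det := by rw [hdet, mul_one]

set_option maxHeartbeats 1600000 in
theorem stmt_11 (S : Matrix (Fin 3) (Fin 3) ℝ) (hSsymm : S.IsSymm) (hS0 : S ≠ 0)
    (s1 s2 s3 : ℝ) (h12 : s1 ≤ s2) (h23 : s2 ≤ s3)
    (hchar : S.charpoly = (X - C s1) * (X - C s2) * (X - C s3)) :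
    ((∃ a n : Fin 3 → ℝ, a ≠ 0 ∧ n ≠ 0 ∧
        S = (1/2 : ℝ) • (Matrix.vecMulVec a n + Matrix.vecMulVec n a)) ↔ s2 = 0) ∧
    (∀ e1 e3 : Fin 3 → ℝ, e1 ⬝ᵥ e1 = 1 → e3 ⬝ᵥ e3 = 1 → e1 ⬝ᵥ e3 = 0 →
      s1 ≤ 0 → 0 ≤ s3 →
      S = s1 • Matrix.vecMulVec e1 e1 + s3 • Matrix.vecMulVec e3 e3 →
      S = (1/2 : ℝ) •
        (Matrix.vecMulVec (Real.sqrt (-s1) • e1 + Real.sqrt s3 • e3)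
            (-(Real.sqrt (-s1)) • e1 + Real.sqrt s3 • e3)
         + Matrix.vecMulVec (-(Real.sqrt (-s1)) • e1 + Real.sqrt s3 • e3)
            (Real.sqrt (-s1) • e1 + Real.sqrt s3 • e3))) := by
  have hA : S.IsHermitian := by
    rwa [Matrix.IsHermitian, conjTranspose_eq_transpose_of_trivial]
  set U : Matrix (Fin 3) (Fin 3) ℝ := (hA.eigenvectorUnitary : Matrix (Fin 3) (Fin 3) ℝ) with hU
  set D : Matrix (Fin 3) (Fin 3) ℝ := Matrix.diagonal (RCLike.ofReal ∘ hA.eigenvalues) with hD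
  set μ : Fin 3 → ℝ := hA.eigenvalues with hμ
  set v : Fin 3 → Fin 3 → ℝ := fun k i => U i k with hv
  have hUU : star U * U = 1 := Unitary.coe_star_mul_self _
  have hUU' : U * star U = 1 := Unitary.coe_mul_star_self _
  have hspec : S = U * D * star U := hA.spectral_theorem
  have horth : ∀ k l, v k ⬝ᵥ v l = if k = l then 1 else 0 := by
    intro k l
    have := congrFun (congrFun hUU k) l
    simpa [Matrix.mul_apply, Matrix.one_apply, dotProduct, hv, mul_comm] using this
  have hdecomp : S = ∑ k, μ k • Matrix.vecMulVec (v k) (v k) := by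
    ext i j
    rw [hspec]
    simp [hD, Matrix.mul_apply, Matrix.diagonal, Matrix.sum_apply, Matrix.vecMulVec_apply,
      Finset.sum_ite_eq, hv, hU, Matrix.IsHermitian.eigenvectorUnitary_apply, hμ, mul_comm]
    exact Finset.sum_congr rfl fun k _ => by ring
  -- the multiset of eigenvalues equals {s1, s2, s3}
  have hDchar : D.charpoly = ∏ i, (X - C (μ i)) := by
    rw [hD]
    rw [Matrix.charpoly_of_upperTriangular _ (Matrix.blockTriangular_diagonal _)]
    simp [hμ]
  have hcharμ : ∏ i, (X - C (μ i)) = (X - C s1) * (X - C s2) * (X - C s3) := by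
    rw [← hDchar, ← charpoly_conj' U D hUU', ← hspec, hchar]
  have hmult : ({μ 0, μ 1, μ 2} : Multiset ℝ) = {s1, s2, s3} := by
    have h1 : (Multiset.map (fun a => X - C a) ({μ 0, μ 1, μ 2} : Multiset ℝ)).prod
        = (Multiset.map (fun a => X - C a) ({s1, s2, s3} : Multiset ℝ)).prod := by
      simpa [Fin.prod_univ_three, mul_assoc] using hcharμ
    have := congrArg Polynomial.roots h1
    rwa [roots_multiset_prod_X_sub_C, roots_multiset_prod_X_sub_C] at this
  constructor
  · constructor
    · rintro ⟨a, n, ha, hn, hS⟩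
      -- trace / trace-square / det computed two ways
      have htr : ∀ M : Matrix (Fin 3) (Fin 3) ℝ, (U * M * star U).trace = M.trace := by
        intro M
        rw [Matrix.trace_mul_cycle, hUU, one_mul]
      have h1 : star U * (U * (D * star U)) = D * star U := by rw [← mul_assoc, hUU, one_mul]
      have htrace1 : S.trace = μ 0 + μ 1 + μ 2 := by
        calc S.trace = (U * D * star U).trace := by rw [← hspec]
          _ = D.trace := htr D
          _ = μ 0 + μ 1 + μ 2 := by
              rw [hD]; simp [Matrix.trace_diagonal, Fin.sum_univ_three, hμ]
      have htrace2 : (S*S).trace = (μ 0)^2 + (μ 1)^2 + (μ 2)^2 := by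
        calc (S*S).trace = (U * D * star U * (U * D * star U)).trace := by rw [← hspec]
          _ = (U * (D * D) * star U).trace := by simp only [mul_assoc]; rw [h1]
          _ = (D * D).trace := htr (D * D)
          _ = (μ 0)^2 + (μ 1)^2 + (μ 2)^2 := by
              rw [hD, diagonal_mul_diagonal]
              simp [Matrix.trace_diagonal, pow_two, Fin.sum_univ_three, hμ]
      have hdet : S.det = μ 0 * μ 1 * μ 2 := by
        calc S.det = (U * D * star U).det := by rw [← hspec]
          _ = D.det * ((star U) * U).det := by rw [det_mul, det_mul, det_mul]; ring
          _ = μ 0 * μ 1 * μ 2 := by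
              rw [hUU, det_one, mul_one, hD]
              simp [det_diagonal, Fin.prod_univ_three, hμ]
      -- multiset consequences
      have hsum : μ 0 + μ 1 + μ 2 = s1 + s2 + s3 := by
        have := congrArg Multiset.sum hmult
        simp at this
        linarith
      have hsq : (μ 0)^2 + (μ 1)^2 + (μ 2)^2 = s1^2 + s2^2 + s3^2 := by
        have := congrArg (fun m : Multiset ℝ => (m.map (fun x => x^2)).sum) hmult
        simp at this
        linarith
      have hprod : μ 0 * μ 1 * μ 2 = s1 * s2 * s3 := by
        have := congrArg Multiset.prod hmult
        simpa [mul_assoc] using this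
      -- explicit computations from the rank-one representation
      have e1 : S.trace = a ⬝ᵥ n := by
        rw [hS]
        simp [Matrix.trace, Matrix.diag, vecMulVec_apply, dotProduct, Fin.sum_univ_three]
        ring
      have e2 : (S*S).trace = ((a ⬝ᵥ n)^2 + (a ⬝ᵥ a)*(n ⬝ᵥ n))/2 := by
        rw [hS]
        simp [Matrix.trace, Matrix.diag, Matrix.mul_apply, vecMulVec_apply, dotProduct,
          Fin.sum_univ_three]
        ring
      have e3 : S.det = 0 := by
        rw [hS, det_fin_three]
        simp [vecMulVec_apply]
        ring
      have hCS : (a ⬝ᵥ n)^2 ≤ (a ⬝ᵥ a) * (n ⬝ᵥ n) := by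
        simp only [dotProduct]
        calc (∑ i, a i * n i)^2 ≤ (∑ i, (a i)^2) * (∑ i, (n i)^2) :=
              Finset.sum_mul_sq_le_sq_mul_sq _ _ _
          _ = (∑ i, a i * a i) * (∑ i, n i * n i) := by simp [pow_two]
      -- now conclude s2 = 0
      have hT : s1 + s2 + s3 = a ⬝ᵥ n := by rw [← hsum, ← htrace1, e1]
      have hQ : s1^2 + s2^2 + s3^2 = ((a ⬝ᵥ n)^2 + (a ⬝ᵥ a)*(n ⬝ᵥ n))/2 := by
        rw [← hsq, ← htrace2, e2]
      have hP : s1 * s2 * s3 = 0 := by rw [← hprod, ← hdet, e3]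
      have hT2 : (a ⬝ᵥ n)^2 = (s1 + s2 + s3)^2 := by rw [← hT]
      have he2 : s1*s2 + s1*s3 + s2*s3 ≤ 0 := by nlinarith [hCS, hQ, hT2]
      by_contra hne
      rcases lt_or_gt_of_ne hne with h | h
      · -- s2 < 0 : then s1 ≤ s2 < 0
        have hs12 : 0 < s1 * s2 := mul_pos_of_neg_of_neg (by linarith) h
        rcases lt_trichotomy s3 0 with h3 | h3 | h3
        · have := mul_neg_of_pos_of_neg hs12 h3
          linarith
        · rw [h3] at he2
          simp at he2
          nlinarith
        · have := mul_pos hs12 h3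
          linarith
      · have hs23 : 0 < s2 * s3 := mul_pos h (by linarith)
        rcases lt_trichotomy s1 0 with h1' | h1' | h1'
        · have h5 := mul_neg_of_neg_of_pos h1' hs23
          rw [← mul_assoc] at h5
          linarith
        · rw [h1'] at he2
          simp at he2
          nlinarith
        · have h5 := mul_pos h1' hs23
          rw [← mul_assoc] at h5
          linarith
    · intro hs2
      have hs1 : s1 ≤ 0 := by linarith
      have hs3 : 0 ≤ s3 := by linarith
      have horth' : ∀ k l : Fin 3, k ≠ l → v k ⬝ᵥ v l = 0 := by
        intro k l hkl; rw [horth]; simp [hkl]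
      have hone : ∀ k : Fin 3, v k ⬝ᵥ v k = 1 := by
        intro k; rw [horth]; simp
      have hdec3 : S = μ 0 • Matrix.vecMulVec (v 0) (v 0) + μ 1 • Matrix.vecMulVec (v 1) (v 1)
          + μ 2 • Matrix.vecMulVec (v 2) (v 2) := by
        rw [hdecomp, Fin.sum_univ_three]
      subst hs2
      rcases triple_cases' hmult with ⟨ha0, ⟨ha1, ha2⟩ | ⟨ha1, ha2⟩⟩ |
        ⟨ha0, ⟨ha1, ha2⟩ | ⟨ha1, ha2⟩⟩ | ⟨ha0, ⟨ha1, ha2⟩ | ⟨ha1, ha2⟩⟩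
      · exact construct' S (v 0) (v 2) (hone 0) (hone 2) (horth' 0 2 (by decide)) s1 s3 hs1 hs3
          hS0 (by rw [hdec3, ha0, ha1, ha2, zero_smul, add_zero])
      · exact construct' S (v 0) (v 1) (hone 0) (hone 1) (horth' 0 1 (by decide)) s1 s3 hs1 hs3
          hS0 (by rw [hdec3, ha0, ha1, ha2, zero_smul, add_zero])
      · exact construct' S (v 1) (v 2) (hone 1) (hone 2) (horth' 1 2 (by decide)) s1 s3 hs1 hs3
          hS0 (by rw [hdec3, ha0, ha1, ha2, zero_smul, zero_add])
      · exact construct' S (v 2) (v 1) (hone 2) (hone 1) (horth' 2 1 (by decide)) s1 s3 hs1 hs3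
          hS0 (by rw [hdec3, ha0, ha1, ha2, zero_smul, zero_add, add_comm])
      · exact construct' S (v 1) (v 0) (hone 1) (hone 0) (horth' 1 0 (by decide)) s1 s3 hs1 hs3
          hS0 (by rw [hdec3, ha0, ha1, ha2, zero_smul, add_zero, add_comm])
      · exact construct' S (v 2) (v 0) (hone 2) (hone 0) (horth' 2 0 (by decide)) s1 s3 hs1 hs3
          hS0 (by rw [hdec3, ha0, ha1, ha2, zero_smul, add_zero, add_comm])
  · intro e1 e3 he1 he3 he13 hs1 hs3 hS
    rw [hS, keyid' e1 e3 s1 s3 hs1 hs3]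
end

section
/- Let E be a symmetric 3×3 real matrix, ê ∈ ℝ³ a unit vector, Q = −I + 2 ê⊗ê, and Ê = Q E Q. Define a = 4 ((ê · E ê) ê − E ê) and n = ê. Then Ê − E = (1/2)(a ⊗ n + n ⊗ a). Consequently, the skew-symmetric matrix Ŵ = (1/2)(a ⊗ n − n ⊗ a) satisfies Ê + Ŵ − E = a ⊗ n. -/
open Matrix

theorem stmt_12 (E : Matrix (Fin 3) (Fin 3) ℝ) (hE : E.IsSymm)
    (ehat : Fin 3 → ℝ) (he : ehat ⬝ᵥ ehat = 1)
    (Q Ehat : Matrix (Fin 3) (Fin 3) ℝ)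
    (hQ : Q = -1 + (2 : ℝ) • Matrix.vecMulVec ehat ehat)
    (hEhat : Ehat = Q * E * Q)
    (a n : Fin 3 → ℝ)
    (ha : a = (4 : ℝ) • ((ehat ⬝ᵥ E.mulVec ehat) • ehat - E.mulVec ehat))
    (hn : n = ehat) :
    Ehat - E = (1/2 : ℝ) • (Matrix.vecMulVec a n + Matrix.vecMulVec n a) ∧
    Ehat + (1/2 : ℝ) • (Matrix.vecMulVec a n - Matrix.vecMulVec n a) - E
      = Matrix.vecMulVec a n := by
  have hs := hE.apply
  have h1 : Ehat - E = (1/2 : ℝ) • (Matrix.vecMulVec a n + Matrix.vecMulVec n a) := by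
    rw [hEhat, hQ, ha, hn]
    ext i j
    fin_cases i <;> fin_cases j <;>
      simp [Matrix.mul_apply, Matrix.vecMulVec_apply, Matrix.mulVec, dotProduct,
        Fin.sum_univ_three, Matrix.one_apply] <;>
      simp only [hs 0 1, hs 0 2, hs 1 2] <;> ring
  have h2 : Ehat + (1/2 : ℝ) • (Matrix.vecMulVec a n - Matrix.vecMulVec n a) - E
      = Matrix.vecMulVec a n := by
    have : Ehat - E = (1/2 : ℝ) • (Matrix.vecMulVec a n + Matrix.vecMulVec n a) := h1
    ext i j
    have := congrFun (congrFun h1 i) j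
    simp [Matrix.vecMulVec_apply, Matrix.sub_apply, Matrix.add_apply, Matrix.smul_apply] at this ⊢
    linarith
  exact ⟨h1, h2⟩
end
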